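/- arXiv:2301.00317 — 3 statements merged into one kernel-verified Lean document; each statement's English description precedes it below -/
import Mathlib

section
/- For every k ≥ 2 and every n with n ≤ 2k, there exists a graph G such that TS_k(G) is a tree containing the star K_{1,n} as an induced subgraph. -/
open SimpleGraph

/-- `I` is a size-`k` independent set of `G`: a vertex of the token sliding graph. -/
def TSVert {W : Type*} (G : SimpleGraph W) (k : ℕ) (I : Finset W) : Prop :=
  I.card = k ∧ ∀ u ∈ I, ∀ v ∈ I, ¬ G.Adj u v

/-- The token sliding graph `TS_k(G)`: vertices are size-`k` independent sets of `G`,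
two sets adjacent iff they differ by sliding one token along an edge of `G`. -/
def TS {W : Type*} (G : SimpleGraph W) (k : ℕ) :
    SimpleGraph {I : Finset W // TSVert G k I} :=
  SimpleGraph.fromRel fun I J =>
    ∃ u v, ((I : Finset W) : Set W) \ ((J : Finset W) : Set W) = {u} ∧
      ((J : Finset W) : Set W) \ ((I : Finset W) : Set W) = {v} ∧ G.Adj u v

/-- `2K₂`: two disjoint edges, `0-1` and `2-3`. -/
def twoK2 : SimpleGraph (Fin 4) :=
  SimpleGraph.fromRel fun a b => (a = 0 ∧ b = 1) ∨ (a = 2 ∧ b = 3)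

/-- Disjoint union of two simple graphs. -/
def disjUnion' {α β : Type*} (G : SimpleGraph α) (H : SimpleGraph β) :
    SimpleGraph (α ⊕ β) :=
  SimpleGraph.fromRel fun a b =>
    (∃ x y, a = Sum.inl x ∧ b = Sum.inl y ∧ G.Adj x y) ∨
    (∃ x y, a = Sum.inr x ∧ b = Sum.inr y ∧ H.Adj x y)

/-- `nK₁`: `n` isolated vertices. -/
def nK1 (n : ℕ) : SimpleGraph (Fin n) := ⊥

/-- `D r n s`: the tree obtained from the path on `n` vertices by appending `r` leaves
at one endpoint and `s` leaves at the other endpoint. -/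
def D (r n s : ℕ) : SimpleGraph (Fin r ⊕ Fin n ⊕ Fin s) :=
  SimpleGraph.fromRel fun a b =>
    (∃ i j : Fin n, a = Sum.inr (Sum.inl i) ∧ b = Sum.inr (Sum.inl j) ∧ (j : ℕ) = (i : ℕ) + 1) ∨
    (∃ (u : Fin r) (i : Fin n), a = Sum.inl u ∧ b = Sum.inr (Sum.inl i) ∧ (i : ℕ) = 0) ∨
    (∃ (v : Fin s) (i : Fin n), a = Sum.inr (Sum.inr v) ∧ b = Sum.inr (Sum.inl i) ∧ (i : ℕ) = n - 1)

/-- The star `K_{1,s}`: center `0` with `s` leaves. -/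
def star' (s : ℕ) : SimpleGraph (Fin (s + 1)) :=
  SimpleGraph.fromRel fun a _ => a = 0

/-- `G` contains a cycle of length `n`. -/
def HasCycleLen {α : Type*} (G : SimpleGraph α) (n : ℕ) : Prop :=
  ∃ (v : α) (w : G.Walk v v), w.IsCycle ∧ w.length = n

/-- `G` contains a cycle. -/
def HasCycle {α : Type*} (G : SimpleGraph α) : Prop :=
  ∃ (v : α) (w : G.Walk v v), w.IsCycle


/-- A graph with a rank function where no edge preserves rank, every vertex has at most
one lower-rank neighbor, every positive-rank vertex has a lower neighbor, and rank-0
vertices are unique, is a tree. -/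
theorem isTree_of_rank {V : Type*} (G : SimpleGraph V) (f : V → ℕ) (r : V)
    (h0 : ∀ v, f v = 0 → v = r)
    (hE : ∀ ⦃a b⦄, G.Adj a b → f a ≠ f b)
    (hU : ∀ ⦃a b c⦄, G.Adj a b → G.Adj a c → f b < f a → f c < f a → b = c)
    (hL : ∀ a, 0 < f a → ∃ b, G.Adj a b ∧ f b < f a) :
    G.IsTree := by
  classical
  have hreach : ∀ N v, f v ≤ N → G.Reachable v r := by
    intro N
    induction N with
    | zero => intro v hv; rw [h0 v (Nat.le_zero.mp hv)]
    | succ N ih =>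
      intro v hv
      rcases Nat.eq_zero_or_pos (f v) with h | h
      · rw [h0 v h]
      · obtain ⟨b, hab, hb⟩ := hL v h
        exact (hab.reachable).trans (ih b (by omega))
  haveI : Nonempty V := ⟨r⟩
  refine ⟨Connected.mk (fun u v => (hreach (f u) u le_rfl).trans (hreach (f v) v le_rfl).symm), ?_⟩
  · intro v c hc
    -- pick a max-rank vertex on the tail of the support
    have hlen := hc.three_le_length
    have htlen : c.support.tail.length = c.length := by
      rw [List.length_tail, Walk.length_support]; omega
    have htne : c.support.tail ≠ [] := by
      intro h; rw [h] at htlen; simp at htlen; omega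
    obtain ⟨u, hu, hmax⟩ := (c.support.tail.toFinset).exists_max_image f
      (by simpa [List.toFinset_nonempty_iff] using htne)
    rw [List.mem_toFinset] at hu
    have humem : u ∈ c.support := List.mem_of_mem_tail hu
    have hmax' : ∀ x ∈ c.support.tail, f x ≤ f u := by
      intro x hx; exact hmax x (List.mem_toFinset.mpr hx)
    set c' := c.rotate u humem with hc'
    have hc'cyc : c'.IsCycle := hc.rotate humem
    have hrot : c'.support.tail ~r c.support.tail := Walk.support_rotate c u humem
    have hmem' : ∀ x ∈ c'.support.tail, f x ≤ f u := by
      intro x hx; exact hmax' x (hrot.mem_iff.mp hx)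
    have hlen3 : 3 ≤ c'.length := hc'cyc.three_le_length
    -- decompose c' = cons h p
    cases hp : c' with
    | nil => rw [hp] at hlen3; simp at hlen3
    | @cons _ a _ hadj p =>
      -- penultimate vertex: decompose p.reverse
      cases hq : p.reverse with
      | nil =>
        have hp0 : p.length = 0 := by
          have := congrArg Walk.length hq; simpa using this
        rw [hp] at hlen3; simp [hp0] at hlen3
      | @cons _ b _ hadj2 q =>
        -- hadj2 : G.Adj u b
        have hbu : G.Adj b u := hadj2.symm
        have hedge : s(u, b) ∈ p.edges := by
          have : s(u, b) ∈ p.reverse.edges := by rw [hq]; simp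
          rwa [Walk.edges_reverse, List.mem_reverse] at this
        have hab : a ≠ b := by
          intro h
          subst h
          have htrail := hc'cyc.isTrail
          rw [hp] at htrail
          have hnd := htrail.edges_nodup
          rw [Walk.edges_cons, List.nodup_cons] at hnd
          exact hnd.1 hedge
        have hbp : b ∈ p.support := by
          have : b ∈ p.reverse.support := by
            rw [hq]; simp [Walk.support_cons]
          rwa [Walk.support_reverse, List.mem_reverse] at this
        have htailp : c'.support.tail = p.support := by
          rw [hp, Walk.support_cons]; rfl
        have hasupp : a ∈ c'.support.tail := by
          rw [htailp]; exact p.start_mem_support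
        have hbsupp : b ∈ c'.support.tail := by
          rw [htailp]; exact hbp
        have hfa : f a < f u := by
          have := hmem' a hasupp
          have := hE hadj
          omega
        have hfb : f b < f u := by
          have := hmem' b hbsupp
          have := hE hbu
          omega
        exact hab (hU hadj hbu.symm hfa hfb)

namespace Stmt16

/-- The vertex type of the auxiliary graph: `k` clique vertices, `2d+e` target
vertices, and `d*(k-1)` pendant vertices. -/
abbrev Vt (k d e : ℕ) := Fin k ⊕ (Fin (2*d+e) ⊕ (Fin d × Fin (k-1)))

variable {k d e : ℕ}

def cV (a : Fin k) : Vt k d e := Sum.inl a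
def tV (j : Fin (2*d+e)) : Vt k d e := Sum.inr (Sum.inl j)
def pV (i : Fin d) (j : Fin (k-1)) : Vt k d e := Sum.inr (Sum.inr (i, j))

/-- position of target `j` : `j` if `j < d` else `j - d`. -/
def posN (d : ℕ) (j : ℕ) : ℕ := if j < d then j else j - d

/-- the second excluded clique slot of pendant `(i,j)`. -/
def hatN (i j : ℕ) : ℕ := if j < i then j else j + 1

/-- The complement relation: `x` and `y` can coexist in an independent set. -/
def hrel : Vt k d e → Vt k d e → Prop
  | .inl _, .inl _ => True
  | .inl a, .inr (.inl j) => (a:ℕ) ≠ posN d j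
  | .inr (.inl j), .inl a => (a:ℕ) ≠ posN d j
  | .inr (.inl j), .inr (.inl j') => posN d j = posN d j'
  | .inl a, .inr (.inr p) => (a:ℕ) ≠ (p.1:ℕ) ∧ (a:ℕ) ≠ hatN p.1 p.2
  | .inr (.inr p), .inl a => (a:ℕ) ≠ (p.1:ℕ) ∧ (a:ℕ) ≠ hatN p.1 p.2
  | .inr (.inl j), .inr (.inr p) => (j:ℕ) = d + p.1
  | .inr (.inr p), .inr (.inl j) => (j:ℕ) = d + p.1
  | .inr (.inr _), .inr (.inr _) => False

lemma hrel_symm : ∀ x y : Vt k d e, hrel x y → hrel y x := by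
  rintro (a | j | p) (b | j' | p') h <;> simp_all [hrel]

/-- The auxiliary graph. -/
def Gr (k d e : ℕ) : SimpleGraph (Vt k d e) :=
  SimpleGraph.fromRel (fun x y => ¬ hrel x y)

lemma gr_adj {x y : Vt k d e} : (Gr k d e).Adj x y ↔ x ≠ y ∧ ¬ hrel x y := by
  constructor
  · rintro ⟨hne, h | h⟩
    · exact ⟨hne, h⟩
    · exact ⟨hne, fun h' => h (hrel_symm _ _ h')⟩
  · rintro ⟨hne, h⟩; exact ⟨hne, Or.inl h⟩

lemma not_gr_adj {x y : Vt k d e} : ¬ (Gr k d e).Adj x y ↔ (x = y ∨ hrel x y) := by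
  rw [gr_adj]; tauto

-- Fin-valued helpers
def priF (p : Fin d) : Fin (2*d+e) := ⟨p, by omega⟩
def secF (i : Fin d) : Fin (2*d+e) := ⟨d + i, by omega⟩

def castF (hde : d + e ≤ k) (i : Fin d) : Fin k := ⟨i, by omega⟩
def posF (hde : d + e ≤ k) (j : Fin (2*d+e)) : Fin k :=
  ⟨posN d j, by unfold posN; split <;> omega⟩
def hatF (hk : 2 ≤ k) (i : Fin d) (j : Fin (k-1)) : Fin k :=
  ⟨hatN i j, by unfold hatN; split <;> omega⟩

def Cs (k d e : ℕ) : Finset (Vt k d e) := Finset.univ.image cV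

def leafS (hde : d + e ≤ k) (j : Fin (2*d+e)) : Finset (Vt k d e) :=
  insert (tV j) ((Cs k d e).erase (cV (posF hde j)))

def pendS (hk : 2 ≤ k) (hde : d + e ≤ k) (i : Fin d) (j : Fin (k-1)) : Finset (Vt k d e) :=
  insert (tV (secF i)) (insert (pV i j)
    (((Cs k d e).erase (cV (castF hde i))).erase (cV (hatF hk i j))))

def sS (hde : d + e ≤ k) (p : Fin d) (q : Fin k) : Finset (Vt k d e) :=
  insert (tV (priF p)) (insert (tV (secF p))
    (((Cs k d e).erase (cV (castF hde p))).erase (cV q)))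

end Stmt16

namespace Stmt16

variable {k d e : ℕ}

lemma cV_inj {a b : Fin k} : (cV a : Vt k d e) = cV b ↔ a = b := by simp [cV]

@[simp] lemma mem_Cs {x : Vt k d e} : x ∈ Cs k d e ↔ ∃ a, x = cV a := by
  simp [Cs, eq_comm]

lemma card_Cs : (Cs k d e).card = k := by
  rw [Cs, Finset.card_image_of_injective _ (fun a b h => by simpa [cV] using h)]
  simp

lemma mem_leafS {hde : d + e ≤ k} {j : Fin (2*d+e)} {x : Vt k d e} :
    x ∈ leafS hde j ↔ x = tV j ∨ ∃ a, a ≠ posF hde j ∧ x = cV a := by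
  simp only [leafS, Finset.mem_insert, Finset.mem_erase, mem_Cs]
  constructor
  · rintro (h | ⟨hne, a, rfl⟩)
    · exact Or.inl h
    · exact Or.inr ⟨a, fun h => hne (by rw [h]), rfl⟩
  · rintro (h | ⟨a, hne, rfl⟩)
    · exact Or.inl h
    · exact Or.inr ⟨by simpa [cV_inj] using hne, a, rfl⟩

lemma mem_pendS {hk : 2 ≤ k} {hde : d + e ≤ k} {i : Fin d} {j : Fin (k-1)} {x : Vt k d e} :
    x ∈ pendS hk hde i j ↔ x = tV (secF i) ∨ x = pV i j ∨
      ∃ a, a ≠ castF hde i ∧ a ≠ hatF hk i j ∧ x = cV a := by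
  simp only [pendS, Finset.mem_insert, Finset.mem_erase, mem_Cs]
  constructor
  · rintro (h | h | ⟨hne1, hne2, a, rfl⟩)
    · exact Or.inl h
    · exact Or.inr (Or.inl h)
    · exact Or.inr (Or.inr ⟨a, fun h => hne2 (by rw [h]), fun h => hne1 (by rw [h]), rfl⟩)
  · rintro (h | h | ⟨a, hne1, hne2, rfl⟩)
    · exact Or.inl h
    · exact Or.inr (Or.inl h)
    · exact Or.inr (Or.inr ⟨by simpa [cV_inj] using hne2, by simpa [cV_inj] using hne1,
        a, rfl⟩)

lemma mem_sS {hde : d + e ≤ k} {p : Fin d} {q : Fin k} {x : Vt k d e} :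
    x ∈ sS hde p q ↔ x = tV (priF p) ∨ x = tV (secF p) ∨
      ∃ a, a ≠ castF hde p ∧ a ≠ q ∧ x = cV a := by
  simp only [sS, Finset.mem_insert, Finset.mem_erase, mem_Cs]
  constructor
  · rintro (h | h | ⟨hne1, hne2, a, rfl⟩)
    · exact Or.inl h
    · exact Or.inr (Or.inl h)
    · exact Or.inr (Or.inr ⟨a, fun h => hne2 (by rw [h]), fun h => hne1 (by rw [h]), rfl⟩)
  · rintro (h | h | ⟨a, hne1, hne2, rfl⟩)
    · exact Or.inl h
    · exact Or.inr (Or.inl h)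
    · exact Or.inr (Or.inr ⟨by simpa [cV_inj] using hne2, by simpa [cV_inj] using hne1,
        a, rfl⟩)

@[simp] lemma val_castF {hde : d + e ≤ k} {i : Fin d} : ((castF hde i : Fin k) : ℕ) = i := rfl
@[simp] lemma val_posF {hde : d + e ≤ k} {j : Fin (2*d+e)} : ((posF hde j : Fin k) : ℕ) = posN d j := rfl
@[simp] lemma val_hatF {hk : 2 ≤ k} {i : Fin d} {j : Fin (k-1)} : ((hatF hk i j : Fin k) : ℕ) = hatN i j := rfl
@[simp] lemma val_priF {p : Fin d} : ((priF p : Fin (2*d+e)) : ℕ) = p := rfl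
@[simp] lemma val_secF {i : Fin d} : ((secF i : Fin (2*d+e)) : ℕ) = d + i := rfl

lemma hatN_ne (i : Fin d) (j : Fin (k-1)) : hatN (i:ℕ) (j:ℕ) ≠ (i:ℕ) := by
  unfold hatN; split <;> omega

lemma hatF_ne_castF {hk : 2 ≤ k} {hde : d + e ≤ k} {i : Fin d} {j : Fin (k-1)} :
    hatF hk i j ≠ castF hde i :=
  Fin.ne_of_val_ne (by simpa using hatN_ne i j)

lemma card_leafS (hk : 2 ≤ k) {hde : d + e ≤ k} {j : Fin (2*d+e)} :
    (leafS hde j).card = k := by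
  rw [leafS, Finset.card_insert_of_notMem (by simp [tV, cV]),
    Finset.card_erase_of_mem (by simp), card_Cs]
  omega

lemma card_pendS {hk : 2 ≤ k} {hde : d + e ≤ k} {i : Fin d} {j : Fin (k-1)} :
    (pendS hk hde i j).card = k := by
  have hmem : cV (hatF hk i j) ∈ (Cs k d e).erase (cV (castF hde i)) := by
    simp only [Finset.mem_erase, mem_Cs]
    exact ⟨by simpa [cV_inj] using (hatF_ne_castF (hk := hk) (hde := hde)), _, rfl⟩
  rw [pendS, Finset.card_insert_of_notMem (by simp [tV, cV, pV]),
    Finset.card_insert_of_notMem (by simp [pV, cV]),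
    Finset.card_erase_of_mem hmem,
    Finset.card_erase_of_mem (by simp), card_Cs]
  omega

lemma priF_ne_secF {p i : Fin d} : (priF p : Fin (2*d+e)) ≠ secF i :=
  Fin.ne_of_val_ne (by simp; omega)

lemma card_sS {hde : d + e ≤ k} {p : Fin d} {q : Fin k} (hq : q ≠ castF hde p) (hk : 2 ≤ k) :
    (sS hde p q).card = k := by
  have hmem : cV q ∈ (Cs k d e).erase (cV (castF hde p)) := by
    simp only [Finset.mem_erase, mem_Cs]
    exact ⟨by simpa [cV_inj] using hq, _, rfl⟩
  rw [sS, Finset.card_insert_of_notMem (by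
      simp only [Finset.mem_insert, Finset.mem_erase, mem_Cs]
      push_neg
      refine ⟨by simpa [tV] using (priF_ne_secF (p := p) (i := p)), fun _ _ => by simp [tV, cV]⟩),
    Finset.card_insert_of_notMem (by simp [tV, cV]),
    Finset.card_erase_of_mem hmem,
    Finset.card_erase_of_mem (by simp), card_Cs]
  omega

end Stmt16

namespace Stmt16

variable {k d e : ℕ}

@[simp] lemma hrel_cc {a b : Fin k} : hrel (cV a : Vt k d e) (cV b) ↔ True := Iff.rfl
@[simp] lemma hrel_ct {a : Fin k} {j : Fin (2*d+e)} :
    hrel (cV a : Vt k d e) (tV j) ↔ (a:ℕ) ≠ posN d j := Iff.rfl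
@[simp] lemma hrel_tc {a : Fin k} {j : Fin (2*d+e)} :
    hrel (tV j : Vt k d e) (cV a) ↔ (a:ℕ) ≠ posN d j := Iff.rfl
@[simp] lemma hrel_tt {j j' : Fin (2*d+e)} :
    hrel (tV j : Vt k d e) (tV j') ↔ posN d j = posN d j' := Iff.rfl
@[simp] lemma hrel_cp {a : Fin k} {i : Fin d} {j : Fin (k-1)} :
    hrel (cV a : Vt k d e) (pV i j) ↔ ((a:ℕ) ≠ (i:ℕ) ∧ (a:ℕ) ≠ hatN i j) := Iff.rfl
@[simp] lemma hrel_pc {a : Fin k} {i : Fin d} {j : Fin (k-1)} :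
    hrel (pV i j : Vt k d e) (cV a) ↔ ((a:ℕ) ≠ (i:ℕ) ∧ (a:ℕ) ≠ hatN i j) := Iff.rfl
@[simp] lemma hrel_tp {j' : Fin (2*d+e)} {i : Fin d} {j : Fin (k-1)} :
    hrel (tV j' : Vt k d e) (pV i j) ↔ (j':ℕ) = d + i := Iff.rfl
@[simp] lemma hrel_pt {j' : Fin (2*d+e)} {i : Fin d} {j : Fin (k-1)} :
    hrel (pV i j : Vt k d e) (tV j') ↔ (j':ℕ) = d + i := Iff.rfl
@[simp] lemma hrel_pp {i i' : Fin d} {j j' : Fin (k-1)} :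
    hrel (pV i j : Vt k d e) (pV i' j') ↔ False := Iff.rfl

lemma tsvert_iff {I : Finset (Vt k d e)} :
    TSVert (Gr k d e) k I ↔ I.card = k ∧ ∀ u ∈ I, ∀ v ∈ I, u ≠ v → hrel u v := by
  unfold TSVert
  refine and_congr Iff.rfl ?_
  constructor
  · intro h u hu v hv hne
    rcases not_gr_adj.mp (h u hu v hv) with h' | h'
    · exact absurd h' hne
    · exact h'
  · intro h u hu v hv
    rw [not_gr_adj]
    by_cases hne : u = v
    · exact Or.inl hne
    · exact Or.inr (h u hu v hv hne)

lemma tsvert_Cs : TSVert (Gr k d e) k (Cs k d e) := by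
  rw [tsvert_iff]
  refine ⟨card_Cs, ?_⟩
  intro u hu v hv hne
  rw [mem_Cs] at hu hv
  obtain ⟨a, rfl⟩ := hu; obtain ⟨b, rfl⟩ := hv
  simp

lemma tsvert_leafS {hde : d + e ≤ k} (hk : 2 ≤ k) (j : Fin (2*d+e)) :
    TSVert (Gr k d e) k (leafS hde j) := by
  rw [tsvert_iff]
  refine ⟨card_leafS hk, ?_⟩
  intro u hu v hv hne
  rw [mem_leafS] at hu hv
  rcases hu with rfl | ⟨a, ha, rfl⟩ <;> rcases hv with rfl | ⟨b, hb, rfl⟩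
  · exact absurd rfl hne
  · exact fun h => hb (Fin.ext (by simpa using h))
  · exact fun h => ha (Fin.ext (by simpa using h))
  · simp

lemma tsvert_pendS (hk : 2 ≤ k) (hde : d + e ≤ k) (i : Fin d) (j : Fin (k-1)) :
    TSVert (Gr k d e) k (pendS hk hde i j) := by
  rw [tsvert_iff]
  refine ⟨card_pendS, ?_⟩
  intro u hu v hv hne
  rw [mem_pendS] at hu hv
  have hsec : ((secF i : Fin (2*d+e)) : ℕ) = d + (i:ℕ) := rfl
  rcases hu with rfl | rfl | ⟨a, ha1, ha2, rfl⟩ <;>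
    rcases hv with rfl | rfl | ⟨b, hb1, hb2, rfl⟩ <;>
      first
        | exact absurd rfl hne
        | simp_all [posN, Fin.ext_iff]
        | (simp_all [posN, Fin.ext_iff]; omega)

lemma tsvert_sS (hk : 2 ≤ k) (hde : d + e ≤ k) (p : Fin d) (q : Fin k)
    (hq : q ≠ castF hde p) : TSVert (Gr k d e) k (sS hde p q) := by
  rw [tsvert_iff]
  refine ⟨card_sS hq hk, ?_⟩
  intro u hu v hv hne
  rw [mem_sS] at hu hv
  rcases hu with rfl | rfl | ⟨a, ha1, ha2, rfl⟩ <;>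
    rcases hv with rfl | rfl | ⟨b, hb1, hb2, rfl⟩ <;>
      first
        | exact absurd rfl hne
        | simp_all [posN, Fin.ext_iff]
        | (simp_all [posN, Fin.ext_iff]; omega)

/-- classification of the vertices of the token sliding graph -/
theorem classify (hk : 2 ≤ k) (hde : d + e ≤ k) {I : Finset (Vt k d e)}
    (h : TSVert (Gr k d e) k I) :
    I = Cs k d e ∨ (∃ j, I = leafS hde j) ∨
    (∃ i j, I = pendS hk hde i j) ∨
    (∃ p q, ∃ _ : q ≠ castF hde p, I = sS hde p q) := by
  classical
  rw [tsvert_iff] at h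
  obtain ⟨hcard, hind⟩ := h
  by_cases hP : ∃ i j, pV i j ∈ I
  · -- pendant case
    obtain ⟨i, j, hp⟩ := hP
    refine Or.inr (Or.inr (Or.inl ⟨i, j, ?_⟩))
    refine Finset.eq_of_subset_of_card_le ?_ (by rw [card_pendS, hcard])
    intro x hx
    rw [mem_pendS]
    rcases x with a | j'' | ⟨pi, pj⟩
    · have h2 : hrel (cV a : Vt k d e) (pV i j) := hind _ hx _ hp (by simp [cV, pV])
      rw [hrel_cp] at h2
      exact Or.inr (Or.inr ⟨a, Fin.ne_of_val_ne (by simpa using h2.1),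
        Fin.ne_of_val_ne (by simpa using h2.2), rfl⟩)
    · by_cases hxp : (tV j'' : Vt k d e) = pV i j
      · exact (by simpa [tV, pV] using hxp : False).elim
      · have h2 : hrel (tV j'' : Vt k d e) (pV i j) := hind _ hx _ hp hxp
        rw [hrel_tp] at h2
        refine Or.inl ?_
        have he : j'' = secF i := Fin.ext (by simpa using h2)
        rw [he]; rfl
    · by_cases hxp : (pV pi pj : Vt k d e) = pV i j
      · exact Or.inr (Or.inl hxp)
      · have h2 : hrel (pV pi pj : Vt k d e) (pV i j) := hind _ hx _ hp hxp
        exact ((hrel_pp).mp h2).elim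
  · by_cases hT2 : ∃ j j', j ≠ j' ∧ tV j ∈ I ∧ tV j' ∈ I
    · -- two targets: S-type
      obtain ⟨j, j', hne, hj, hj'⟩ := hT2
      have hneq : (tV j : Vt k d e) ≠ tV j' := by
        simp only [tV, ne_eq, Sum.inr.injEq, Sum.inl.injEq]
        exact hne
      have hpos : posN d (j:ℕ) = posN d (j':ℕ) := by
        have h2 := hind _ hj _ hj' hneq
        rwa [hrel_tt] at h2
      have hvne : (j:ℕ) ≠ (j':ℕ) := fun h => hne (Fin.ext h)
      have hord : ((j:ℕ) < d ∧ (j':ℕ) = d + (j:ℕ)) ∨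
          ((j':ℕ) < d ∧ (j:ℕ) = d + (j':ℕ)) := by
        have h1 := j.isLt; have h2 := j'.isLt
        unfold posN at hpos; split_ifs at hpos <;> omega
      have key : ∀ p : Fin d, tV (priF p) ∈ I → tV (secF p) ∈ I →
          ∃ p' q, ∃ _ : q ≠ castF hde p', I = sS hde p' q := by
        intro p hp1 hp2
        set A := (Cs k d e).erase (cV (castF hde p)) with hA
        have hsub : I ⊆ insert (tV (priF p)) (insert (tV (secF p)) A) := by
          intro x hx
          simp only [Finset.mem_insert]
          by_cases hx1 : x = tV (priF p); · exact Or.inl hx1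
          by_cases hx2 : x = tV (secF p); · exact Or.inr (Or.inl hx2)
          refine Or.inr (Or.inr ?_)
          rcases x with a | j'' | ⟨pi, pj⟩
          · have h1 : hrel (cV a : Vt k d e) (tV (priF p)) := hind _ hx _ hp1 hx1
            rw [hrel_ct] at h1
            have hpv : posN d ((priF p : Fin (2*d+e)):ℕ) = (p:ℕ) := by
              simp [posN, priF, p.isLt]
            rw [hA, Finset.mem_erase]
            refine ⟨fun hc => h1 ?_, by simp [mem_Cs]; exact ⟨a, rfl⟩⟩
            rw [hpv]
            simpa [cV] using congrArg (fun z => (Sum.elim Fin.val (fun _ => 0) z)) hc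
          · exfalso
            have h1 : hrel (tV j'' : Vt k d e) (tV (priF p)) := hind _ hx _ hp1 hx1
            rw [hrel_tt] at h1
            have hpv : posN d ((priF p : Fin (2*d+e)):ℕ) = (p:ℕ) := by
              simp [posN, priF, p.isLt]
            rw [hpv] at h1
            have hj'' := j''.isLt
            have hc : (j'':ℕ) = (p:ℕ) ∨ (j'':ℕ) = d + (p:ℕ) := by
              unfold posN at h1; split_ifs at h1 <;> omega
            rcases hc with hc | hc
            · exact hx1 (congrArg (fun z => (Sum.inr (Sum.inl z) : Vt k d e))
                (Fin.ext (by simpa [priF] using hc)))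
            · exact hx2 (congrArg (fun z => (Sum.inr (Sum.inl z) : Vt k d e))
                (Fin.ext (by simpa [secF] using hc)))
          · exact absurd ⟨pi, pj, hx⟩ hP
        have hp12 : (tV (priF p) : Vt k d e) ≠ tV (secF p) := by
          simp only [tV, ne_eq, Sum.inr.injEq, Sum.inl.injEq]
          exact priF_ne_secF
        set B := (I.erase (tV (priF p))).erase (tV (secF p)) with hB
        have hBsub : B ⊆ A := by
          intro x hx
          rw [hB, Finset.mem_erase, Finset.mem_erase] at hx
          obtain ⟨hx2, hx1, hxI⟩ := hx
          rcases Finset.mem_insert.mp (hsub hxI) with hc | hc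
          · exact absurd hc hx1
          rcases Finset.mem_insert.mp hc with hc' | hc'
          · exact absurd hc' hx2
          · exact hc'
        have hcardB : B.card = k - 2 := by
          rw [hB, Finset.card_erase_of_mem (Finset.mem_erase.mpr ⟨hp12.symm, hp2⟩),
            Finset.card_erase_of_mem hp1, hcard]
          omega
        have hcardA : A.card = k - 1 := by
          rw [hA, Finset.card_erase_of_mem (by rw [mem_Cs]; exact ⟨_, rfl⟩), card_Cs]
        have hdiff : (A \ B).card = 1 := by
          rw [Finset.card_sdiff_of_subset hBsub]; omega
        obtain ⟨x, hx⟩ := Finset.card_eq_one.mp hdiff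
        have hxA : x ∈ A := Finset.mem_sdiff.mp (hx ▸ Finset.mem_singleton_self x) |>.1
        rw [hA, Finset.mem_erase, mem_Cs] at hxA
        obtain ⟨hxne, q, rfl⟩ := hxA
        have hq : q ≠ castF hde p := by simpa [cV_inj] using hxne
        refine ⟨p, q, hq, ?_⟩
        have hBeq : B = A.erase (cV q) := by
          rw [Finset.erase_eq, ← hx]
          exact (Finset.sdiff_sdiff_eq_self hBsub).symm
        have h1 : insert (tV (secF p)) B = I.erase (tV (priF p)) :=
          Finset.insert_erase (Finset.mem_erase.mpr ⟨hp12.symm, hp2⟩)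
        have h2 : insert (tV (priF p)) (I.erase (tV (priF p))) = I :=
          Finset.insert_erase hp1
        show I = insert (tV (priF p)) (insert (tV (secF p)) (A.erase (cV q)))
        rw [← hBeq, h1, h2]
      rcases hord with ⟨h1, h2⟩ | ⟨h1, h2⟩
      · have e1 : priF (⟨(j:ℕ), h1⟩ : Fin d) = j := Fin.ext rfl
        have e2 : secF (⟨(j:ℕ), h1⟩ : Fin d) = j' := Fin.ext (by simp [secF]; omega)
        obtain ⟨p', q, hq, hI⟩ := key ⟨(j:ℕ), h1⟩ (by rw [e1]; exact hj)
          (by rw [e2]; exact hj')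
        exact Or.inr (Or.inr (Or.inr ⟨p', q, hq, hI⟩))
      · have e1 : priF (⟨(j':ℕ), h1⟩ : Fin d) = j' := Fin.ext rfl
        have e2 : secF (⟨(j':ℕ), h1⟩ : Fin d) = j := Fin.ext (by simp [secF]; omega)
        obtain ⟨p', q, hq, hI⟩ := key ⟨(j':ℕ), h1⟩ (by rw [e1]; exact hj')
          (by rw [e2]; exact hj)
        exact Or.inr (Or.inr (Or.inr ⟨p', q, hq, hI⟩))
    · by_cases hT1 : ∃ j, tV j ∈ I
      · obtain ⟨j, hj⟩ := hT1
        refine Or.inr (Or.inl ⟨j, ?_⟩)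
        refine Finset.eq_of_subset_of_card_le ?_ (by rw [card_leafS hk, hcard])
        intro x hx
        rw [mem_leafS]
        rcases x with a | j'' | ⟨pi, pj⟩
        · have h2 : hrel (cV a : Vt k d e) (tV j) := hind _ hx _ hj (by simp [cV, tV])
          rw [hrel_ct] at h2
          exact Or.inr ⟨a, Fin.ne_of_val_ne (by simpa using h2), rfl⟩
        · by_cases hxj : j'' = j
          · rw [hxj]; exact Or.inl rfl
          · exact absurd ⟨j'', j, hxj, hx, hj⟩ hT2
        · exact absurd ⟨pi, pj, hx⟩ hP
      · left
        refine Finset.eq_of_subset_of_card_le ?_ (by rw [card_Cs, hcard])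
        intro x hx
        rw [mem_Cs]
        rcases x with a | j'' | ⟨pi, pj⟩
        · exact ⟨a, rfl⟩
        · exact absurd ⟨j'', hx⟩ hT1
        · exact absurd ⟨pi, pj, hx⟩ hP

end Stmt16

namespace Stmt16

lemma ts_adj_iff {W : Type*} [DecidableEq W] {G : SimpleGraph W} {k : ℕ}
    {I J : {I : Finset W // TSVert G k I}} :
    (TS G k).Adj I J ↔ ∃ u v, (I : Finset W) \ (J : Finset W) = {u} ∧
      (J : Finset W) \ (I : Finset W) = {v} ∧ G.Adj u v := by
  have coe_eq : ∀ (A B : Finset W) (u : W), ((A : Set W) \ (B : Set W) = {u}) ↔ A \ B = {u} := by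
    intro A B u
    rw [← Finset.coe_sdiff, ← Finset.coe_singleton, Finset.coe_inj]
  constructor
  · rintro ⟨hne, ⟨u, v, hd1, hd2, hadj⟩ | ⟨u, v, hd1, hd2, hadj⟩⟩
    · exact ⟨u, v, (coe_eq _ _ _).mp hd1, (coe_eq _ _ _).mp hd2, hadj⟩
    · exact ⟨v, u, (coe_eq _ _ _).mp hd2, (coe_eq _ _ _).mp hd1, hadj.symm⟩
  · rintro ⟨u, v, hd1, hd2, hadj⟩
    refine ⟨?_, Or.inl ⟨u, v, (coe_eq _ _ _).mpr hd1, (coe_eq _ _ _).mpr hd2, hadj⟩⟩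
    intro h
    rw [Subtype.ext_iff] at h
    rw [h, Finset.sdiff_self] at hd1
    exact Finset.singleton_ne_empty u hd1.symm

lemma mem_of_sdiff_singleton {W : Type*} [DecidableEq W] {A B : Finset W} {u x : W}
    (h : A \ B = {u}) (hx : x ∈ A) (hnx : x ∉ B) : x = u := by
  have : x ∈ A \ B := Finset.mem_sdiff.mpr ⟨hx, hnx⟩
  rw [h] at this
  exact Finset.mem_singleton.mp this

variable {k d e : ℕ}

@[simp] lemma cV_eq_cV {a b : Fin k} : (cV a : Vt k d e) = cV b ↔ a = b := by simp [cV]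
@[simp] lemma tV_eq_tV {j j' : Fin (2*d+e)} : (tV j : Vt k d e) = tV j' ↔ j = j' := by
  simp [tV]
@[simp] lemma pV_eq_pV {i i' : Fin d} {j j' : Fin (k-1)} :
    (pV i j : Vt k d e) = pV i' j' ↔ i = i' ∧ j = j' := by simp [pV, Prod.ext_iff]
@[simp] lemma cV_eq_tV {a : Fin k} {j : Fin (2*d+e)} : (cV a : Vt k d e) = tV j ↔ False := by
  simp [cV, tV]
@[simp] lemma tV_eq_cV {a : Fin k} {j : Fin (2*d+e)} : (tV j : Vt k d e) = cV a ↔ False := by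
  simp [cV, tV]
@[simp] lemma cV_eq_pV {a : Fin k} {i : Fin d} {j : Fin (k-1)} :
    (cV a : Vt k d e) = pV i j ↔ False := by simp [cV, pV]
@[simp] lemma pV_eq_cV {a : Fin k} {i : Fin d} {j : Fin (k-1)} :
    (pV i j : Vt k d e) = cV a ↔ False := by simp [cV, pV]
@[simp] lemma tV_eq_pV {j' : Fin (2*d+e)} {i : Fin d} {j : Fin (k-1)} :
    (tV j' : Vt k d e) = pV i j ↔ False := by simp [tV, pV]
@[simp] lemma pV_eq_tV {j' : Fin (2*d+e)} {i : Fin d} {j : Fin (k-1)} :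
    (pV i j : Vt k d e) = tV j' ↔ False := by simp [tV, pV]

-- membership simp lemmas
@[simp] lemma cV_mem_Cs {a : Fin k} : (cV a : Vt k d e) ∈ Cs k d e := by simp [mem_Cs]
@[simp] lemma tV_mem_Cs {j : Fin (2*d+e)} : (tV j : Vt k d e) ∈ Cs k d e ↔ False := by
  simp [mem_Cs]
@[simp] lemma pV_mem_Cs {i : Fin d} {j : Fin (k-1)} :
    (pV i j : Vt k d e) ∈ Cs k d e ↔ False := by simp [mem_Cs]

@[simp] lemma cV_mem_leafS {hde : d + e ≤ k} {a : Fin k} {j : Fin (2*d+e)} :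
    (cV a : Vt k d e) ∈ leafS hde j ↔ a ≠ posF hde j := by
  simp [mem_leafS]
@[simp] lemma tV_mem_leafS {hde : d + e ≤ k} {j j' : Fin (2*d+e)} :
    (tV j' : Vt k d e) ∈ leafS hde j ↔ j' = j := by simp [mem_leafS]
@[simp] lemma pV_mem_leafS {hde : d + e ≤ k} {i : Fin d} {j2 : Fin (k-1)} {j : Fin (2*d+e)} :
    (pV i j2 : Vt k d e) ∈ leafS hde j ↔ False := by simp [mem_leafS]

@[simp] lemma cV_mem_pendS {hk : 2 ≤ k} {hde : d + e ≤ k} {a : Fin k} {i : Fin d}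
    {j : Fin (k-1)} : (cV a : Vt k d e) ∈ pendS hk hde i j ↔
      (a ≠ castF hde i ∧ a ≠ hatF hk i j) := by
  simp [mem_pendS]
@[simp] lemma tV_mem_pendS {hk : 2 ≤ k} {hde : d + e ≤ k} {j' : Fin (2*d+e)} {i : Fin d}
    {j : Fin (k-1)} : (tV j' : Vt k d e) ∈ pendS hk hde i j ↔ j' = secF i := by
  simp [mem_pendS]
@[simp] lemma pV_mem_pendS {hk : 2 ≤ k} {hde : d + e ≤ k} {i i' : Fin d} {j j' : Fin (k-1)} :
    (pV i' j' : Vt k d e) ∈ pendS hk hde i j ↔ (i' = i ∧ j' = j) := by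
  simp [mem_pendS]

@[simp] lemma cV_mem_sS {hde : d + e ≤ k} {a : Fin k} {p : Fin d} {q : Fin k} :
    (cV a : Vt k d e) ∈ sS hde p q ↔ (a ≠ castF hde p ∧ a ≠ q) := by
  simp [mem_sS]
@[simp] lemma tV_mem_sS {hde : d + e ≤ k} {j' : Fin (2*d+e)} {p : Fin d} {q : Fin k} :
    (tV j' : Vt k d e) ∈ sS hde p q ↔ (j' = priF p ∨ j' = secF p) := by
  simp [mem_sS]
@[simp] lemma pV_mem_sS {hde : d + e ≤ k} {i : Fin d} {j : Fin (k-1)} {p : Fin d} {q : Fin k} :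
    (pV i j : Vt k d e) ∈ sS hde p q ↔ False := by
  simp [mem_sS]

-- more helpers
lemma hatF_inj {hk : 2 ≤ k} {i : Fin d} {j j' : Fin (k-1)} (h : hatF hk i j = hatF hk i j') :
    j = j' := by
  have := congrArg Fin.val h
  simp only [val_hatF] at this
  unfold hatN at this
  apply Fin.ext
  split_ifs at this <;> omega

lemma hatF_surj {hk : 2 ≤ k} {hde : d + e ≤ k} {i : Fin d} {q : Fin k}
    (h : q ≠ castF hde i) : ∃ j : Fin (k-1), hatF hk i j = q := by
  have hval : (q:ℕ) ≠ (i:ℕ) := fun hc => h (Fin.ext (by simpa using hc))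
  have hq := q.isLt
  by_cases hlt : (q:ℕ) < (i:ℕ)
  · have hik : (i:ℕ) < d := i.isLt
    refine ⟨⟨(q:ℕ), by omega⟩, Fin.ext ?_⟩
    simp only [val_hatF]; unfold hatN
    rw [if_pos hlt]
  · refine ⟨⟨(q:ℕ) - 1, by omega⟩, Fin.ext ?_⟩
    simp only [val_hatF]; unfold hatN
    rw [if_neg (by show ¬((q:ℕ) - 1 < (i:ℕ)); omega)]
    omega

lemma posF_secF {hde : d + e ≤ k} {i : Fin d} : posF hde (secF i) = castF hde i := by
  apply Fin.ext
  simp [posN]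

lemma posF_priF {hde : d + e ≤ k} {p : Fin d} : posF hde (priF p) = castF hde p := by
  apply Fin.ext
  simp [posN, p.isLt]

lemma priF_injective {p p' : Fin d} (h : (priF p : Fin (2*d+e)) = priF p') : p = p' := by
  apply Fin.ext
  have := congrArg Fin.val h
  simpa using this

lemma secF_injective {i i' : Fin d} (h : (secF i : Fin (2*d+e)) = secF i') : i = i' := by
  apply Fin.ext
  have := congrArg Fin.val h
  simp only [val_secF] at this
  omega

-- the rank function
def isCb : Vt k d e → Bool := fun x => x.isLeft
def isTb : Vt k d e → Bool
  | .inr (.inl _) => true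
  | _ => false

def rk (k : ℕ) (I : Finset (Vt k d e)) : ℕ :=
  (k - (I.filter (fun x => isCb x = true)).card) + ((I.filter (fun x => isTb x = true)).card - 1)

@[simp] lemma isCb_cV {a : Fin k} : isCb (cV a : Vt k d e) = true := rfl
@[simp] lemma isCb_tV {j : Fin (2*d+e)} : isCb (tV j : Vt k d e) = false := rfl
@[simp] lemma isCb_pV {i : Fin d} {j : Fin (k-1)} : isCb (pV i j : Vt k d e) = false := rfl
@[simp] lemma isTb_cV {a : Fin k} : isTb (cV a : Vt k d e) = false := rfl
@[simp] lemma isTb_tV {j : Fin (2*d+e)} : isTb (tV j : Vt k d e) = true := rfl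
@[simp] lemma isTb_pV {i : Fin d} {j : Fin (k-1)} : isTb (pV i j : Vt k d e) = false := rfl

lemma filterC_Cs : ((Cs k d e).filter (fun x => isCb x = true)) = Cs k d e := by
  apply Finset.filter_true_of_mem
  intro x hx
  rw [mem_Cs] at hx
  obtain ⟨a, rfl⟩ := hx
  simp

lemma filterT_Cs : ((Cs k d e).filter (fun x => isTb x = true)) = ∅ := by
  apply Finset.filter_false_of_mem
  intro x hx
  rw [mem_Cs] at hx
  obtain ⟨a, rfl⟩ := hx
  simp

lemma rk_Cs : rk k (Cs k d e) = 0 := by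
  rw [rk, filterC_Cs, filterT_Cs, card_Cs]
  simp

lemma rk_leafS (hk : 2 ≤ k) {hde : d + e ≤ k} {j : Fin (2*d+e)} :
    rk k (leafS hde j) = 1 := by
  rw [rk, leafS]
  rw [Finset.filter_insert, Finset.filter_insert]
  simp only [isCb_tV, isTb_tV, if_false, if_true, Bool.false_eq_true, reduceIte]
  rw [Finset.filter_erase, Finset.filter_erase, filterC_Cs, filterT_Cs]
  rw [Finset.card_erase_of_mem (by simp), card_Cs]
  simp
  omega

lemma rk_pendS {hk : 2 ≤ k} {hde : d + e ≤ k} {i : Fin d} {j : Fin (k-1)} :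
    rk k (pendS hk hde i j) = 2 := by
  rw [rk, pendS]
  rw [Finset.filter_insert, Finset.filter_insert, Finset.filter_insert,
    Finset.filter_insert]
  simp only [isCb_tV, isTb_tV, isCb_pV, isTb_pV, Bool.false_eq_true, reduceIte]
  rw [Finset.filter_erase, Finset.filter_erase, Finset.filter_erase, Finset.filter_erase,
    filterC_Cs, filterT_Cs]
  rw [Finset.card_erase_of_mem (by
    rw [Finset.mem_erase]
    exact ⟨by simp [hatF_ne_castF], by simp⟩), Finset.card_erase_of_mem (by simp), card_Cs]
  simp
  omega

lemma rk_sS {hk : 2 ≤ k} {hde : d + e ≤ k} {p : Fin d} {q : Fin k} (hq : q ≠ castF hde p) :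
    rk k (sS hde p q) = 3 := by
  rw [rk, sS]
  rw [Finset.filter_insert, Finset.filter_insert, Finset.filter_insert,
    Finset.filter_insert]
  simp only [isCb_tV, isTb_tV, Bool.false_eq_true, reduceIte]
  rw [Finset.filter_erase, Finset.filter_erase, Finset.filter_erase, Finset.filter_erase,
    filterC_Cs, filterT_Cs]
  rw [Finset.card_erase_of_mem (by
    rw [Finset.mem_erase]
    exact ⟨by simpa using hq, by simp⟩), Finset.card_erase_of_mem (by simp), card_Cs]
  rw [Finset.card_insert_of_notMem (by simp [priF_ne_secF])]
  simp
  omega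

end Stmt16

namespace Stmt16

variable {k d e : ℕ}

lemma sdiff_self_contra {W : Type*} [DecidableEq W] {A : Finset W} {u : W}
    (h1 : A \ A = {u}) : False := by
  rw [Finset.sdiff_self] at h1
  exact Finset.singleton_ne_empty u h1.symm

theorem adj_shapes (hk : 2 ≤ k) (hde : d + e ≤ k) {I J : Finset (Vt k d e)}
    (hI : TSVert (Gr k d e) k I) (hJ : TSVert (Gr k d e) k J)
    {u v : Vt k d e} (h1 : I \ J = {u}) (h2 : J \ I = {v})
    (huv : (Gr k d e).Adj u v) :
    (I = Cs k d e ∧ ∃ j, J = leafS hde j) ∨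
    (J = Cs k d e ∧ ∃ j, I = leafS hde j) ∨
    (∃ i j2, I = leafS hde (secF i) ∧ J = pendS hk hde i j2) ∨
    (∃ i j2, J = leafS hde (secF i) ∧ I = pendS hk hde i j2) ∨
    (∃ i j2, I = pendS hk hde i j2 ∧ J = sS hde i (hatF hk i j2)) ∨
    (∃ i j2, J = pendS hk hde i j2 ∧ I = sS hde i (hatF hk i j2)) := by
  rw [gr_adj] at huv
  obtain ⟨hune, hnrel⟩ := huv
  rcases classify hk hde hI with rfl | ⟨j, rfl⟩ | ⟨i, j2, rfl⟩ | ⟨p, q, hq, rfl⟩ <;>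
    rcases classify hk hde hJ with rfl | ⟨j', rfl⟩ | ⟨i', j2', rfl⟩ | ⟨p', q', hq', rfl⟩
  -- I = Cs
  · exact (sdiff_self_contra h1).elim
  · exact Or.inl ⟨rfl, j', rfl⟩
  · -- Cs vs pendS: two new elements
    exfalso
    have e1 : (tV (secF i') : Vt k d e) = v :=
      mem_of_sdiff_singleton h2 (by simp) (by simp)
    have e2 : (pV i' j2' : Vt k d e) = v :=
      mem_of_sdiff_singleton h2 (by simp) (by simp)
    rw [← e1] at e2; simp at e2
  · exfalso
    have e1 : (tV (priF p') : Vt k d e) = v :=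
      mem_of_sdiff_singleton h2 (by simp) (by simp)
    have e2 : (tV (secF p') : Vt k d e) = v :=
      mem_of_sdiff_singleton h2 (by simp) (by simp)
    rw [← e1] at e2; simp at e2
    exact priF_ne_secF e2.symm
  -- I = leafS j
  · exact Or.inr (Or.inl ⟨rfl, j, rfl⟩)
  · -- leaf vs leaf
    exfalso
    by_cases hjj : j = j'
    · subst hjj; exact sdiff_self_contra h1
    · have hu' : (tV j : Vt k d e) = u :=
        mem_of_sdiff_singleton h1 (by simp) (by simp [hjj])
      have hv' : (tV j' : Vt k d e) = v :=
        mem_of_sdiff_singleton h2 (by simp) (by simp; exact fun h => hjj h.symm)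
      by_cases hpp : posF hde j = posF hde j'
      · refine hnrel ?_
        rw [← hu', ← hv', hrel_tt]
        have := congrArg Fin.val hpp
        simpa using this
      · have e2 : (cV (posF hde j) : Vt k d e) = v :=
          mem_of_sdiff_singleton h2 (by simp [hpp]) (by simp)
        rw [← hv'] at e2; simp at e2
  · -- leaf vs pend
    by_cases hji : j = secF i'
    · subst hji
      exact Or.inr (Or.inr (Or.inl ⟨i', j2', rfl, rfl⟩))
    · exfalso
      have hu' : (tV j : Vt k d e) = u :=
        mem_of_sdiff_singleton h1 (by simp) (by simp [hji])
      by_cases hch : castF hde i' = posF hde j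
      · have hm1 : (cV (hatF hk i' j2') : Vt k d e) ∈ leafS hde j := by
          simp
          rw [← hch]
          exact fun hcc => hatF_ne_castF hcc
        have e2 : (cV (hatF hk i' j2') : Vt k d e) = u :=
          mem_of_sdiff_singleton h1 hm1 (by simp)
        rw [← hu'] at e2; simp at e2
      · have e2 : (cV (castF hde i') : Vt k d e) = u :=
          mem_of_sdiff_singleton h1 (by simp [hch]) (by simp)
        rw [← hu'] at e2; simp at e2
  · -- leaf vs sS
    exfalso
    by_cases hj1 : j = priF p'
    · subst hj1
      have hu' : (cV q' : Vt k d e) = u :=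
        mem_of_sdiff_singleton h1
          (by simp; intro hc; exact hq' (hc.trans posF_priF))
          (by simp)
      have hv' : (tV (secF p') : Vt k d e) = v :=
        mem_of_sdiff_singleton h2 (by simp) (by simp; exact fun h => priF_ne_secF h.symm)
      refine hnrel ?_
      rw [← hu', ← hv', hrel_ct]
      intro hc
      apply hq'
      apply Fin.ext
      simpa [posN, p'.isLt] using hc
    · by_cases hj2 : j = secF p'
      · subst hj2
        have hu' : (cV q' : Vt k d e) = u :=
          mem_of_sdiff_singleton h1
            (by simp; intro hc; exact hq' (hc.trans posF_secF))
            (by simp)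
        have hv' : (tV (priF p') : Vt k d e) = v :=
          mem_of_sdiff_singleton h2 (by simp)
            (by simp; exact fun h => (priF_ne_secF (p := p') (i := p')) h)
        refine hnrel ?_
        rw [← hu', ← hv', hrel_ct]
        intro hc
        apply hq'
        apply Fin.ext
        simpa [posN, p'.isLt] using hc
      · have hu' : (tV j : Vt k d e) = u :=
          mem_of_sdiff_singleton h1 (by simp) (by simp [hj1, hj2])
        by_cases hch : castF hde p' = posF hde j
        · have hm1 : (cV q' : Vt k d e) ∈ leafS hde j := by
            simp
            rw [← hch]
            exact fun hcc => hq' hcc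
          have e2 : (cV q' : Vt k d e) = u :=
            mem_of_sdiff_singleton h1 hm1 (by simp)
          rw [← hu'] at e2; simp at e2
        · have e2 : (cV (castF hde p') : Vt k d e) = u :=
            mem_of_sdiff_singleton h1 (by simp [hch]) (by simp)
          rw [← hu'] at e2; simp at e2
  -- I = pendS
  · -- pend vs Cs
    exfalso
    have e1 : (tV (secF i) : Vt k d e) = u :=
      mem_of_sdiff_singleton h1 (by simp) (by simp)
    have e2 : (pV i j2 : Vt k d e) = u :=
      mem_of_sdiff_singleton h1 (by simp) (by simp)
    rw [← e1] at e2; simp at e2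
  · -- pend vs leaf
    by_cases hji : j' = secF i
    · subst hji
      exact Or.inr (Or.inr (Or.inr (Or.inl ⟨i, j2, rfl, rfl⟩)))
    · exfalso
      have hv' : (tV j' : Vt k d e) = v :=
        mem_of_sdiff_singleton h2 (by simp) (by simp [hji])
      by_cases hch : castF hde i = posF hde j'
      · have hm1 : (cV (hatF hk i j2) : Vt k d e) ∈ leafS hde j' := by
          simp
          rw [← hch]
          exact fun hcc => hatF_ne_castF hcc
        have e2 : (cV (hatF hk i j2) : Vt k d e) = v :=
          mem_of_sdiff_singleton h2 hm1 (by simp)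
        rw [← hv'] at e2; simp at e2
      · have e2 : (cV (castF hde i) : Vt k d e) = v :=
          mem_of_sdiff_singleton h2 (by simp [hch]) (by simp)
        rw [← hv'] at e2; simp at e2
  · -- pend vs pend
    exfalso
    by_cases hii : i = i'
    · subst hii
      by_cases hjj : j2 = j2'
      · subst hjj; exact sdiff_self_contra h1
      · have e1 : (pV i j2 : Vt k d e) = u :=
          mem_of_sdiff_singleton h1 (by simp) (by simp [hjj])
        have e2 : (cV (hatF hk i j2') : Vt k d e) = u :=
          mem_of_sdiff_singleton h1
            (by simp [hatF_ne_castF]; exact fun hc => hjj (hatF_inj hc.symm))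
            (by simp)
        rw [← e1] at e2; simp at e2
    · have e1 : (pV i j2 : Vt k d e) = u :=
        mem_of_sdiff_singleton h1 (by simp) (by simp [hii])
      have e2 : (tV (secF i) : Vt k d e) = u :=
        mem_of_sdiff_singleton h1 (by simp) (by simp; exact fun hc => hii (secF_injective hc))
      rw [← e1] at e2; simp at e2
  · -- pend vs sS
    by_cases hkey : i = p' ∧ q' = hatF hk i j2
    · obtain ⟨hip, hqh⟩ := hkey
      subst hip; subst hqh
      exact Or.inr (Or.inr (Or.inr (Or.inr (Or.inl ⟨i, j2, rfl, rfl⟩))))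
    · exfalso
      have e1 : (tV (priF p') : Vt k d e) = v :=
        mem_of_sdiff_singleton h2 (by simp) (by simp; exact fun hc => priF_ne_secF hc)
      by_cases hii : i = p'
      · subst hii
        have hqh : q' ≠ hatF hk i j2 := fun hc => hkey ⟨rfl, hc⟩
        have e2 : (cV (hatF hk i j2) : Vt k d e) = v :=
          mem_of_sdiff_singleton h2
            (by simp [hatF_ne_castF]; exact fun hc => hqh hc.symm) (by simp)
        rw [← e1] at e2; simp at e2
      · have e2 : (tV (secF p') : Vt k d e) = v :=
          mem_of_sdiff_singleton h2 (by simp)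
            (by simp; exact fun hc => hii (secF_injective hc).symm)
        rw [← e1] at e2; simp at e2
        exact priF_ne_secF e2.symm
  -- I = sS
  · -- sS vs Cs
    exfalso
    have e1 : (tV (priF p) : Vt k d e) = u :=
      mem_of_sdiff_singleton h1 (by simp) (by simp)
    have e2 : (tV (secF p) : Vt k d e) = u :=
      mem_of_sdiff_singleton h1 (by simp) (by simp)
    rw [← e1] at e2; simp at e2
    exact priF_ne_secF e2.symm
  · -- sS vs leaf
    exfalso
    by_cases hj1 : j' = priF p
    · subst hj1
      have hv' : (cV q : Vt k d e) = v :=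
        mem_of_sdiff_singleton h2
          (by simp; intro hc; exact hq (hc.trans posF_priF))
          (by simp)
      have hu' : (tV (secF p) : Vt k d e) = u :=
        mem_of_sdiff_singleton h1 (by simp) (by simp; exact fun h => priF_ne_secF h.symm)
      refine hnrel ?_
      rw [← hu', ← hv', hrel_tc]
      intro hc
      apply hq
      apply Fin.ext
      simpa [posN, p.isLt] using hc
    · by_cases hj2 : j' = secF p
      · subst hj2
        have hv' : (cV q : Vt k d e) = v :=
          mem_of_sdiff_singleton h2
            (by simp; intro hc; exact hq (hc.trans posF_secF))
            (by simp)
        have hu' : (tV (priF p) : Vt k d e) = u :=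
          mem_of_sdiff_singleton h1 (by simp)
            (by simp; exact fun h => (priF_ne_secF (p := p) (i := p)) h)
        refine hnrel ?_
        rw [← hu', ← hv', hrel_tc]
        intro hc
        apply hq
        apply Fin.ext
        simpa [posN, p.isLt] using hc
      · have hv' : (tV j' : Vt k d e) = v :=
          mem_of_sdiff_singleton h2 (by simp) (by simp [hj1, hj2])
        by_cases hch : castF hde p = posF hde j'
        · have hm1 : (cV q : Vt k d e) ∈ leafS hde j' := by
            simp
            rw [← hch]
            exact fun hcc => hq hcc
          have e2 : (cV q : Vt k d e) = v :=
            mem_of_sdiff_singleton h2 hm1 (by simp)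
          rw [← hv'] at e2; simp at e2
        · have e2 : (cV (castF hde p) : Vt k d e) = v :=
            mem_of_sdiff_singleton h2 (by simp [hch]) (by simp)
          rw [← hv'] at e2; simp at e2
  · -- sS vs pend
    by_cases hkey : i' = p ∧ q = hatF hk i' j2'
    · obtain ⟨hip, hqh⟩ := hkey
      subst hip; subst hqh
      exact Or.inr (Or.inr (Or.inr (Or.inr (Or.inr ⟨i', j2', rfl, rfl⟩))))
    · exfalso
      have e1 : (tV (priF p) : Vt k d e) = u :=
        mem_of_sdiff_singleton h1 (by simp) (by simp; exact fun hc => priF_ne_secF hc)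
      by_cases hii : i' = p
      · subst hii
        have hqh : q ≠ hatF hk i' j2' := fun hc => hkey ⟨rfl, hc⟩
        have e2 : (cV (hatF hk i' j2') : Vt k d e) = u :=
          mem_of_sdiff_singleton h1
            (by simp [hatF_ne_castF]; exact fun hc => hqh hc.symm) (by simp)
        rw [← e1] at e2; simp at e2
      · have e2 : (tV (secF p) : Vt k d e) = u :=
          mem_of_sdiff_singleton h1 (by simp)
            (by simp; exact fun hc => hii (secF_injective hc).symm)
        rw [← e1] at e2; simp at e2
        exact priF_ne_secF e2.symm
  · -- sS vs sS
    exfalso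
    by_cases hpp : p = p'
    · subst hpp
      by_cases hqq : q = q'
      · subst hqq; exact sdiff_self_contra h1
      · have e1 : (cV q' : Vt k d e) = u :=
          mem_of_sdiff_singleton h1 (by simp [hq']; exact fun h => hqq h.symm) (by simp)
        have e2 : (cV q : Vt k d e) = v :=
          mem_of_sdiff_singleton h2 (by simp [hq, hqq]) (by simp)
        refine hnrel ?_
        rw [← e1, ← e2]
        exact trivial
    · have hm1 : (tV (priF p) : Vt k d e) ∉ sS hde p' q' := by
        simp
        exact ⟨fun hc => hpp (priF_injective hc), fun hc => priF_ne_secF hc⟩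
      have hm2 : (tV (secF p) : Vt k d e) ∉ sS hde p' q' := by
        simp
        exact ⟨fun hc => priF_ne_secF hc.symm, fun hc => hpp (secF_injective hc)⟩
      have e1 : (tV (priF p) : Vt k d e) = u :=
        mem_of_sdiff_singleton h1 (by simp) hm1
      have e2 : (tV (secF p) : Vt k d e) = u :=
        mem_of_sdiff_singleton h1 (by simp) hm2
      rw [← e1] at e2; simp at e2
      exact priF_ne_secF e2.symm

end Stmt16

namespace Stmt16

variable {k d e : ℕ}

-- distinctness of families
lemma leafS_inj {hde : d + e ≤ k} {j j' : Fin (2*d+e)} (h : leafS hde j = leafS hde j') :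
    j = j' := by
  have : (tV j : Vt k d e) ∈ leafS hde j' := by rw [← h]; simp
  simpa using this

lemma Cs_ne_leafS {hde : d + e ≤ k} {j : Fin (2*d+e)} : Cs k d e ≠ leafS hde j := by
  intro h
  have : (tV j : Vt k d e) ∈ Cs k d e := by rw [h]; simp
  simpa using this

lemma leafS_ne_pendS {hk : 2 ≤ k} {hde : d + e ≤ k} {j : Fin (2*d+e)} {i : Fin d}
    {j2 : Fin (k-1)} : leafS hde j ≠ pendS hk hde i j2 := by
  intro h
  have : (pV i j2 : Vt k d e) ∈ leafS hde j := by rw [h]; simp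
  simpa using this

lemma leafS_ne_sS {hde : d + e ≤ k} {j : Fin (2*d+e)} {p : Fin d} {q : Fin k} :
    leafS hde j ≠ sS hde p q := by
  intro h
  have h1 : (tV (priF p) : Vt k d e) ∈ leafS hde j := by rw [h]; simp
  have h2 : (tV (secF p) : Vt k d e) ∈ leafS hde j := by rw [h]; simp
  rw [tV_mem_leafS] at h1 h2
  exact priF_ne_secF (h1.trans h2.symm)

lemma pendS_ne_sS {hk : 2 ≤ k} {hde : d + e ≤ k} {i : Fin d} {j2 : Fin (k-1)} {p : Fin d}
    {q : Fin k} : pendS hk hde i j2 ≠ sS hde p q := by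
  intro h
  have : (pV i j2 : Vt k d e) ∈ sS hde p q := by rw [← h]; simp
  simpa using this

lemma pendS_inj {hk : 2 ≤ k} {hde : d + e ≤ k} {i i' : Fin d} {j2 j2' : Fin (k-1)}
    (h : pendS hk hde i j2 = pendS hk hde i' j2') : i = i' ∧ j2 = j2' := by
  have : (pV i j2 : Vt k d e) ∈ pendS hk hde i' j2' := by rw [← h]; simp
  simpa using this

lemma sS_inj {hde : d + e ≤ k} {p p' : Fin d} {q q' : Fin k} (hq : q ≠ castF hde p)
    (hq' : q' ≠ castF hde p') (h : sS hde p q = sS hde p' q') : p = p' ∧ q = q' := by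
  have hp : p = p' := by
    have : (tV (priF p) : Vt k d e) ∈ sS hde p' q' := by rw [← h]; simp
    rw [tV_mem_sS] at this
    rcases this with hc | hc
    · exact priF_injective hc
    · exact absurd hc priF_ne_secF
  subst hp
  refine ⟨rfl, ?_⟩
  by_contra hqq
  have : (cV q' : Vt k d e) ∈ sS hde p q' := by
    rw [← h]
    exact cV_mem_sS.mpr ⟨hq', fun hc => hqq hc.symm⟩
  rw [cV_mem_sS] at this
  exact this.2 rfl

-- the explicit edges
lemma diff_Cs_leafS {hde : d + e ≤ k} {j : Fin (2*d+e)} :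
    Cs k d e \ leafS hde j = {cV (posF hde j)} := by
  ext x
  simp only [Finset.mem_sdiff, Finset.mem_singleton]
  constructor
  · rintro ⟨hx, hnx⟩
    rw [mem_Cs] at hx
    obtain ⟨a, rfl⟩ := hx
    by_contra hne
    exact hnx (cV_mem_leafS.mpr (fun h => hne (by rw [h])))
  · rintro rfl
    exact ⟨cV_mem_Cs, by simp⟩

lemma diff_leafS_Cs {hde : d + e ≤ k} {j : Fin (2*d+e)} :
    leafS hde j \ Cs k d e = {tV j} := by
  ext x
  simp only [Finset.mem_sdiff, Finset.mem_singleton]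
  constructor
  · rintro ⟨hx, hnx⟩
    rw [mem_leafS] at hx
    rcases hx with rfl | ⟨a, ha, rfl⟩
    · rfl
    · exact absurd cV_mem_Cs hnx
  · rintro rfl
    exact ⟨by simp, by simp⟩

lemma adj_Cs_leafS (hk : 2 ≤ k) (hde : d + e ≤ k) (j : Fin (2*d+e)) :
    (TS (Gr k d e) k).Adj ⟨Cs k d e, tsvert_Cs⟩ ⟨leafS hde j, tsvert_leafS hk j⟩ := by
  rw [ts_adj_iff]
  refine ⟨cV (posF hde j), tV j, diff_Cs_leafS, diff_leafS_Cs, ?_⟩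
  rw [gr_adj]
  refine ⟨by simp, ?_⟩
  rw [hrel_ct]
  simp

lemma diff_leafS_pendS {hk : 2 ≤ k} {hde : d + e ≤ k} {i : Fin d} {j2 : Fin (k-1)} :
    leafS hde (secF i) \ pendS hk hde i j2 = {cV (hatF hk i j2)} := by
  ext x
  simp only [Finset.mem_sdiff, Finset.mem_singleton]
  constructor
  · rintro ⟨hx, hnx⟩
    rw [mem_leafS] at hx
    rcases hx with rfl | ⟨a, ha, rfl⟩
    · exact absurd (by simp : (tV (secF i) : Vt k d e) ∈ pendS hk hde i j2) hnx
    · rw [posF_secF] at ha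
      rw [cV_mem_pendS] at hnx
      push_neg at hnx
      rw [cV_eq_cV]
      exact hnx ha
  · rintro rfl
    refine ⟨cV_mem_leafS.mpr (by rw [posF_secF]; exact hatF_ne_castF), by simp⟩

lemma diff_pendS_leafS {hk : 2 ≤ k} {hde : d + e ≤ k} {i : Fin d} {j2 : Fin (k-1)} :
    pendS hk hde i j2 \ leafS hde (secF i) = {pV i j2} := by
  ext x
  simp only [Finset.mem_sdiff, Finset.mem_singleton]
  constructor
  · rintro ⟨hx, hnx⟩
    rw [mem_pendS] at hx
    rcases hx with rfl | rfl | ⟨a, ha1, ha2, rfl⟩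
    · exact absurd (by simp : (tV (secF i) : Vt k d e) ∈ leafS hde (secF i)) hnx
    · rfl
    · exact absurd (cV_mem_leafS.mpr (by rw [posF_secF]; exact ha1)) hnx
  · rintro rfl
    exact ⟨by simp, by simp⟩

lemma adj_leafS_pendS (hk : 2 ≤ k) (hde : d + e ≤ k) (i : Fin d) (j2 : Fin (k-1)) :
    (TS (Gr k d e) k).Adj ⟨leafS hde (secF i), tsvert_leafS hk (secF i)⟩
      ⟨pendS hk hde i j2, tsvert_pendS hk hde i j2⟩ := by
  rw [ts_adj_iff]
  refine ⟨cV (hatF hk i j2), pV i j2, diff_leafS_pendS, diff_pendS_leafS, ?_⟩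
  rw [gr_adj]
  refine ⟨by simp, ?_⟩
  rw [hrel_cp]
  simp

lemma diff_pendS_sS {hk : 2 ≤ k} {hde : d + e ≤ k} {i : Fin d} {j2 : Fin (k-1)} :
    pendS hk hde i j2 \ sS hde i (hatF hk i j2) = {pV i j2} := by
  ext x
  simp only [Finset.mem_sdiff, Finset.mem_singleton]
  constructor
  · rintro ⟨hx, hnx⟩
    rw [mem_pendS] at hx
    rcases hx with rfl | rfl | ⟨a, ha1, ha2, rfl⟩
    · exact absurd (tV_mem_sS.mpr (Or.inr rfl)) hnx
    · rfl
    · exact absurd (cV_mem_sS.mpr ⟨ha1, ha2⟩) hnx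
  · rintro rfl
    exact ⟨by simp, by simp⟩

lemma diff_sS_pendS {hk : 2 ≤ k} {hde : d + e ≤ k} {i : Fin d} {j2 : Fin (k-1)} :
    sS hde i (hatF hk i j2) \ pendS hk hde i j2 = {tV (priF i)} := by
  ext x
  simp only [Finset.mem_sdiff, Finset.mem_singleton]
  constructor
  · rintro ⟨hx, hnx⟩
    rw [mem_sS] at hx
    rcases hx with rfl | rfl | ⟨a, ha1, ha2, rfl⟩
    · rfl
    · exact absurd (tV_mem_pendS.mpr rfl) hnx
    · exact absurd (cV_mem_pendS.mpr ⟨ha1, ha2⟩) hnx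
  · rintro rfl
    refine ⟨by simp, by simp; exact fun h => priF_ne_secF h⟩

lemma adj_pendS_sS (hk : 2 ≤ k) (hde : d + e ≤ k) (i : Fin d) (j2 : Fin (k-1)) :
    (TS (Gr k d e) k).Adj ⟨pendS hk hde i j2, tsvert_pendS hk hde i j2⟩
      ⟨sS hde i (hatF hk i j2), tsvert_sS hk hde i _ hatF_ne_castF⟩ := by
  rw [ts_adj_iff]
  refine ⟨pV i j2, tV (priF i), diff_pendS_sS, diff_sS_pendS, ?_⟩
  rw [gr_adj]
  refine ⟨by simp, ?_⟩
  rw [hrel_pt]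
  have := i.isLt
  simp [priF]
  omega

-- ranks of the two ends of any edge differ
lemma rk_ne_of_adj (hk : 2 ≤ k) (hde : d + e ≤ k)
    {A B : {I : Finset (Vt k d e) // TSVert (Gr k d e) k I}}
    (h : (TS (Gr k d e) k).Adj A B) : rk k A.1 ≠ rk k B.1 := by
  rw [ts_adj_iff] at h
  obtain ⟨u, v, h1, h2, huv⟩ := h
  rcases adj_shapes hk hde A.2 B.2 h1 h2 huv with
    ⟨hA, j, hB⟩ | ⟨hB, j, hA⟩ | ⟨i, j2, hA, hB⟩ | ⟨i, j2, hB, hA⟩ | ⟨i, j2, hA, hB⟩ |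
      ⟨i, j2, hB, hA⟩
  · rw [hA, hB, rk_Cs, rk_leafS hk]; omega
  · rw [hA, hB, rk_Cs, rk_leafS hk]; omega
  · rw [hA, hB, rk_leafS hk, rk_pendS (hk := hk)]; omega
  · rw [hA, hB, rk_leafS hk, rk_pendS (hk := hk)]; omega
  · rw [hA, hB, rk_pendS (hk := hk), rk_sS (hk := hk) hatF_ne_castF]; omega
  · rw [hA, hB, rk_pendS (hk := hk), rk_sS (hk := hk) hatF_ne_castF]; omega

end Stmt16

namespace Stmt16

variable {k d e : ℕ}

lemma lower_shape (hk : 2 ≤ k) (hde : d + e ≤ k)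
    {A B : {I : Finset (Vt k d e) // TSVert (Gr k d e) k I}}
    (h : (TS (Gr k d e) k).Adj A B) (hlt : rk k B.1 < rk k A.1) :
    (B.1 = Cs k d e ∧ ∃ j, A.1 = leafS hde j) ∨
    (∃ i j2, B.1 = leafS hde (secF i) ∧ A.1 = pendS hk hde i j2) ∨
    (∃ i j2, B.1 = pendS hk hde i j2 ∧ A.1 = sS hde i (hatF hk i j2)) := by
  rw [ts_adj_iff] at h
  obtain ⟨u, v, h1, h2, huv⟩ := h
  rcases adj_shapes hk hde A.2 B.2 h1 h2 huv with
    ⟨hA, j, hB⟩ | ⟨hB, j, hA⟩ | ⟨i, j2, hA, hB⟩ | ⟨i, j2, hB, hA⟩ | ⟨i, j2, hA, hB⟩ |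
      ⟨i, j2, hB, hA⟩
  · rw [hA, hB, rk_Cs, rk_leafS hk] at hlt; omega
  · exact Or.inl ⟨hB, j, hA⟩
  · rw [hA, hB, rk_leafS hk, rk_pendS (hk := hk)] at hlt; omega
  · exact Or.inr (Or.inl ⟨i, j2, hB, hA⟩)
  · rw [hA, hB, rk_pendS (hk := hk), rk_sS (hk := hk) hatF_ne_castF] at hlt; omega
  · exact Or.inr (Or.inr ⟨i, j2, hB, hA⟩)

theorem ts_isTree (hk : 2 ≤ k) (hde : d + e ≤ k) : (TS (Gr k d e) k).IsTree := by
  apply isTree_of_rank _ (fun A => rk k A.1) ⟨Cs k d e, tsvert_Cs⟩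
  · -- rank zero is the root
    intro A hA
    apply Subtype.ext
    rcases classify hk hde A.2 with h | ⟨j, h⟩ | ⟨i, j2, h⟩ | ⟨p, q, hq, h⟩
    · exact h
    · rw [h, rk_leafS hk] at hA; omega
    · rw [h, rk_pendS (hk := hk)] at hA; omega
    · rw [h, rk_sS (hk := hk) hq] at hA; omega
  · -- no equal-rank edges
    intro A B hAB
    exact rk_ne_of_adj hk hde hAB
  · -- unique lower neighbour
    intro A B C hAB hAC hBlt hClt
    rcases lower_shape hk hde hAB hBlt with ⟨hB, j, hA⟩ | ⟨i, j2, hB, hA⟩ | ⟨i, j2, hB, hA⟩ <;>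
      rcases lower_shape hk hde hAC hClt with ⟨hC, j', hA'⟩ | ⟨i', j2', hC, hA'⟩ |
        ⟨i', j2', hC, hA'⟩
    · exact Subtype.ext (hB.trans hC.symm)
    · exact absurd (hA.symm.trans hA') leafS_ne_pendS
    · exact absurd (hA.symm.trans hA') leafS_ne_sS
    · exact absurd (hA'.symm.trans hA) leafS_ne_pendS
    · obtain ⟨hii, -⟩ := pendS_inj (hA.symm.trans hA')
      subst hii
      exact Subtype.ext (hB.trans hC.symm)
    · exact absurd (hA'.symm.trans hA) (Ne.symm pendS_ne_sS)
    · exact absurd (hA'.symm.trans hA) leafS_ne_sS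
    · exact absurd (hA.symm.trans hA') (Ne.symm pendS_ne_sS)
    · obtain ⟨hii, hqq⟩ := sS_inj hatF_ne_castF hatF_ne_castF (hA.symm.trans hA')
      subst hii
      have hjj : j2 = j2' := hatF_inj hqq
      subst hjj
      exact Subtype.ext (hB.trans hC.symm)
  · -- lower neighbour exists
    intro A hA
    rcases classify hk hde A.2 with h | ⟨j, h⟩ | ⟨i, j2, h⟩ | ⟨p, q, hq, h⟩
    · rw [h, rk_Cs] at hA; omega
    · refine ⟨⟨Cs k d e, tsvert_Cs⟩, ?_, ?_⟩
      · have hAeq : A = ⟨leafS hde j, tsvert_leafS hk j⟩ := Subtype.ext h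
        rw [hAeq]
        exact (adj_Cs_leafS hk hde j).symm
      · rw [h, rk_leafS hk, rk_Cs]; omega
    · refine ⟨⟨leafS hde (secF i), tsvert_leafS hk (secF i)⟩, ?_, ?_⟩
      · have hAeq : A = ⟨pendS hk hde i j2, tsvert_pendS hk hde i j2⟩ := Subtype.ext h
        rw [hAeq]
        exact (adj_leafS_pendS hk hde i j2).symm
      · rw [h, rk_pendS (hk := hk), rk_leafS hk]; omega
    · obtain ⟨j2, hj2⟩ := hatF_surj (hk := hk) hq
      subst hj2
      refine ⟨⟨pendS hk hde p j2, tsvert_pendS hk hde p j2⟩, ?_, ?_⟩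
      · have hAeq : A = ⟨sS hde p (hatF hk p j2), tsvert_sS hk hde p _ hq⟩ := Subtype.ext h
        rw [hAeq]
        exact (adj_pendS_sS hk hde p j2).symm
      · rw [h, rk_sS (hk := hk) hq, rk_pendS (hk := hk)]; omega

theorem star_emb (hk : 2 ≤ k) (hde : d + e ≤ k) :
    Nonempty (star' (2*d+e) ↪g TS (Gr k d e) k) := by
  refine ⟨⟨⟨fun x => Fin.cases ⟨Cs k d e, tsvert_Cs⟩
    (fun j => ⟨leafS hde j, tsvert_leafS hk j⟩) x, ?_⟩, ?_⟩⟩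
  · -- injective
    intro x y hxy
    rcases Fin.eq_zero_or_eq_succ x with rfl | ⟨x', rfl⟩ <;>
      rcases Fin.eq_zero_or_eq_succ y with rfl | ⟨y', rfl⟩
    · rfl
    · simp only [Fin.cases_zero, Fin.cases_succ] at hxy
      exact absurd (congrArg Subtype.val hxy) Cs_ne_leafS
    · simp only [Fin.cases_zero, Fin.cases_succ] at hxy
      exact absurd (congrArg Subtype.val hxy).symm Cs_ne_leafS
    · simp only [Fin.cases_succ] at hxy
      rw [leafS_inj (congrArg Subtype.val hxy)]
  · -- adjacency iff
    intro a b
    show (TS (Gr k d e) k).Adj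
        (Fin.cases (motive := fun _ => {I // TSVert (Gr k d e) k I}) ⟨Cs k d e, tsvert_Cs⟩
          (fun j => ⟨leafS hde j, tsvert_leafS hk j⟩) a)
        (Fin.cases (motive := fun _ => {I // TSVert (Gr k d e) k I}) ⟨Cs k d e, tsvert_Cs⟩
          (fun j => ⟨leafS hde j, tsvert_leafS hk j⟩) b) ↔ _
    rcases Fin.eq_zero_or_eq_succ a with rfl | ⟨a', rfl⟩ <;>
      rcases Fin.eq_zero_or_eq_succ b with rfl | ⟨b', rfl⟩
    · simp only [Fin.cases_zero]
      constructor
      · intro h; exact absurd h (SimpleGraph.irrefl _)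
      · intro h; exact absurd h (SimpleGraph.irrefl _)
    · simp only [Fin.cases_zero, Fin.cases_succ]
      constructor
      · intro _
        rw [star', fromRel_adj]
        exact ⟨(Fin.succ_ne_zero b').symm, Or.inl rfl⟩
      · intro _
        exact adj_Cs_leafS hk hde b'
    · simp only [Fin.cases_zero, Fin.cases_succ]
      constructor
      · intro _
        rw [star', fromRel_adj]
        exact ⟨Fin.succ_ne_zero a', Or.inr rfl⟩
      · intro _
        exact (adj_Cs_leafS hk hde a').symm
    · simp only [Fin.cases_succ]
      constructor
      · intro h
        exact absurd (by rw [rk_leafS hk, rk_leafS hk] :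
          rk k (leafS hde a') = rk k (leafS hde b')) (rk_ne_of_adj hk hde h)
      · intro h
        rw [star', fromRel_adj] at h
        obtain ⟨-, h | h⟩ := h
        · exact absurd h (Fin.succ_ne_zero a')
        · exact absurd h (Fin.succ_ne_zero b')

end Stmt16

namespace Stmt16

lemma map_sdiff' {α β : Type*} [DecidableEq α] [DecidableEq β] (f : α ↪ β)
    (A B : Finset α) : (A.map f) \ (B.map f) = (A \ B).map f := by
  ext x
  simp only [Finset.mem_sdiff, Finset.mem_map]
  constructor
  · rintro ⟨⟨a, ha, rfl⟩, hn⟩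
    exact ⟨a, ⟨ha, fun hb => hn ⟨a, hb, rfl⟩⟩, rfl⟩
  · rintro ⟨a, ⟨ha, hb⟩, rfl⟩
    refine ⟨⟨a, ha, rfl⟩, ?_⟩
    rintro ⟨a', ha', heq⟩
    rw [f.injective heq] at ha'
    exact hb ha'

lemma tsvert_congr {α β : Type*} [DecidableEq α] [DecidableEq β] (ee : α ≃ β)
    (G : SimpleGraph α) (k : ℕ) (I : Finset α) :
    TSVert G k I ↔ TSVert (G.comap ⇑ee.symm) k (I.map ee.toEmbedding) := by
  unfold TSVert
  constructor
  · rintro ⟨hc, hind⟩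
    refine ⟨by rw [Finset.card_map, hc], ?_⟩
    intro u hu v hv
    rw [Finset.mem_map] at hu hv
    obtain ⟨a, ha, rfl⟩ := hu
    obtain ⟨b, hb, rfl⟩ := hv
    have := hind a ha b hb
    simpa [SimpleGraph.comap] using this
  · rintro ⟨hc, hind⟩
    refine ⟨by rwa [Finset.card_map] at hc, ?_⟩
    intro u hu v hv
    have h1 : ee u ∈ I.map ee.toEmbedding := Finset.mem_map_of_mem _ hu
    have h2 : ee v ∈ I.map ee.toEmbedding := Finset.mem_map_of_mem _ hv
    have := hind _ h1 _ h2
    simpa [SimpleGraph.comap] using this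

noncomputable def tsIso {α β : Type*} [DecidableEq α] [DecidableEq β] (ee : α ≃ β)
    (G : SimpleGraph α) (k : ℕ) :
    TS G k ≃g TS (G.comap ⇑ee.symm) k where
  toEquiv := Equiv.subtypeEquiv ee.finsetCongr (fun I => by
    rw [Equiv.finsetCongr_apply]
    exact tsvert_congr ee G k I)
  map_rel_iff' := by
    intro A B
    simp only [Equiv.subtypeEquiv, Equiv.coe_fn_mk, Equiv.finsetCongr_apply]
    rw [ts_adj_iff, ts_adj_iff]
    constructor
    · rintro ⟨u', v', h1, h2, huv⟩
      rw [map_sdiff'] at h1 h2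
      have e1 : (A.1 \ B.1) = {ee.symm u'} := by
        have := congrArg (Finset.map ee.symm.toEmbedding) h1
        rwa [Finset.map_map, Finset.map_singleton,
          (by ext x; simp : ee.toEmbedding.trans ee.symm.toEmbedding =
            Function.Embedding.refl α), Finset.map_refl] at this
      have e2 : (B.1 \ A.1) = {ee.symm v'} := by
        have := congrArg (Finset.map ee.symm.toEmbedding) h2
        rwa [Finset.map_map, Finset.map_singleton,
          (by ext x; simp : ee.toEmbedding.trans ee.symm.toEmbedding =
            Function.Embedding.refl α), Finset.map_refl] at this
      exact ⟨ee.symm u', ee.symm v', e1, e2, huv⟩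
    · rintro ⟨u, v, h1, h2, huv⟩
      refine ⟨ee u, ee v, ?_, ?_, ?_⟩
      · rw [map_sdiff', h1, Finset.map_singleton]; rfl
      · rw [map_sdiff', h2, Finset.map_singleton]; rfl
      · show G.Adj (ee.symm (ee u)) (ee.symm (ee v))
        simpa using huv

lemma isTree_of_iso {V W : Type*} {G : SimpleGraph V} {H : SimpleGraph W}
    (φ : G ≃g H) (h : G.IsTree) : H.IsTree := by
  obtain ⟨hc, ha⟩ := h
  refine ⟨φ.connected_iff.mp hc, ?_⟩
  intro v c hcyc
  exact ha (c.map φ.symm.toHom) (hcyc.map (RelIso.injective φ.symm))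

end Stmt16


open Stmt16

theorem stmt16 (k n : ℕ) (hk : 2 ≤ k) (hn : n ≤ 2 * k) :
    ∃ (m : ℕ) (G : SimpleGraph (Fin m)),
      (TS G k).IsTree ∧ Nonempty (star' n ↪g TS G k) := by
  obtain ⟨d, e, rfl, hde⟩ : ∃ d e, n = 2 * d + e ∧ d + e ≤ k := by
    rcases le_total n k with h | h
    · exact ⟨0, n, by omega, by omega⟩
    · exact ⟨n - k, 2 * k - n, by omega, by omega⟩
  classical
  let m : ℕ := k + ((2*d+e) + d*(k-1))
  let eqv : Vt k d e ≃ Fin m :=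
    ((Equiv.refl (Fin k)).sumCongr (((Equiv.refl (Fin (2*d+e))).sumCongr
      finProdFinEquiv).trans finSumFinEquiv)).trans finSumFinEquiv
  refine ⟨m, (Gr k d e).comap ⇑eqv.symm, ?_, ?_⟩
  · exact isTree_of_iso (tsIso eqv (Gr k d e) k) (ts_isTree hk hde)
  · obtain ⟨emb⟩ := star_emb hk hde
    exact ⟨emb.trans (tsIso eqv (Gr k d e) k).toEmbedding⟩
end

section
/- The tree D_{1,n,2}, obtained from a path on n vertices by attaching one leaf at one end and two leaves at the other end, is isomorphic to TS_2(G) for some graph G if and only if n = 3. -/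
set_option linter.unusedSectionVars false
set_option linter.unusedVariables false
set_option maxHeartbeats 1000000


open SimpleGraph

section TSbasic
variable {W : Type*} [DecidableEq W] {G : SimpleGraph W}

lemma ts_adj_iff (I J : {I : Finset W // TSVert G 2 I}) :
    (TS G 2).Adj I J ↔ I ≠ J ∧ ∃ u v, ((I : Finset W) : Set W) \ ((J : Finset W) : Set W) = {u} ∧
      ((J : Finset W) : Set W) \ ((I : Finset W) : Set W) = {v} ∧ G.Adj u v := by
  unfold TS
  rw [SimpleGraph.fromRel_adj]
  constructor
  · rintro ⟨hne, h | ⟨u, v, h1, h2, hadj⟩⟩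
    · exact ⟨hne, h⟩
    · exact ⟨hne, v, u, h2, h1, hadj.symm⟩
  · rintro ⟨hne, h⟩
    exact ⟨hne, Or.inl h⟩

lemma adj_extract {I J : {I : Finset W // TSVert G 2 I}} (h : (TS G 2).Adj I J) {b c : W}
    (hb : b ∈ I.1) (hb' : b ∉ J.1) (hc : c ∈ J.1) (hc' : c ∉ I.1) : G.Adj b c := by
  rw [ts_adj_iff] at h
  obtain ⟨-, u, v, h1, h2, hadj⟩ := h
  have hbu : b = u := by
    have : b ∈ ((I : Finset W) : Set W) \ ((J : Finset W) : Set W) := ⟨hb, hb'⟩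
    rw [h1] at this; exact this
  have hcv : c = v := by
    have : c ∈ ((J : Finset W) : Set W) \ ((I : Finset W) : Set W) := ⟨hc, hc'⟩
    rw [h2] at this; exact this
  rw [hbu, hcv]; exact hadj

lemma pair_ne {I : {I : Finset W // TSVert G 2 I}} {a b : W} (h : I.1 = {a, b}) : a ≠ b := by
  intro e
  have := I.2.1
  rw [h, ← e] at this
  simp at this

lemma indep_of {I : {I : Finset W // TSVert G 2 I}} {a b : W} (h : I.1 = {a, b}) :
    ¬ G.Adj a b :=
  I.2.2 a (by rw [h]; simp) b (by rw [h]; simp)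

lemma exists_pair (I : {I : Finset W // TSVert G 2 I}) : ∃ a b, a ≠ b ∧ I.1 = {a, b} :=
  Finset.card_eq_two.1 I.2.1

lemma adj_mk (I J : {I : Finset W // TSVert G 2 I}) {a b c : W}
    (hI : I.1 = {a, b}) (hJ : J.1 = {a, c}) (hbc : G.Adj b c) : (TS G 2).Adj I J := by
  have hab : a ≠ b := pair_ne hI
  have hac : a ≠ c := pair_ne hJ
  have hbc' : b ≠ c := hbc.ne
  rw [ts_adj_iff]
  refine ⟨?_, b, c, ?_, ?_, hbc⟩
  · intro e
    have : I.1 = J.1 := by rw [e]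
    rw [hI, hJ] at this
    have : b ∈ ({a, c} : Finset W) := by rw [← this]; simp
    simp only [Finset.mem_insert, Finset.mem_singleton] at this
    rcases this with h | h
    · exact hab h.symm
    · exact hbc' h
  · ext x
    simp only [hI, hJ, Finset.coe_insert, Finset.coe_singleton, Set.mem_diff,
      Set.mem_insert_iff, Set.mem_singleton_iff]
    constructor
    · rintro ⟨hx1 | hx1, hx2⟩
      · exact absurd (Or.inl hx1) hx2
      · exact hx1
    · rintro rfl
      exact ⟨Or.inr rfl, by rintro (rfl | rfl) <;> [exact hab rfl; exact hbc' rfl]⟩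
  · ext x
    simp only [hI, hJ, Finset.coe_insert, Finset.coe_singleton, Set.mem_diff,
      Set.mem_insert_iff, Set.mem_singleton_iff]
    constructor
    · rintro ⟨hx1 | hx1, hx2⟩
      · exact absurd (Or.inl hx1) hx2
      · exact hx1
    · rintro rfl
      exact ⟨Or.inr rfl, by rintro (rfl | rfl) <;> [exact hac rfl; exact (hbc'.symm) rfl]⟩

lemma nonadj_extract {I J : {I : Finset W // TSVert G 2 I}} (h : ¬ (TS G 2).Adj I J)
    {a b c : W} (hI : I.1 = {a, b}) (hJ : J.1 = {a, c}) : ¬ G.Adj b c :=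
  fun hadj => h (adj_mk I J hI hJ hadj)

def mkVert (a b : W) (hne : a ≠ b) (h : ¬ G.Adj a b) : {I : Finset W // TSVert G 2 I} :=
  ⟨{a, b}, by
    constructor
    · exact Finset.card_pair hne
    · intro u hu v hv
      simp only [Finset.mem_insert, Finset.mem_singleton] at hu hv
      rcases hu with rfl | rfl <;> rcases hv with rfl | rfl
      · exact G.irrefl
      · exact h
      · exact fun hadj => h hadj.symm
      · exact G.irrefl⟩

lemma mkVert_val (a b : W) (hne : a ≠ b) (h : ¬ G.Adj a b) :
    (mkVert (G := G) a b hne h).1 = {a, b} := rfl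

lemma pair_cases {a b c d : W} (hab : a ≠ b) (h : ({a, b} : Finset W) = {c, d}) :
    (a = c ∧ b = d) ∨ (a = d ∧ b = c) := by
  have ha : a ∈ ({c, d} : Finset W) := by rw [← h]; simp
  have hb : b ∈ ({c, d} : Finset W) := by rw [← h]; simp
  simp only [Finset.mem_insert, Finset.mem_singleton] at ha hb
  rcases ha with h1 | h1 <;> rcases hb with h2 | h2
  · exact absurd (h1.trans h2.symm) hab
  · exact Or.inl ⟨h1, h2⟩
  · exact Or.inr ⟨h1, h2⟩
  · exact absurd (h1.trans h2.symm) hab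

lemma vert_ext {I J : {I : Finset W // TSVert G 2 I}} (h : I.1 = J.1) : I = J :=
  Subtype.ext h

lemma nbr_decomp {c J : {I : Finset W // TSVert G 2 I}} {u v : W}
    (hc : c.1 = {u, v}) (h : (TS G 2).Adj c J) :
    ∃ y, y ≠ u ∧ y ≠ v ∧ ((J.1 = {u, y} ∧ G.Adj y v) ∨ (J.1 = {v, y} ∧ G.Adj y u)) := by
  rw [ts_adj_iff] at h
  obtain ⟨hne, a, b, h1, h2, hadj⟩ := h
  -- a ∈ c, a ∉ J ; b ∈ J, b ∉ c.
  have ha : a ∈ (c.1 : Set W) \ (J.1 : Set W) := by rw [h1]; rfl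
  have hb : b ∈ (J.1 : Set W) \ (c.1 : Set W) := by rw [h2]; rfl
  obtain ⟨ha1, ha2⟩ := ha
  obtain ⟨hb1, hb2⟩ := hb
  simp only [Finset.mem_coe] at ha1 ha2 hb1 hb2
  have huv : u ≠ v := pair_ne hc
  -- the other element of c stays in J
  have hac : a ∈ ({u, v} : Finset W) := by rw [← hc]; exact ha1
  simp only [Finset.mem_insert, Finset.mem_singleton] at hac
  have hbval : b ∉ ({u, v} : Finset W) := by rw [← hc]; exact hb2
  simp only [Finset.mem_insert, Finset.mem_singleton] at hbval
  push_neg at hbval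
  obtain ⟨J1, J2, hJne, hJ⟩ := exists_pair J
  have hbmem : b ∈ ({J1, J2} : Finset W) := by rw [← hJ]; exact hb1
  simp only [Finset.mem_insert, Finset.mem_singleton] at hbmem
  -- other element of J must be in c \ {a} : show J = {other endpoint, b}
  rcases hac with rfl | rfl
  · -- a = u removed from c; v must be in J
    have hv : v ∈ J.1 := by
      by_contra hv
      have : v ∈ (c.1 : Set W) \ (J.1 : Set W) := by
        constructor
        · rw [hc]; simp
        · exact hv
      rw [h1] at this
      exact huv this.symm
    refine ⟨b, hbval.1, hbval.2, Or.inr ⟨?_, ?_⟩⟩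
    · rw [hJ]
      rcases hbmem with rfl | rfl
      · have : v ∈ ({b, J2} : Finset W) := by rw [← hJ]; exact hv
        simp only [Finset.mem_insert, Finset.mem_singleton] at this
        rcases this with rfl | rfl
        · exact absurd rfl hbval.2
        · rw [Finset.pair_comm]
      · have : v ∈ ({J1, b} : Finset W) := by rw [← hJ]; exact hv
        simp only [Finset.mem_insert, Finset.mem_singleton] at this
        rcases this with rfl | rfl
        · rfl
        · exact absurd rfl hbval.2
    · exact hadj.symm
  · -- a = v
    have hu : u ∈ J.1 := by
      by_contra hu
      have : u ∈ (c.1 : Set W) \ (J.1 : Set W) := by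
        constructor
        · rw [hc]; simp
        · exact hu
      rw [h1] at this
      exact huv this
    refine ⟨b, hbval.1, hbval.2, Or.inl ⟨?_, ?_⟩⟩
    · rw [hJ]
      rcases hbmem with rfl | rfl
      · have : u ∈ ({b, J2} : Finset W) := by rw [← hJ]; exact hu
        simp only [Finset.mem_insert, Finset.mem_singleton] at this
        rcases this with rfl | rfl
        · exact absurd rfl hbval.1
        · rw [Finset.pair_comm]
      · have : u ∈ ({J1, b} : Finset W) := by rw [← hJ]; exact hu
        simp only [Finset.mem_insert, Finset.mem_singleton] at this
        rcases this with rfl | rfl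
        · rfl
        · exact absurd rfl hbval.1
    · exact hadj.symm

end TSbasic

section Cases
variable {W : Type*} [DecidableEq W] {G : SimpleGraph W}

lemma caseA_aux {c b1 b2 w g : {I : Finset W // TSVert G 2 I}} {u v x1 x2 z : W}
    (hc : c.1 = {u, v}) (hb1 : b1.1 = {u, x1}) (hb2 : b2.1 = {u, x2})
    (hGx1v : G.Adj x1 v) (hGx2v : G.Adj x2 v)
    (leaf1 : ∀ x, (TS G 2).Adj b1 x → x = c) (leaf2 : ∀ x, (TS G 2).Adj b2 x → x = c)
    (hw : w.1 = {x1, x2}) (hwc : w ≠ c)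
    (hwg : (TS G 2).Adj w g) (hg : g.1 = {x1, z}) (hGzx2 : G.Adj z x2) : False := by
  have hux1 : u ≠ x1 := pair_ne hb1
  have hux2 : u ≠ x2 := pair_ne hb2
  have huv : u ≠ v := pair_ne hc
  have hx1z : x1 ≠ z := pair_ne hg
  have nGx1z : ¬ G.Adj x1 z := indep_of hg
  have hx1v : x1 ≠ v := hGx1v.ne
  have hx2v : x2 ≠ v := hGx2v.ne
  have hzu : z ≠ u := by
    rintro rfl
    have : g = b1 := vert_ext (by rw [hg, hb1, Finset.pair_comm])
    subst this
    exact hwc (leaf1 w hwg.symm)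
  have hzv : z ≠ v := by
    rintro rfl
    exact nGx1z hGx1v
  have ngb1 : ¬ (TS G 2).Adj g b1 := by
    intro h
    have hgc : g = c := leaf1 g h.symm
    have heq : ({x1, z} : Finset W) = {u, v} := by rw [← hg, hgc, hc]
    rcases pair_cases hx1z heq with ⟨h1, -⟩ | ⟨h1, -⟩
    · exact hux1 h1.symm
    · exact hx1v h1
  have nGzu : ¬ G.Adj z u :=
    nonadj_extract ngb1 hg (by rw [hb1, Finset.pair_comm])
  have hadj : (TS G 2).Adj (mkVert (G := G) u z hzu.symm (fun ha => nGzu ha.symm)) b2 :=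
    adj_mk _ b2 rfl hb2 hGzx2
  have hhc : mkVert (G := G) u z hzu.symm (fun ha => nGzu ha.symm) = c := leaf2 _ hadj.symm
  have heq2 : ({u, z} : Finset W) = {u, v} := by
    have h5 := congrArg Subtype.val hhc
    rw [hc] at h5
    exact h5
  rcases pair_cases hzu.symm heq2 with ⟨-, h2⟩ | ⟨h1, -⟩
  · exact hzv h2
  · exact huv h1

lemma caseA {c b1 b2 : {I : Finset W // TSVert G 2 I}} {u v x1 x2 : W}
    (hc : c.1 = {u, v}) (hb1 : b1.1 = {u, x1}) (hb2 : b2.1 = {u, x2})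
    (hGx1v : G.Adj x1 v) (hGx2v : G.Adj x2 v)
    (leaf1 : ∀ x, (TS G 2).Adj b1 x → x = c) (leaf2 : ∀ x, (TS G 2).Adj b2 x → x = c)
    (hne : b1 ≠ b2) (hnadj : ¬ (TS G 2).Adj b1 b2)
    (hasnbr : ∀ I : {I : Finset W // TSVert G 2 I}, ∃ J, (TS G 2).Adj I J) : False := by
  have hux1 : u ≠ x1 := pair_ne hb1
  have hux2 : u ≠ x2 := pair_ne hb2
  have huv : u ≠ v := pair_ne hc
  have hx1v : x1 ≠ v := hGx1v.ne
  have hx2v : x2 ≠ v := hGx2v.ne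
  have hx12 : x1 ≠ x2 := by
    rintro rfl
    exact hne (vert_ext (hb1.trans hb2.symm))
  have nGx12 : ¬ G.Adj x1 x2 := nonadj_extract hnadj hb1 hb2
  set w := mkVert (G := G) x1 x2 hx12 nGx12 with hwdef
  have hw : w.1 = {x1, x2} := rfl
  have hwc : w ≠ c := by
    intro h
    have : ({x1, x2} : Finset W) = {u, v} := by rw [← hw, h, hc]
    rcases pair_cases hx12 this with ⟨h1, -⟩ | ⟨h1, -⟩
    · exact hux1 h1.symm
    · exact hx1v h1
  obtain ⟨g, hg⟩ := hasnbr w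
  obtain ⟨z, hz1, hz2, hcase⟩ := nbr_decomp hw hg
  rcases hcase with ⟨hgval, hGzx2⟩ | ⟨hgval, hGzx1⟩
  · exact caseA_aux hc hb1 hb2 hGx1v hGx2v leaf1 leaf2 hw hwc hg hgval hGzx2
  · exact caseA_aux hc hb2 hb1 hGx2v hGx1v leaf2 leaf1
      (by rw [hw, Finset.pair_comm]) hwc hg hgval hGzx1

end Cases

section CaseB
variable {W : Type*} [DecidableEq W] {G : SimpleGraph W}

lemma caseB {c q b1 b2 q' : {I : Finset W // TSVert G 2 I}} {u v x1 x2 x3 : W}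
    (hc : c.1 = {u, v}) (hq : q.1 = {u, x1}) (hb1 : b1.1 = {u, x2}) (hb2 : b2.1 = {v, x3})
    (hGx1v : G.Adj x1 v) (hGx2v : G.Adj x2 v) (hGx3u : G.Adj x3 u)
    (leaf1 : ∀ x, (TS G 2).Adj b1 x → x = c) (leaf2 : ∀ x, (TS G 2).Adj b2 x → x = c)
    (hqb1 : ¬ (TS G 2).Adj q b1) (hqne : q ≠ b1)
    (hqq' : (TS G 2).Adj q q') (hq'c : q' ≠ c)
    (hqnbrs : ∀ x, (TS G 2).Adj q x → x = c ∨ x = q')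
    (hcnbrs : ∀ x, (TS G 2).Adj c x → x = b1 ∨ x = b2 ∨ x = q)
    (hdeg2 : ∀ I : {I : Finset W // TSVert G 2 I}, I ≠ c → ∀ y1 y2 y3,
      (TS G 2).Adj I y1 → (TS G 2).Adj I y2 → (TS G 2).Adj I y3 → y1 = y2 ∨ y1 = y3 ∨ y2 = y3)
    (hasnbr : ∀ I : {I : Finset W // TSVert G 2 I}, ∃ J, (TS G 2).Adj I J) :
    ∃ w, (TS G 2).Adj w q' ∧ (∀ x, (TS G 2).Adj w x → x = q') ∧ w ≠ b1 ∧ w ≠ b2 := by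
  have huv : u ≠ v := pair_ne hc
  have nGuv : ¬ G.Adj u v := indep_of hc
  have hux1 : u ≠ x1 := pair_ne hq
  have nGux1 : ¬ G.Adj u x1 := indep_of hq
  have hux2 : u ≠ x2 := pair_ne hb1
  have nGux2 : ¬ G.Adj u x2 := indep_of hb1
  have hvx3 : v ≠ x3 := pair_ne hb2
  have nGvx3 : ¬ G.Adj v x3 := indep_of hb2
  have hx1v : x1 ≠ v := hGx1v.ne
  have hx2v : x2 ≠ v := hGx2v.ne
  have hx3u : x3 ≠ u := hGx3u.ne
  have hx12 : x1 ≠ x2 := by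
    rintro rfl
    exact hqne (vert_ext (hq.trans hb1.symm))
  have nGx12 : ¬ G.Adj x1 x2 := nonadj_extract hqb1 hq hb1
  set w := mkVert (G := G) x1 x2 hx12 nGx12 with hwdef
  have hw : w.1 = {x1, x2} := rfl
  have hwb1 : w ≠ b1 := by
    intro h
    have heq : ({x1, x2} : Finset W) = {u, x2} := by rw [← hw, h, hb1]
    rcases pair_cases hx12 heq with ⟨h1, -⟩ | ⟨-, h2⟩
    · exact hux1 h1.symm
    · exact hux2 h2.symm
  have hwb2 : w ≠ b2 := by
    intro h
    have heq : ({x1, x2} : Finset W) = {v, x3} := by rw [← hw, h, hb2]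
    rcases pair_cases hx12 heq with ⟨h1, -⟩ | ⟨-, h2⟩
    · exact hx1v h1
    · exact hx2v h2
  have nwq : ¬ (TS G 2).Adj w q := by
    intro h
    have : G.Adj x2 u := adj_extract h
      (by rw [hw]; simp) (by rw [hq]; simp [hux2.symm, hx12.symm])
      (by rw [hq]; simp) (by rw [hw]; simp [hux1, hux2])
    exact nGux2 this.symm
  obtain ⟨s, hsu, hsx1, hcase⟩ := nbr_decomp hq hqq'
  rcases hcase with ⟨hq'val, hGsx1⟩ | ⟨hq'val, hGsu⟩
  · -- Branch B1 : q' = {u, s}, G.Adj s x1  →  False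
    exfalso
    have nGus : ¬ G.Adj u s := indep_of hq'val
    have hsv : s ≠ v := by
      rintro rfl
      exact hq'c (vert_ext (hq'val.trans hc.symm))
    have hsx2 : s ≠ x2 := by
      rintro rfl
      exact hqb1 (by rwa [vert_ext (hq'val.trans hb1.symm)] at hqq')
    have hsx3 : s ≠ x3 := by
      rintro rfl
      exact nGus hGx3u.symm
    have nq'c : ¬ (TS G 2).Adj q' c := by
      intro h
      rcases hcnbrs q' h.symm with h1 | h1 | h1
      · exact hqb1 (by rwa [h1] at hqq')
      · have heq : ({u, s} : Finset W) = {v, x3} := by rw [← hq'val, h1, hb2]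
        rcases pair_cases hsu.symm heq with ⟨h2, -⟩ | ⟨h2, -⟩
        · exact huv h2
        · exact hx3u h2.symm
      · rw [h1] at hqq'
        exact (TS G 2).irrefl hqq'
    have nGsv : ¬ G.Adj s v := nonadj_extract nq'c hq'val hc
    have nq'b1 : ¬ (TS G 2).Adj q' b1 := by
      intro h
      exact hq'c (leaf1 q' h.symm)
    have nGsx2 : ¬ G.Adj s x2 := nonadj_extract nq'b1 hq'val hb1
    set vs := mkVert (G := G) v s hsv.symm (fun h => nGsv h.symm) with hvsdef
    have hvs : vs.1 = {v, s} := rfl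
    set x2s := mkVert (G := G) x2 s hsx2.symm (fun h => nGsx2 h.symm) with hx2sdef
    have hx2s : x2s.1 = {x2, s} := rfl
    have adj1 : (TS G 2).Adj x2s w := adj_mk x2s w hx2s (by rw [hw, Finset.pair_comm]) hGsx1
    have adj2 : (TS G 2).Adj x2s vs :=
      adj_mk x2s vs (by rw [hx2s, Finset.pair_comm]) (by rw [hvs, Finset.pair_comm]) hGx2v
    have hx2sc : x2s ≠ c := by
      intro h
      have heq : ({x2, s} : Finset W) = {u, v} := by rw [← hx2s, h, hc]
      rcases pair_cases hsx2.symm heq with ⟨h1, -⟩ | ⟨h1, -⟩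
      · exact hux2 h1.symm
      · exact hx2v h1
    have hwvs : w ≠ vs := by
      intro h
      have heq : ({x1, x2} : Finset W) = {v, s} := by rw [← hw, h, hvs]
      rcases pair_cases hx12 heq with ⟨h1, -⟩ | ⟨h1, -⟩
      · exact hx1v h1
      · exact hsx1 h1.symm
    have nvsb2 : ¬ (TS G 2).Adj vs b2 := by
      intro h
      have hvsc : vs = c := leaf2 vs h.symm
      have heq : ({v, s} : Finset W) = {u, v} := by rw [← hvs, hvsc, hc]
      rcases pair_cases hsv.symm heq with ⟨h1, -⟩ | ⟨-, h2⟩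
      · exact huv h1.symm
      · exact hsu h2
    have nGsx3 : ¬ G.Adj s x3 := nonadj_extract nvsb2 hvs hb2
    set sx3 := mkVert (G := G) s x3 hsx3 nGsx3 with hsx3def
    have hsx3v : sx3.1 = {s, x3} := rfl
    have hsx3w : sx3 ≠ w := by
      intro h
      have heq : ({s, x3} : Finset W) = {x1, x2} := by rw [← hsx3v, h, hw]
      rcases pair_cases hsx3 heq with ⟨h1, -⟩ | ⟨h1, -⟩
      · exact hsx1 h1
      · exact hsx2 h1
    have hsx3vs : sx3 ≠ vs := by
      intro h
      have heq : ({s, x3} : Finset W) = {v, s} := by rw [← hsx3v, h, hvs]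
      rcases pair_cases hsx3 heq with ⟨h1, -⟩ | ⟨-, h2⟩
      · exact hsv h1
      · exact hvx3 h2.symm
    have nadj3 : ¬ (TS G 2).Adj x2s sx3 := by
      intro h
      rcases hdeg2 x2s hx2sc w vs sx3 adj1 adj2 h with h1 | h1 | h1
      · exact hwvs h1
      · exact hsx3w h1.symm
      · exact hsx3vs h1.symm
    have hx23 : x2 ≠ x3 := by
      rintro rfl
      exact nGux2 hGx3u.symm
    have nGx23 : ¬ G.Adj x2 x3 :=
      nonadj_extract nadj3 (by rw [hx2s, Finset.pair_comm]) hsx3v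
    have adj4 : (TS G 2).Adj (mkVert (G := G) x2 x3 hx23 nGx23) b1 :=
      adj_mk _ b1 rfl (by rw [hb1, Finset.pair_comm]) hGx3u
    have hfin : mkVert (G := G) x2 x3 hx23 nGx23 = c := leaf1 _ adj4.symm
    have heq : ({x2, x3} : Finset W) = {u, v} := by
      have h5 := congrArg Subtype.val hfin
      rw [hc] at h5
      exact h5
    rcases pair_cases hx23 heq with ⟨h1, -⟩ | ⟨h1, -⟩
    · exact hux2 h1.symm
    · exact hx2v h1
  · -- Branch B2 : q' = {x1, t}, G.Adj t u  (here s plays the role of t)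
    have nGx1s : ¬ G.Adj x1 s := indep_of hq'val
    have hsv : s ≠ v := by
      rintro rfl
      exact nGuv hGsu.symm
    have hsx2 : s ≠ x2 := by
      rintro rfl
      have : q' = w := vert_ext (by rw [hq'val, hw])
      rw [this] at hqq'
      exact nwq hqq'.symm
    have hsx3 : s ≠ x3 := by
      rintro rfl
      have hadj : (TS G 2).Adj q' b2 :=
        adj_mk q' b2 (by rw [hq'val, Finset.pair_comm]) (by rw [hb2, Finset.pair_comm]) hGx1v
      have : q' = c := leaf2 q' hadj.symm
      exact hq'c this
    have key : ∀ g, (TS G 2).Adj w g → g = q' := by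
      intro g hg
      obtain ⟨z, hzx1, hzx2, hcase⟩ := nbr_decomp hw hg
      rcases hcase with ⟨hgval, hGzx2⟩ | ⟨hgval, hGzx1⟩
      · -- g = {x1, z}, G.Adj z x2
        have hzu : z ≠ u := by
          rintro rfl
          exact nGux2 hGzx2
        by_cases hzs : z = s
        · subst hzs
          exact vert_ext (hgval.trans hq'val.symm)
        · exfalso
          have ngq : ¬ (TS G 2).Adj g q := by
            intro h
            rcases hqnbrs g h.symm with h1 | h1
            · have heq : ({x1, z} : Finset W) = {u, v} := by rw [← hgval, h1, hc]
              rcases pair_cases hzx1.symm heq with ⟨h2, -⟩ | ⟨h2, -⟩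
              · exact hux1 h2.symm
              · exact hx1v h2
            · have heq : ({x1, z} : Finset W) = {x1, s} := by rw [← hgval, h1, hq'val]
              rcases pair_cases hzx1.symm heq with ⟨-, h2⟩ | ⟨h2, -⟩
              · exact hzs h2
              · exact hsx1 h2.symm
          have nGzu : ¬ G.Adj z u :=
            nonadj_extract ngq hgval (by rw [hq, Finset.pair_comm])
          have hadj : (TS G 2).Adj (mkVert (G := G) u z hzu.symm (fun h => nGzu h.symm)) b1 :=
            adj_mk _ b1 rfl hb1 hGzx2
          have hhc : mkVert (G := G) u z hzu.symm (fun h => nGzu h.symm) = c :=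
            leaf1 _ hadj.symm
          have heq : ({u, z} : Finset W) = {u, v} := by
            have h5 := congrArg Subtype.val hhc
            rw [hc] at h5
            exact h5
          rcases pair_cases hzu.symm heq with ⟨-, h2⟩ | ⟨h2, -⟩
          · subst h2
            exact (indep_of hgval) hGx1v
          · exact huv h2
      · -- g = {x2, z}, G.Adj z x1
        exfalso
        have hzu : z ≠ u := by
          rintro rfl
          exact nGux1 hGzx1
        have ngb1 : ¬ (TS G 2).Adj g b1 := by
          intro h
          have hgc : g = c := leaf1 g h.symm
          have heq : ({x2, z} : Finset W) = {u, v} := by rw [← hgval, hgc, hc]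
          rcases pair_cases hzx2.symm heq with ⟨h2, -⟩ | ⟨h2, -⟩
          · exact hux2 h2.symm
          · exact hx2v h2
        have nGzu : ¬ G.Adj z u :=
          nonadj_extract ngb1 hgval (by rw [hb1, Finset.pair_comm])
        have hadj : (TS G 2).Adj (mkVert (G := G) u z hzu.symm (fun h => nGzu h.symm)) q :=
          adj_mk _ q rfl hq hGzx1
        rcases hqnbrs _ hadj.symm with h1 | h1
        · have heq : ({u, z} : Finset W) = {u, v} := by
            have h5 := congrArg Subtype.val h1
            rw [hc] at h5
            exact h5
          rcases pair_cases hzu.symm heq with ⟨-, h2⟩ | ⟨h2, -⟩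
          · subst h2
            exact (indep_of hgval) hGx2v
          · exact huv h2
        · have heq : ({u, z} : Finset W) = {x1, s} := by
            have h5 := congrArg Subtype.val h1
            rw [hq'val] at h5
            exact h5
          rcases pair_cases hzu.symm heq with ⟨h2, -⟩ | ⟨h2, -⟩
          · exact hux1 h2
          · exact hsu h2.symm
    obtain ⟨g0, hg0⟩ := hasnbr w
    have hg0q' : g0 = q' := key g0 hg0
    exact ⟨w, hg0q' ▸ hg0, key, hwb1, hwb2⟩

end CaseB
section Dside

def vA (n : ℕ) : Fin 1 ⊕ Fin n ⊕ Fin 2 := Sum.inl 0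
def vP (n i : ℕ) (h : i < n) : Fin 1 ⊕ Fin n ⊕ Fin 2 := Sum.inr (Sum.inl ⟨i, h⟩)
def vB (n : ℕ) (j : Fin 2) : Fin 1 ⊕ Fin n ⊕ Fin 2 := Sum.inr (Sum.inr j)

lemma D_adj_PP {n i j : ℕ} (hi : i < n) (hj : j < n) :
    (D 1 n 2).Adj (vP n i hi) (vP n j hj) ↔ (j = i + 1 ∨ i = j + 1) := by
  unfold D vP
  rw [SimpleGraph.fromRel_adj]
  simp [Fin.ext_iff]
  constructor
  · rintro ⟨hne, H⟩
    rcases H with ⟨i1, h1, x, h2, h3⟩ | ⟨i1, h1, x, h2, h3⟩ <;> omega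
  · intro h
    refine ⟨by omega, ?_⟩
    rcases h with h | h
    · exact Or.inl ⟨⟨i, hi⟩, rfl, ⟨j, hj⟩, rfl, by exact h⟩
    · exact Or.inr ⟨⟨j, hj⟩, rfl, ⟨i, hi⟩, rfl, by exact h⟩

lemma D_adj_AP {n i : ℕ} (hi : i < n) (a : Fin 1) :
    (D 1 n 2).Adj (Sum.inl a) (vP n i hi) ↔ i = 0 := by
  unfold D vP
  rw [SimpleGraph.fromRel_adj]
  simp [Fin.ext_iff]
  constructor
  · rintro ⟨x, h1, h2⟩
    omega
  · intro h
    exact ⟨⟨i, hi⟩, rfl, by exact h⟩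

lemma D_adj_BP {n i : ℕ} (hi : i < n) (j : Fin 2) :
    (D 1 n 2).Adj (vB n j) (vP n i hi) ↔ i = n - 1 := by
  unfold D vP vB
  rw [SimpleGraph.fromRel_adj]
  simp [Fin.ext_iff]
  constructor
  · rintro ⟨x, h1, h2⟩
    omega
  · intro h
    exact ⟨⟨i, hi⟩, rfl, by exact h⟩

lemma D_adj_AB {n : ℕ} (a : Fin 1) (j : Fin 2) :
    ¬ (D 1 n 2).Adj (Sum.inl a) (vB n j) := by
  unfold D vB
  rw [SimpleGraph.fromRel_adj]
  simp

lemma D_adj_AA {n : ℕ} (a b : Fin 1) : ¬ (D 1 n 2).Adj (Sum.inl a) (Sum.inl b) := by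
  unfold D
  rw [SimpleGraph.fromRel_adj]
  simp

lemma D_adj_BB {n : ℕ} (a b : Fin 2) : ¬ (D 1 n 2).Adj (vB n a) (vB n b) := by
  unfold D vB
  rw [SimpleGraph.fromRel_adj]
  simp

end Dside

section Dfacts

lemma fin1_eq (a : Fin 1) : a = 0 := by omega

lemma vP_inj {n i j : ℕ} {hi : i < n} {hj : j < n} : vP n i hi = vP n j hj ↔ i = j := by
  simp [vP, Fin.ext_iff]

lemma vP_eq_fin {n : ℕ} (i : Fin n) : Sum.inr (Sum.inl i) = vP n i.1 i.2 := rfl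

lemma vA_ne_vP {n i : ℕ} {hi : i < n} : vA n ≠ vP n i hi := by simp [vA, vP]

lemma vA_ne_vB {n : ℕ} {j : Fin 2} : vA n ≠ vB n j := by simp [vA, vB]

lemma vB_ne_vP {n i : ℕ} {hi : i < n} {j : Fin 2} : vB n j ≠ vP n i hi := by simp [vB, vP]

lemma vB_inj {n : ℕ} {j k : Fin 2} : vB n j = vB n k ↔ j = k := by simp [vB]

lemma D_leafB {n : ℕ} (hn : 1 ≤ n) (j : Fin 2) (x) (h : (D 1 n 2).Adj (vB n j) x) :
    x = vP n (n-1) (by omega) := by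
  rcases x with a | i | k
  · exact absurd h.symm (D_adj_AB a j)
  · rw [vP_eq_fin i] at h ⊢
    rw [vP_inj]
    exact (D_adj_BP i.2 j).1 h
  · exact absurd h (D_adj_BB j k)

lemma D_leafA {n : ℕ} (hn : 1 ≤ n) (x) (h : (D 1 n 2).Adj (vA n) x) :
    x = vP n 0 (by omega) := by
  rcases x with a | i | k
  · exact absurd h (D_adj_AA 0 a)
  · rw [vP_eq_fin i] at h ⊢
    rw [vP_inj]
    exact (D_adj_AP i.2 0).1 h
  · exact absurd h (D_adj_AB 0 k)

lemma D_adj_CB {n : ℕ} (hn : 1 ≤ n) (j : Fin 2) :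
    (D 1 n 2).Adj (vP n (n-1) (by omega)) (vB n j) :=
  ((D_adj_BP (by omega) j).2 rfl).symm

lemma D_adj_CQ {n : ℕ} (hn : 2 ≤ n) :
    (D 1 n 2).Adj (vP n (n-1) (by omega)) (vP n (n-2) (by omega)) :=
  (D_adj_PP (by omega) (by omega)).2 (by omega)

lemma D_nadj_QB {n : ℕ} (hn : 2 ≤ n) (j : Fin 2) :
    ¬ (D 1 n 2).Adj (vP n (n-2) (by omega)) (vB n j) := by
  intro h
  have := (D_adj_BP (by omega : n - 2 < n) j).1 h.symm
  omega

def DQ' (n : ℕ) (hn : 2 ≤ n) : Fin 1 ⊕ Fin n ⊕ Fin 2 :=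
  if h : 3 ≤ n then vP n (n-3) (by omega) else vA n

lemma D_adj_QQ' {n : ℕ} (hn : 2 ≤ n) :
    (D 1 n 2).Adj (vP n (n-2) (by omega)) (DQ' n hn) := by
  unfold DQ'
  split
  · exact (D_adj_PP (by omega) (by omega)).2 (by omega)
  · have hn2 : n = 2 := by omega
    have : (n - 2 : ℕ) = 0 := by omega
    exact ((D_adj_AP (by omega : n - 2 < n) 0).2 this).symm

lemma D_Q'_ne_C {n : ℕ} (hn : 2 ≤ n) : DQ' n hn ≠ vP n (n-1) (by omega) := by
  unfold DQ'
  split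
  · intro h
    rw [vP_inj] at h
    omega
  · exact vA_ne_vP

lemma D_Qnbrs {n : ℕ} (hn : 2 ≤ n) (x) (h : (D 1 n 2).Adj (vP n (n-2) (by omega)) x) :
    x = vP n (n-1) (by omega) ∨ x = DQ' n hn := by
  rcases x with a | i | k
  · -- x = inl a : adjacency forces n-2 = 0, i.e. n = 2, so x = vA = DQ'
    have h0 : (n - 2 : ℕ) = 0 := (D_adj_AP (by omega : n - 2 < n) a).1 h.symm
    right
    unfold DQ'
    split
    · omega
    · rw [fin1_eq a]; rfl
  · rw [vP_eq_fin i] at h ⊢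
    rcases (D_adj_PP (by omega : n - 2 < n) i.2).1 h with h1 | h1
    · left; rw [vP_inj]; omega
    · right
      unfold DQ'
      split
      · rw [vP_inj]; omega
      · omega
  · exact absurd h (D_nadj_QB hn k)

lemma D_Cnbrs {n : ℕ} (hn : 2 ≤ n) (x) (h : (D 1 n 2).Adj (vP n (n-1) (by omega)) x) :
    x = vB n 0 ∨ x = vB n 1 ∨ x = vP n (n-2) (by omega) := by
  rcases x with a | i | k
  · have h0 : (n - 1 : ℕ) = 0 := (D_adj_AP (by omega : n - 1 < n) a).1 h.symm
    omega
  · rw [vP_eq_fin i] at h ⊢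
    rcases (D_adj_PP (by omega : n - 1 < n) i.2).1 h with h1 | h1
    · have := i.2; omega
    · right; right; rw [vP_inj]; omega
  · rcases k with ⟨kv, hk⟩
    interval_cases kv
    · left; rfl
    · right; left; rfl

lemma D_hasnbr {n : ℕ} (hn : 1 ≤ n) (x) : ∃ y, (D 1 n 2).Adj x y := by
  rcases x with a | i | k
  · refine ⟨vP n 0 (by omega), ?_⟩
    rw [fin1_eq a]
    exact (D_adj_AP (by omega) 0).2 rfl
  · rw [vP_eq_fin i]
    by_cases h0 : i.1 = 0
    · exact ⟨vA n, ((D_adj_AP i.2 0).2 h0).symm⟩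
    · exact ⟨vP n (i.1 - 1) (by omega), (D_adj_PP i.2 (by omega)).2 (by omega)⟩
  · exact ⟨vP n (n-1) (by omega), (D_adj_BP (by omega) k).2 rfl⟩

lemma D_two_nbrs {n : ℕ} (hn : 1 ≤ n) (x) (hx : x ≠ vP n (n-1) (by omega)) :
    ∃ z1 z2, ∀ y, (D 1 n 2).Adj x y → y = z1 ∨ y = z2 := by
  rcases x with a | i | k
  · refine ⟨vP n 0 (by omega), vP n 0 (by omega), fun y hy => ?_⟩
    rw [fin1_eq a] at hy
    exact Or.inl (D_leafA hn y hy)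
  · have hi : i.1 ≠ n - 1 := by
      intro h
      apply hx
      rw [vP_eq_fin i, vP_inj]
      exact h
    have hilt : i.1 < n - 1 := by have := i.2; omega
    refine ⟨if i.1 = 0 then vA n else vP n (i.1 - 1) (by omega), vP n (i.1 + 1) (by omega),
      fun y hy => ?_⟩
    rw [vP_eq_fin i] at hy
    rcases y with a | l | k
    · have h0 : i.1 = 0 := by
        have := (D_adj_AP i.2 a).1 hy.symm
        omega
      left
      rw [if_pos h0, fin1_eq a]
      rfl
    · rw [vP_eq_fin l]
      rcases (D_adj_PP i.2 l.2).1 hy with h1 | h1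
      · right; rw [vP_inj]; omega
      · left
        have hipos : i.1 ≠ 0 := by omega
        rw [if_neg hipos, vP_inj]
        omega
    · have := (D_adj_BP i.2 k).1 hy.symm
      omega
  · refine ⟨vP n (n-1) (by omega), vP n (n-1) (by omega), fun y hy => ?_⟩
    exact Or.inl (D_leafB hn k y hy)

lemma D_deg2 {n : ℕ} (hn : 1 ≤ n) (x) (hx : x ≠ vP n (n-1) (by omega)) (y1 y2 y3)
    (h1 : (D 1 n 2).Adj x y1) (h2 : (D 1 n 2).Adj x y2) (h3 : (D 1 n 2).Adj x y3) :
    y1 = y2 ∨ y1 = y3 ∨ y2 = y3 := by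
  obtain ⟨z1, z2, hz⟩ := D_two_nbrs hn x hx
  rcases hz y1 h1 with e1 | e1 <;> rcases hz y2 h2 with e2 | e2 <;>
    rcases hz y3 h3 with e3 | e3 <;> subst e1 <;> subst e2 <;> try subst e3
  all_goals tauto

lemma D_leaf_class {n : ℕ} (hn : 2 ≤ n) (X Y) (hXY : (D 1 n 2).Adj X Y)
    (huniq : ∀ y, (D 1 n 2).Adj X y → y = Y) (hB0 : X ≠ vB n 0) (hB1 : X ≠ vB n 1) :
    X = vA n ∧ Y = vP n 0 (by omega) := by
  rcases X with a | i | k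
  · constructor
    · rw [fin1_eq a]; rfl
    · apply D_leafA (by omega) Y
      rw [fin1_eq a] at hXY
      exact hXY
  · exfalso
    rw [vP_eq_fin i] at hXY huniq
    by_cases h0 : i.1 = 0
    · have a1 : (D 1 n 2).Adj (vP n i.1 i.2) (vA n) := ((D_adj_AP i.2 0).2 h0).symm
      have a2 : (D 1 n 2).Adj (vP n i.1 i.2) (vP n 1 (by omega)) :=
        (D_adj_PP i.2 (by omega)).2 (by omega)
      have := (huniq _ a1).trans (huniq _ a2).symm
      exact vA_ne_vP this
    · by_cases hlast : i.1 = n - 1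
      · have a1 : (D 1 n 2).Adj (vP n i.1 i.2) (vB n 0) :=
          ((D_adj_BP i.2 0).2 hlast).symm
        have a2 : (D 1 n 2).Adj (vP n i.1 i.2) (vB n 1) :=
          ((D_adj_BP i.2 1).2 hlast).symm
        have := (huniq _ a1).trans (huniq _ a2).symm
        rw [vB_inj] at this
        exact absurd this (by decide)
      · have a1 : (D 1 n 2).Adj (vP n i.1 i.2) (vP n (i.1 - 1) (by omega)) :=
          (D_adj_PP i.2 (by omega)).2 (by omega)
        have a2 : (D 1 n 2).Adj (vP n i.1 i.2) (vP n (i.1 + 1) (by have := i.2; omega)) :=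
          (D_adj_PP i.2 (by have := i.2; omega)).2 (by omega)
        have := (huniq _ a1).trans (huniq _ a2).symm
        rw [vP_inj] at this
        omega
  · exfalso
    rcases k with ⟨kv, hk⟩
    interval_cases kv
    · exact hB0 rfl
    · exact hB1 rfl

end Dfacts

section MainForward

theorem forward_dir {n : ℕ} (hn : 1 ≤ n) {W : Type} (G : SimpleGraph W)
    (e : TS G 2 ≃g D 1 n 2) : n = 3 := by
  classical
  have esymm_e : ∀ y, e.symm (e y) = y := fun y => e.symm_apply_apply y
  have e_esymm : ∀ Y, e (e.symm Y) = Y := fun Y => e.apply_symm_apply Y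
  have tadj : ∀ X Y, (TS G 2).Adj (e.symm X) (e.symm Y) ↔ (D 1 n 2).Adj X Y :=
    fun X Y => e.symm.map_adj_iff
  have tadjL : ∀ X y, (TS G 2).Adj (e.symm X) y ↔ (D 1 n 2).Adj X (e y) := by
    intro X y
    have := tadj X (e y)
    rwa [esymm_e y] at this
  have hasnbr : ∀ I, ∃ J, (TS G 2).Adj I J := by
    intro I
    obtain ⟨Y, hY⟩ := D_hasnbr hn (e I)
    refine ⟨e.symm Y, ?_⟩
    have := (tadjL (e I) (e.symm Y))
    rw [esymm_e I] at this
    rw [this, e_esymm]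
    exact hY
  rcases Nat.lt_or_ge n 2 with h2 | h2
  · -- n = 1 : the claw, impossible
    exfalso
    set c := e.symm (vP n 0 (by omega)) with hcdef
    set b1 := e.symm (vB n 0) with hb1def
    set b2 := e.symm (vB n 1) with hb2def
    set b3 := e.symm (vA n) with hb3def
    have hn1 : n - 1 = 0 := by omega
    have leafb1 : ∀ x, (TS G 2).Adj b1 x → x = c := by
      intro x hx
      have h := D_leafB hn 0 (e x) ((tadjL _ _).1 hx)
      rw [← esymm_e x, h, hcdef]
      congr 1
      rw [vP_inj]
      omega
    have leafb2 : ∀ x, (TS G 2).Adj b2 x → x = c := by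
      intro x hx
      have h := D_leafB hn 1 (e x) ((tadjL _ _).1 hx)
      rw [← esymm_e x, h, hcdef]
      congr 1
      rw [vP_inj]
      omega
    have leafb3 : ∀ x, (TS G 2).Adj b3 x → x = c := by
      intro x hx
      have h := D_leafA hn (e x) ((tadjL _ _).1 hx)
      rw [← esymm_e x, h, hcdef]
    have hcb1 : (TS G 2).Adj c b1 :=
      (tadj _ _).2 ((D_adj_BP (by omega) 0).2 (by omega)).symm
    have hcb2 : (TS G 2).Adj c b2 :=
      (tadj _ _).2 ((D_adj_BP (by omega) 1).2 (by omega)).symm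
    have hcb3 : (TS G 2).Adj c b3 := by
      apply (tadj _ _).2
      exact ((D_adj_AP (by omega) 0).2 rfl).symm
    have nb12 : ¬ (TS G 2).Adj b1 b2 := fun h => D_adj_BB 0 1 ((tadj _ _).1 h)
    have nb13 : ¬ (TS G 2).Adj b1 b3 := fun h => D_adj_AB 0 0 ((tadj _ _).1 h).symm
    have nb23 : ¬ (TS G 2).Adj b2 b3 := fun h => D_adj_AB 0 1 ((tadj _ _).1 h).symm
    have ne12 : b1 ≠ b2 := fun h => by
      have := e.symm.injective h
      rw [vB_inj] at this
      exact absurd this (by decide)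
    have ne13 : b1 ≠ b3 := fun h => vA_ne_vB (e.symm.injective h).symm
    have ne23 : b2 ≠ b3 := fun h => vA_ne_vB (e.symm.injective h).symm
    obtain ⟨u, v, huv, hc⟩ := exists_pair c
    obtain ⟨y1, hy1u, hy1v, hd1⟩ := nbr_decomp hc hcb1
    obtain ⟨y2, hy2u, hy2v, hd2⟩ := nbr_decomp hc hcb2
    obtain ⟨y3, hy3u, hy3v, hd3⟩ := nbr_decomp hc hcb3
    have hc' : c.1 = {v, u} := by rw [hc, Finset.pair_comm]
    rcases hd1 with ⟨hv1, hG1⟩ | ⟨hv1, hG1⟩ <;>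
      rcases hd2 with ⟨hv2, hG2⟩ | ⟨hv2, hG2⟩ <;>
        rcases hd3 with ⟨hv3, hG3⟩ | ⟨hv3, hG3⟩
    · exact caseA hc hv1 hv2 hG1 hG2 leafb1 leafb2 ne12 nb12 hasnbr
    · exact caseA hc hv1 hv2 hG1 hG2 leafb1 leafb2 ne12 nb12 hasnbr
    · exact caseA hc hv1 hv3 hG1 hG3 leafb1 leafb3 ne13 nb13 hasnbr
    · exact caseA hc' hv2 hv3 hG2 hG3 leafb2 leafb3 ne23 nb23 hasnbr
    · exact caseA hc hv2 hv3 hG2 hG3 leafb2 leafb3 ne23 nb23 hasnbr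
    · exact caseA hc' hv1 hv3 hG1 hG3 leafb1 leafb3 ne13 nb13 hasnbr
    · exact caseA hc' hv1 hv2 hG1 hG2 leafb1 leafb2 ne12 nb12 hasnbr
    · exact caseA hc' hv1 hv2 hG1 hG2 leafb1 leafb2 ne12 nb12 hasnbr
  · -- n ≥ 2
    set c := e.symm (vP n (n-1) (by omega)) with hcdef
    set b1 := e.symm (vB n 0) with hb1def
    set b2 := e.symm (vB n 1) with hb2def
    set q := e.symm (vP n (n-2) (by omega)) with hqdef
    set q' := e.symm (DQ' n h2) with hq'def
    have leafb1 : ∀ x, (TS G 2).Adj b1 x → x = c := by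
      intro x hx
      have h := D_leafB hn 0 (e x) ((tadjL _ _).1 hx)
      rw [← esymm_e x, h, hcdef]
    have leafb2 : ∀ x, (TS G 2).Adj b2 x → x = c := by
      intro x hx
      have h := D_leafB hn 1 (e x) ((tadjL _ _).1 hx)
      rw [← esymm_e x, h, hcdef]
    have hcb1 : (TS G 2).Adj c b1 := (tadj _ _).2 (D_adj_CB hn 0)
    have hcb2 : (TS G 2).Adj c b2 := (tadj _ _).2 (D_adj_CB hn 1)
    have hcq : (TS G 2).Adj c q := (tadj _ _).2 (D_adj_CQ h2)
    have nb12 : ¬ (TS G 2).Adj b1 b2 := fun h => D_adj_BB 0 1 ((tadj _ _).1 h)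
    have ne12 : b1 ≠ b2 := fun h => by
      have := e.symm.injective h
      rw [vB_inj] at this
      exact absurd this (by decide)
    have hqb1 : ¬ (TS G 2).Adj q b1 := fun h => D_nadj_QB h2 0 ((tadj _ _).1 h)
    have hqb2 : ¬ (TS G 2).Adj q b2 := fun h => D_nadj_QB h2 1 ((tadj _ _).1 h)
    have hqne1 : q ≠ b1 := fun h => vB_ne_vP (e.symm.injective h).symm
    have hqne2 : q ≠ b2 := fun h => vB_ne_vP (e.symm.injective h).symm
    have hqq' : (TS G 2).Adj q q' := (tadj _ _).2 (D_adj_QQ' h2)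
    have hq'c : q' ≠ c := fun h => D_Q'_ne_C h2 (e.symm.injective h)
    have hqnbrs : ∀ x, (TS G 2).Adj q x → x = c ∨ x = q' := by
      intro x hx
      rcases D_Qnbrs h2 (e x) ((tadjL _ _).1 hx) with h | h
      · left; rw [← esymm_e x, h, hcdef]
      · right; rw [← esymm_e x, h, hq'def]
    have hcnbrs : ∀ x, (TS G 2).Adj c x → x = b1 ∨ x = b2 ∨ x = q := by
      intro x hx
      rcases D_Cnbrs h2 (e x) ((tadjL _ _).1 hx) with h | h | h
      · left; rw [← esymm_e x, h, hb1def]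
      · right; left; rw [← esymm_e x, h, hb2def]
      · right; right; rw [← esymm_e x, h, hqdef]
    have hcnbrs' : ∀ x, (TS G 2).Adj c x → x = b2 ∨ x = b1 ∨ x = q := by
      intro x hx
      rcases hcnbrs x hx with h | h | h
      · exact Or.inr (Or.inl h)
      · exact Or.inl h
      · exact Or.inr (Or.inr h)
    have hdeg2 : ∀ I, I ≠ c → ∀ y1 y2 y3,
        (TS G 2).Adj I y1 → (TS G 2).Adj I y2 → (TS G 2).Adj I y3 →
        y1 = y2 ∨ y1 = y3 ∨ y2 = y3 := by
      intro I hI y1 y2 y3 a1 a2 a3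
      have hIne : e I ≠ vP n (n-1) (by omega) := by
        intro h
        exact hI (by rw [← esymm_e I, h, hcdef])
      have := D_deg2 hn (e I) hIne (e y1) (e y2) (e y3)
        (e.map_adj_iff.2 a1) (e.map_adj_iff.2 a2) (e.map_adj_iff.2 a3)
      rcases this with h | h | h
      · exact Or.inl (e.injective h)
      · exact Or.inr (Or.inl (e.injective h))
      · exact Or.inr (Or.inr (e.injective h))
    -- the common finishing step
    have final : (∃ w, (TS G 2).Adj w q' ∧ (∀ x, (TS G 2).Adj w x → x = q') ∧
        w ≠ b1 ∧ w ≠ b2) → n = 3 := by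
      rintro ⟨w, hwq', hwuniq, hwb1, hwb2⟩
      have hADJ : (D 1 n 2).Adj (e w) (DQ' n h2) := by
        have := e.map_adj_iff.2 hwq'
        rwa [hq'def, e_esymm] at this
      have huniqD : ∀ y, (D 1 n 2).Adj (e w) y → y = DQ' n h2 := by
        intro y hy
        have h' : (TS G 2).Adj w (e.symm y) := by
          apply e.map_adj_iff.1
          rw [e_esymm]
          exact hy
        have := hwuniq _ h'
        rw [hq'def] at this
        have := congrArg e this
        rwa [e_esymm, e_esymm] at this
      have hB0 : e w ≠ vB n 0 := by
        intro h
        exact hwb1 (by rw [← esymm_e w, h, hb1def])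
      have hB1 : e w ≠ vB n 1 := by
        intro h
        exact hwb2 (by rw [← esymm_e w, h, hb2def])
      obtain ⟨-, hYP0⟩ := D_leaf_class h2 (e w) (DQ' n h2) hADJ huniqD hB0 hB1
      unfold DQ' at hYP0
      split at hYP0
      · rw [vP_inj] at hYP0
        omega
      · exact absurd hYP0 vA_ne_vP
    obtain ⟨u, v, huv, hc⟩ := exists_pair c
    obtain ⟨y1, hy1u, hy1v, hd1⟩ := nbr_decomp hc hcb1
    obtain ⟨y2, hy2u, hy2v, hd2⟩ := nbr_decomp hc hcb2
    obtain ⟨yq, hyqu, hyqv, hdq⟩ := nbr_decomp hc hcq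
    have hc' : c.1 = {v, u} := by rw [hc, Finset.pair_comm]
    rcases hd1 with ⟨hv1, hG1⟩ | ⟨hv1, hG1⟩ <;>
      rcases hd2 with ⟨hv2, hG2⟩ | ⟨hv2, hG2⟩ <;>
        rcases hdq with ⟨hvq, hGq⟩ | ⟨hvq, hGq⟩
    · exact absurd (caseA hc hv1 hv2 hG1 hG2 leafb1 leafb2 ne12 nb12 hasnbr) id
    · exact absurd (caseA hc hv1 hv2 hG1 hG2 leafb1 leafb2 ne12 nb12 hasnbr) id
    · -- b1 at u, b2 at v, q at u
      exact final (caseB hc hvq hv1 hv2 hGq hG1 hG2 leafb1 leafb2 hqb1 hqne1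
        hqq' hq'c hqnbrs hcnbrs hdeg2 hasnbr)
    · -- b1 at u, b2 at v, q at v
      exact final ((caseB hc' hvq hv2 hv1 hGq hG2 hG1 leafb2 leafb1 hqb2 hqne2
        hqq' hq'c hqnbrs hcnbrs' hdeg2 hasnbr).imp
        (fun w hw => ⟨hw.1, hw.2.1, hw.2.2.2, hw.2.2.1⟩))
    · -- b1 at v, b2 at u, q at u
      exact final ((caseB hc hvq hv2 hv1 hGq hG2 hG1 leafb2 leafb1 hqb2 hqne2
        hqq' hq'c hqnbrs hcnbrs' hdeg2 hasnbr).imp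
        (fun w hw => ⟨hw.1, hw.2.1, hw.2.2.2, hw.2.2.1⟩))
    · -- b1 at v, b2 at u, q at v
      exact final (caseB hc' hvq hv1 hv2 hGq hG1 hG2 leafb1 leafb2 hqb1 hqne1
        hqq' hq'c hqnbrs hcnbrs hdeg2 hasnbr)
    · exact absurd (caseA hc' hv1 hv2 hG1 hG2 leafb1 leafb2 ne12 nb12 hasnbr) id
    · exact absurd (caseA hc' hv1 hv2 hG1 hG2 leafb1 leafb2 ne12 nb12 hasnbr) id

end MainForward

section Backward
set_option synthInstance.maxHeartbeats 1000000
set_option synthInstance.maxSize 512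

lemma ts_adj_iff_finset {W : Type*} [DecidableEq W] {G : SimpleGraph W}
    (I J : {I : Finset W // TSVert G 2 I}) :
    (TS G 2).Adj I J ↔ I ≠ J ∧ ∃ u v, (I.1 \ J.1 = {u} ∧ J.1 \ I.1 = {v} ∧ G.Adj u v) := by
  rw [ts_adj_iff]
  refine and_congr_right fun _ => ?_
  simp only [← Finset.coe_sdiff, Finset.coe_eq_singleton]

def myF : Fin 6 → Fin 6 → Prop := fun a b =>
  (a, b) ∈ ([(0,1),(1,0),(0,2),(2,0),(0,3),(3,0),(3,4),(4,3),(1,3),(3,1),(4,5),(5,4)] :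
    List (Fin 6 × Fin 6))

instance : DecidableRel myF := fun a b => List.instDecidableMemOfLawfulBEq _ _

lemma myF_symm : ∀ x y : Fin 6, myF x y → myF y x := by decide

def myG : SimpleGraph (Fin 6) where
  Adj a b := a ≠ b ∧ ¬ myF a b
  symm := ⟨fun a b h => ⟨Ne.symm h.1, fun hf => h.2 (myF_symm _ _ hf)⟩⟩
  loopless := ⟨fun a h => h.1 rfl⟩

instance : DecidableRel myG.Adj := fun a b => decidable_of_iff (a ≠ b ∧ ¬ myF a b) Iff.rfl

instance : DecidablePred (TSVert myG 2) := fun I =>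
  decidable_of_iff (I.card = 2 ∧ ∀ u ∈ I, ∀ v ∈ I, ¬ myG.Adj u v) Iff.rfl

instance : DecidableRel (D 1 3 2).Adj := fun a b =>
  decidable_of_iff _ (SimpleGraph.fromRel_adj _ a b).symm

instance : DecidableRel (TS myG 2).Adj := fun I J =>
  decidable_of_iff _ (ts_adj_iff_finset I J).symm

def fwd : Fin 1 ⊕ Fin 3 ⊕ Fin 2 → {I : Finset (Fin 6) // TSVert myG 2 I} :=
  Sum.elim (fun _ => ⟨{0, 1}, by decide⟩)
    (Sum.elim
      (![⟨{0, 2}, by decide⟩, ⟨{0, 3}, by decide⟩, ⟨{3, 4}, by decide⟩])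
      (![⟨{4, 5}, by decide⟩, ⟨{1, 3}, by decide⟩]))

lemma fwd_bij : Function.Bijective fwd := by decide

lemma fwd_adj : ∀ a b, (TS myG 2).Adj (fwd a) (fwd b) ↔ (D 1 3 2).Adj a b := by decide

noncomputable def myIso : (D 1 3 2) ≃g (TS myG 2) where
  toEquiv := Equiv.ofBijective fwd fwd_bij
  map_rel_iff' := by
    intro a b
    exact fwd_adj a b

end Backward

theorem stmt17 (n : ℕ) (hn : 1 ≤ n) :
    (∃ (W : Type) (G : SimpleGraph W), Nonempty (TS G 2 ≃g D 1 n 2)) ↔ n = 3 := by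
  constructor
  · rintro ⟨W, G, ⟨e⟩⟩
    exact forward_dir hn G e
  · rintro rfl
    exact ⟨Fin 6, myG, ⟨myIso.symm⟩⟩
end

section
/- For 1 ≤ r ≤ s and k ≥ 2, the double star D_{r,2,s} (an edge p_1p_2 with r leaves attached to p_1 and s leaves attached to p_2) is isomorphic to TS_k(G) for some graph G if and only if s ≤ k − 1. -/
open SimpleGraph

section Helpers

variable {α : Type*}

lemma mem_iff_of_diffs {A B : Set α} {x y : α} (h1 : A \ B = {x}) (h2 : B \ A = {y}) :
    ∀ z, z ∈ B ↔ (z ∈ A ∧ z ≠ x) ∨ z = y := by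
  intro z
  constructor
  · intro hz
    by_cases hzA : z ∈ A
    · left
      refine ⟨hzA, fun hzx => ?_⟩
      have hx : x ∈ A \ B := h1 ▸ rfl
      exact hx.2 (hzx ▸ hz)
    · right
      have : z ∈ B \ A := ⟨hz, hzA⟩
      rwa [h2] at this
  · rintro (⟨hzA, hzx⟩ | hzy)
    · by_contra hzB
      have : z ∈ A \ B := ⟨hzA, hzB⟩
      rw [h1] at this
      exact hzx this
    · have hy : y ∈ B \ A := h2 ▸ Set.mem_singleton y
      exact hzy ▸ hy.1

lemma TS_adj_iff {W : Type*} (G : SimpleGraph W) (k : ℕ) (I J : {I : Finset W // TSVert G k I}) :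
    (TS G k).Adj I J ↔ I ≠ J ∧ ∃ x y, ((I : Finset W) : Set W) \ ((J : Finset W) : Set W) = {x} ∧
      ((J : Finset W) : Set W) \ ((I : Finset W) : Set W) = {y} ∧ G.Adj x y := by
  rw [TS, SimpleGraph.fromRel_adj]
  constructor
  · rintro ⟨hne, (h | ⟨x, y, h1, h2, h3⟩)⟩
    · exact ⟨hne, h⟩
    · exact ⟨hne, y, x, h2, h1, h3.symm⟩
  · rintro ⟨hne, h⟩
    exact ⟨hne, Or.inl h⟩

end Helpers
section Forward

variable {r s : ℕ}

lemma D_p1p2 : (D r 2 s).Adj (Sum.inr (Sum.inl 0)) (Sum.inr (Sum.inl 1)) := by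
  rw [D, SimpleGraph.fromRel_adj]
  refine ⟨by simp, Or.inl (Or.inl ⟨0, 1, rfl, rfl, rfl⟩)⟩

lemma D_p2q (j : Fin s) : (D r 2 s).Adj (Sum.inr (Sum.inl 1)) (Sum.inr (Sum.inr j)) := by
  rw [D, SimpleGraph.fromRel_adj]
  exact ⟨by simp, Or.inr (Or.inr (Or.inr ⟨j, 1, rfl, rfl, rfl⟩))⟩

lemma D_p1l (i : Fin r) : (D r 2 s).Adj (Sum.inr (Sum.inl 0)) (Sum.inl i) := by
  rw [D, SimpleGraph.fromRel_adj]
  exact ⟨by simp, Or.inr (Or.inr (Or.inl ⟨i, 0, rfl, rfl, rfl⟩))⟩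

lemma D_not_qq (j j' : Fin s) : ¬ (D r 2 s).Adj (Sum.inr (Sum.inr j)) (Sum.inr (Sum.inr j')) := by
  rw [D, SimpleGraph.fromRel_adj]
  rintro ⟨-, (⟨i,j2,h1,h2,h3⟩|⟨u,i,h1,h2,h3⟩|⟨v,i,h1,h2,h3⟩)|(⟨i,j2,h1,h2,h3⟩|⟨u,i,h1,h2,h3⟩|⟨v,i,h1,h2,h3⟩)⟩ <;> simp_all

lemma D_not_qp1 (j : Fin s) : ¬ (D r 2 s).Adj (Sum.inr (Sum.inr j)) (Sum.inr (Sum.inl 0)) := by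
  rw [D, SimpleGraph.fromRel_adj]
  rintro ⟨-, (⟨i,j2,h1,h2,h3⟩|⟨u,i,h1,h2,h3⟩|⟨v,i,h1,h2,h3⟩)|(⟨i,j2,h1,h2,h3⟩|⟨u,i,h1,h2,h3⟩|⟨v,i,h1,h2,h3⟩)⟩ <;> simp_all
  omega

lemma D_not_ll (i i' : Fin r) : ¬ (D r 2 s).Adj (Sum.inl i) (Sum.inl i') := by
  rw [D, SimpleGraph.fromRel_adj]
  rintro ⟨-, (⟨a,b,h1,h2,h3⟩|⟨a,b,h1,h2,h3⟩|⟨a,b,h1,h2,h3⟩)|(⟨a,b,h1,h2,h3⟩|⟨a,b,h1,h2,h3⟩|⟨a,b,h1,h2,h3⟩)⟩ <;> simp_all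

lemma D_not_lp2 (i : Fin r) : ¬ (D r 2 s).Adj (Sum.inl i) (Sum.inr (Sum.inl 1)) := by
  rw [D, SimpleGraph.fromRel_adj]
  rintro ⟨-, (⟨a,b,h1,h2,h3⟩|⟨a,b,h1,h2,h3⟩|⟨a,b,h1,h2,h3⟩)|(⟨a,b,h1,h2,h3⟩|⟨a,b,h1,h2,h3⟩|⟨a,b,h1,h2,h3⟩)⟩ <;> simp_all <;> omega

lemma D_not_lq (i : Fin r) (j : Fin s) : ¬ (D r 2 s).Adj (Sum.inl i) (Sum.inr (Sum.inr j)) := by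
  rw [D, SimpleGraph.fromRel_adj]
  rintro ⟨-, (⟨a,b,h1,h2,h3⟩|⟨a,b,h1,h2,h3⟩|⟨a,b,h1,h2,h3⟩)|(⟨a,b,h1,h2,h3⟩|⟨a,b,h1,h2,h3⟩|⟨a,b,h1,h2,h3⟩)⟩ <;> simp_all

lemma forward {W : Type} (G : SimpleGraph W) (k : ℕ) (hk : 2 ≤ k)
    (f : TS G k ≃g D r 2 s) : s + 1 ≤ k := by
  classical
  set vD : Option (Fin s) → Fin r ⊕ Fin 2 ⊕ Fin s :=
    fun o => o.elim (Sum.inr (Sum.inl 0)) (fun j => Sum.inr (Sum.inr j)) with hvD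
  have hvD_inj : Function.Injective vD := by
    rintro (_ | j) (_ | j') h
    · rfl
    · exact absurd (Sum.inr_injective h) (by simp)
    · exact absurd (Sum.inr_injective h) (by simp)
    · exact congrArg some (Sum.inr_injective (Sum.inr_injective h))
  have hadjD : ∀ o, (D r 2 s).Adj (Sum.inr (Sum.inl 1)) (vD o) := by
    rintro (_ | j)
    · exact D_p1p2.symm
    · exact D_p2q j
  have hnadjD : ∀ o o', o ≠ o' → ¬ (D r 2 s).Adj (vD o) (vD o') := by
    rintro (_ | j) (_ | j') hne
    · exact absurd rfl hne
    · exact fun h => D_not_qp1 j' h.symm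
    · exact D_not_qp1 j
    · exact D_not_qq j j'
  set I2v : {I : Finset W // TSVert G k I} := f.symm (Sum.inr (Sum.inl 1)) with hI2v
  set I2 : Finset W := (I2v : Finset W) with hI2def
  have hI2card : I2.card = k := (I2v.2).1
  have hI2ind := (I2v.2).2
  set N : Option (Fin s) → {I : Finset W // TSVert G k I} := fun o => f.symm (vD o) with hN
  have hadj : ∀ o, (TS G k).Adj I2v (N o) := fun o => f.symm.map_rel_iff.mpr (hadjD o)
  have h' : ∀ o, ∃ x y : W, ((I2 : Set W) \ ((N o : Finset W) : Set W) = {x}) ∧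
      (((N o : Finset W) : Set W) \ (I2 : Set W) = {y}) ∧ G.Adj x y := by
    intro o
    obtain ⟨-, x, y, h1, h2, h3⟩ := (TS_adj_iff G k I2v (N o)).mp (hadj o)
    exact ⟨x, y, h1, h2, h3⟩
  choose x y hd1 hd2 hd3 using h'
  have hmem : ∀ o z, z ∈ (N o : Finset W) ↔ (z ∈ I2 ∧ z ≠ x o) ∨ z = y o := by
    intro o z
    have := mem_iff_of_diffs (hd1 o) (hd2 o) z
    simpa using this
  have hxI2 : ∀ o, x o ∈ I2 := by
    intro o
    have : x o ∈ (I2 : Set W) \ ((N o : Finset W) : Set W) := (hd1 o) ▸ Set.mem_singleton _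
    simpa using this.1
  have hyN : ∀ o, y o ∈ (N o : Finset W) := by
    intro o
    have : y o ∈ ((N o : Finset W) : Set W) \ (I2 : Set W) := (hd2 o) ▸ Set.mem_singleton _
    simpa using this.1
  have hynI2 : ∀ o, y o ∉ I2 := by
    intro o
    have : y o ∈ ((N o : Finset W) : Set W) \ (I2 : Set W) := (hd2 o) ▸ Set.mem_singleton _
    simpa using this.2
  have hN_inj : ∀ o o', N o = N o' → o = o' := fun o o' h => hvD_inj (f.symm.injective h)
  have hyU : ∀ o, y o = y none → o = none := by
    intro o hy
    have hAdj : G.Adj (x none) (y none) := hd3 none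
    have hx : x o = x none := by
      by_contra hxx
      have h1 : x none ∈ (N o : Finset W) :=
        (hmem o _).mpr (Or.inl ⟨hxI2 none, fun h => hxx h.symm⟩)
      have h2 : y none ∈ (N o : Finset W) := hy ▸ hyN o
      exact (N o).2.2 _ h1 _ h2 hAdj
    refine hN_inj o none (Subtype.ext ?_)
    ext z
    rw [hmem o z, hmem none z, hx, hy]
  have key : ∀ o o', o ≠ o' → x o = x o' → o' ≠ none → False := by
    intro o o' hoo hxx ho'
    have hNne : N o ≠ N o' := fun h => hoo (hN_inj _ _ h)
    have hyy : y o ≠ y o' := by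
      intro h
      apply hNne
      apply Subtype.ext
      ext z
      rw [hmem o z, hmem o' z, hxx, h]
    have hdno : ((N o : Finset W) : Set W) \ ((N o' : Finset W) : Set W) = {y o} := by
      ext z
      simp only [Set.mem_diff, Finset.mem_coe, hmem o z, hmem o' z, Set.mem_singleton_iff]
      constructor
      · rintro ⟨(⟨hzI, hzx⟩ | rfl), hz2⟩
        · exact absurd (Or.inl ⟨hzI, fun h => hzx (h.trans hxx.symm)⟩) hz2
        · rfl
      · rintro rfl
        refine ⟨Or.inr rfl, ?_⟩
        rintro (⟨hzI, -⟩ | h)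
        · exact (hynI2 o) hzI
        · exact hyy h
    have hdno' : ((N o' : Finset W) : Set W) \ ((N o : Finset W) : Set W) = {y o'} := by
      ext z
      simp only [Set.mem_diff, Finset.mem_coe, hmem o z, hmem o' z, Set.mem_singleton_iff]
      constructor
      · rintro ⟨(⟨hzI, hzx⟩ | rfl), hz2⟩
        · exact absurd (Or.inl ⟨hzI, fun h => hzx (h.trans hxx)⟩) hz2
        · rfl
      · rintro rfl
        refine ⟨Or.inr rfl, ?_⟩
        rintro (⟨hzI, -⟩ | h)
        · exact (hynI2 o') hzI
        · exact hyy h.symm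
    have hnadj : ¬ G.Adj (y o) (y o') := by
      intro h
      have hts : (TS G k).Adj (N o) (N o') :=
        (TS_adj_iff _ _ _ _).mpr ⟨hNne, y o, y o', hdno, hdno', h⟩
      exact hnadjD o o' hoo (f.symm.map_rel_iff.mp hts)
    have hxx' : ∀ z : W, z ≠ x o → z ≠ x o' := fun z h h2 => h (h2.trans hxx.symm)
    have hwne : (I2.erase (x o)).Nonempty := by
      rw [← Finset.card_pos, Finset.card_erase_of_mem (hxI2 o), hI2card]
      omega
    obtain ⟨w, hwmem⟩ := hwne
    have hwI2 : w ∈ I2 := Finset.mem_of_mem_erase hwmem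
    have hwx : w ≠ x o := Finset.ne_of_mem_erase hwmem
    set T : Finset W := insert (y o) (insert (y o') ((I2.erase (x o)).erase w)) with hT
    have hmemT : ∀ z, z ∈ T ↔ z = y o ∨ z = y o' ∨ (z ∈ I2 ∧ z ≠ x o ∧ z ≠ w) := by
      intro z
      simp only [hT, Finset.mem_insert, Finset.mem_erase]
      tauto
    have hyo'I2 := hynI2 o'
    have hyoI2 := hynI2 o
    have hTcard : T.card = k := by
      rw [hT, Finset.card_insert_of_notMem, Finset.card_insert_of_notMem,
        Finset.card_erase_of_mem hwmem, Finset.card_erase_of_mem (hxI2 o), hI2card]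
      · omega
      · intro h
        exact hyo'I2 (Finset.mem_of_mem_erase (Finset.mem_of_mem_erase h))
      · intro h
        rcases Finset.mem_insert.mp h with h | h
        · exact hyy h
        · exact hyoI2 (Finset.mem_of_mem_erase (Finset.mem_of_mem_erase h))
    have hsubN : ∀ o'' z, z ∈ I2 → z ≠ x o'' → z ∈ (N o'' : Finset W) :=
      fun o'' z h1 h2 => (hmem o'' z).mpr (Or.inl ⟨h1, h2⟩)
    have hTind : ∀ a ∈ T, ∀ b ∈ T, ¬ G.Adj a b := by
      intro a ha b hb hab
      rcases (hmemT a).mp ha with rfl | rfl | ⟨haI, hax, -⟩ <;>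
        rcases (hmemT b).mp hb with hb' | hb' | ⟨hbI, hbx, -⟩
      · exact G.loopless.irrefl _ (hb' ▸ hab)
      · exact hnadj (hb' ▸ hab)
      · exact (N o).2.2 _ (hyN o) _ (hsubN o b hbI hbx) hab
      · exact hnadj ((hb' ▸ hab).symm)
      · exact G.loopless.irrefl _ (hb' ▸ hab)
      · exact (N o').2.2 _ (hyN o') _ (hsubN o' b hbI (hxx' b hbx)) hab
      · exact (N o).2.2 _ (hsubN o a haI hax) _ (hb' ▸ hyN o) (hb' ▸ hab)
      · exact (N o').2.2 _ (hsubN o' a haI (hxx' a hax)) _ (hb' ▸ hyN o') (hb' ▸ hab)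
      · exact hI2ind _ haI _ hbI hab
    set t : {I : Finset W // TSVert G k I} := ⟨T, hTcard, hTind⟩ with ht
    have hyo'nI1 : y o' ∉ (N none : Finset W) := by
      intro h
      rcases (hmem none _).mp h with ⟨h1, -⟩ | h1
      · exact hyo'I2 h1
      · exact ho' (hyU o' h1)
    have hyoT : y o ∈ T := (hmemT _).mpr (Or.inl rfl)
    have hyo'T : y o' ∈ T := (hmemT _).mpr (Or.inr (Or.inl rfl))
    rcases hft : f t with m | i2 | j2
    · -- f t = leaf of p1
      have hteq : t = f.symm (Sum.inl m) := by rw [← hft, RelIso.symm_apply_apply]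
      have hadj1 : (TS G k).Adj t (N none) := by
        rw [hteq]
        exact f.symm.map_rel_iff.mpr (D_p1l m).symm
      obtain ⟨-, a, b, ha1, hb1, hab⟩ := (TS_adj_iff _ _ _ _).mp hadj1
      have hya : y o' = a := by
        have hmm : y o' ∈ ((t : Finset W) : Set W) \ ((N none : Finset W) : Set W) :=
          ⟨by simpa using hyo'T, by simpa using hyo'nI1⟩
        rwa [ha1] at hmm
      cases o with
      | some j =>
        have hyonI1 : y (some j) ∉ (N none : Finset W) := by
          intro h
          rcases (hmem none _).mp h with ⟨h1, -⟩ | h1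
          · exact hyoI2 h1
          · exact (by simp : (some j : Option (Fin s)) ≠ none) (hyU _ h1)
        have hya2 : y (some j) = a := by
          have hmm : y (some j) ∈ ((t : Finset W) : Set W) \ ((N none : Finset W) : Set W) :=
            ⟨by simpa using hyoT, by simpa using hyonI1⟩
          rwa [ha1] at hmm
        exact hyy (hya2.trans hya.symm)
      | none =>
        have hwI1 : w ∈ (N none : Finset W) := hsubN none w hwI2 hwx
        have hwT : w ∉ T := by
          intro h
          rcases (hmemT w).mp h with h | h | ⟨-, -, h⟩
          · exact hyoI2 (h ▸ hwI2)
          · exact hyo'I2 (h ▸ hwI2)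
          · exact h rfl
        have hwb : w = b := by
          have hmm : w ∈ ((N none : Finset W) : Set W) \ ((t : Finset W) : Set W) :=
            ⟨by simpa using hwI1, by simpa using hwT⟩
          rwa [hb1] at hmm
        rw [← hya, ← hwb] at hab
        exact (N o').2.2 _ (hyN o') _ (hsubN o' w hwI2 (hxx' w hwx)) hab
    · -- f t = a center
      have h01 : i2 = 0 ∨ i2 = 1 := by
        rcases i2 with ⟨iv, hiv⟩
        interval_cases iv
        · exact Or.inl rfl
        · exact Or.inr rfl
      rcases h01 with rfl | rfl
      · have hteq : t = N none := by
          rw [hN]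
          show t = f.symm (Sum.inr (Sum.inl 0))
          rw [← hft, RelIso.symm_apply_apply]
        have : y o' ∈ (N none : Finset W) := by
          rw [← hteq]
          exact hyo'T
        exact hyo'nI1 this
      · have hteq : t = I2v := by
          rw [hI2v]
          rw [← hft, RelIso.symm_apply_apply]
        have : y o ∈ I2 := by
          rw [hI2def, ← hteq]
          exact hyoT
        exact hyoI2 this
    · -- f t = leaf of p2
      have hteq : t = f.symm (Sum.inr (Sum.inr j2)) := by rw [← hft, RelIso.symm_apply_apply]
      have hadj2 : (TS G k).Adj t I2v := by
        rw [hteq]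
        exact f.symm.map_rel_iff.mpr (D_p2q j2).symm
      obtain ⟨-, a, b, ha1, hb1, hab⟩ := (TS_adj_iff _ _ _ _).mp hadj2
      have hya : y o = a := by
        have hmm : y o ∈ ((t : Finset W) : Set W) \ ((I2v : Finset W) : Set W) :=
          ⟨by simpa using hyoT, by simpa using hyoI2⟩
        rwa [ha1] at hmm
      have hya' : y o' = a := by
        have hmm : y o' ∈ ((t : Finset W) : Set W) \ ((I2v : Finset W) : Set W) :=
          ⟨by simpa using hyo'T, by simpa using hyo'I2⟩
        rwa [ha1] at hmm
      exact hyy (hya.trans hya'.symm)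
  have hx_inj : Function.Injective x := by
    intro o o' h
    by_contra hne
    cases o' with
    | some j => exact key o _ hne h (by simp)
    | none =>
      cases o with
      | none => exact hne rfl
      | some j => exact key none (some j) (by simp) h.symm (by simp)
  have himg : Finset.univ.image x ⊆ I2 := by
    intro z hz
    obtain ⟨o, -, rfl⟩ := Finset.mem_image.mp hz
    exact hxI2 o
  have hcard := Finset.card_le_card himg
  rw [Finset.card_image_of_injective _ hx_inj, hI2card] at hcard
  simpa using hcard

end Forward
section Back

abbrev W' (r s m : ℕ) : Type := Fin 2 ⊕ (Fin m ⊕ (Fin s ⊕ Fin r))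

variable (r s m : ℕ)

def uu : W' r s m := Sum.inl 0
def vv : W' r s m := Sum.inl 1
def av (j : Fin m) : W' r s m := Sum.inr (Sum.inl j)
def bv (i : Fin s) : W' r s m := Sum.inr (Sum.inr (Sum.inl i))
def cv (i : Fin r) : W' r s m := Sum.inr (Sum.inr (Sum.inr i))

def GRel : W' r s m → W' r s m → Prop := fun x y =>
  (x = uu r s m ∧ y = vv r s m) ∨
  (∃ j i, x = av r s m j ∧ y = bv r s m i ∧ (j : ℕ) = (i : ℕ)) ∨
  (∃ j i, x = av r s m j ∧ y = cv r s m i ∧ (j : ℕ) = (i : ℕ)) ∨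
  (∃ i, x = uu r s m ∧ y = bv r s m i) ∨
  (∃ i, x = vv r s m ∧ y = cv r s m i) ∨
  ((∃ z, x = Sum.inr (Sum.inr z)) ∧ (∃ z, y = Sum.inr (Sum.inr z)))

def GG : SimpleGraph (W' r s m) := SimpleGraph.fromRel (GRel r s m)

variable {r s m}

lemma G_adj_uv : (GG r s m).Adj (uu r s m) (vv r s m) := by
  rw [GG, SimpleGraph.fromRel_adj]
  exact ⟨by simp [uu, vv], Or.inl (Or.inl ⟨rfl, rfl⟩)⟩

lemma G_adj_ub (i : Fin s) : (GG r s m).Adj (uu r s m) (bv r s m i) := by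
  rw [GG, SimpleGraph.fromRel_adj]
  exact ⟨by simp [uu, bv], Or.inl (Or.inr (Or.inr (Or.inr (Or.inl ⟨i, rfl, rfl⟩))))⟩

lemma G_adj_vc (i : Fin r) : (GG r s m).Adj (vv r s m) (cv r s m i) := by
  rw [GG, SimpleGraph.fromRel_adj]
  exact ⟨by simp [vv, cv], Or.inl (Or.inr (Or.inr (Or.inr (Or.inr (Or.inl ⟨i, rfl, rfl⟩)))))⟩

lemma G_adj_ab (j : Fin m) (i : Fin s) (h : (j : ℕ) = (i : ℕ)) :
    (GG r s m).Adj (av r s m j) (bv r s m i) := by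
  rw [GG, SimpleGraph.fromRel_adj]
  exact ⟨by simp [av, bv], Or.inl (Or.inr (Or.inl ⟨j, i, rfl, rfl, h⟩))⟩

lemma G_adj_ac (j : Fin m) (i : Fin r) (h : (j : ℕ) = (i : ℕ)) :
    (GG r s m).Adj (av r s m j) (cv r s m i) := by
  rw [GG, SimpleGraph.fromRel_adj]
  exact ⟨by simp [av, cv], Or.inl (Or.inr (Or.inr (Or.inl ⟨j, i, rfl, rfl, h⟩)))⟩

lemma G_adj_bb (i i' : Fin s) (h : i ≠ i') : (GG r s m).Adj (bv r s m i) (bv r s m i') := by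
  rw [GG, SimpleGraph.fromRel_adj]
  refine ⟨by simp [bv, h], Or.inl (Or.inr (Or.inr (Or.inr (Or.inr (Or.inr ⟨⟨_, rfl⟩, ⟨_, rfl⟩⟩)))))⟩

lemma G_adj_cc (i i' : Fin r) (h : i ≠ i') : (GG r s m).Adj (cv r s m i) (cv r s m i') := by
  rw [GG, SimpleGraph.fromRel_adj]
  refine ⟨by simp [cv, h], Or.inl (Or.inr (Or.inr (Or.inr (Or.inr (Or.inr ⟨⟨_, rfl⟩, ⟨_, rfl⟩⟩)))))⟩

lemma G_adj_bc (i : Fin s) (i' : Fin r) : (GG r s m).Adj (bv r s m i) (cv r s m i') := by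
  rw [GG, SimpleGraph.fromRel_adj]
  refine ⟨by simp [bv, cv], Or.inl (Or.inr (Or.inr (Or.inr (Or.inr (Or.inr ⟨⟨_, rfl⟩, ⟨_, rfl⟩⟩)))))⟩

lemma G_not_ua (j : Fin m) : ¬ (GG r s m).Adj (uu r s m) (av r s m j) := by
  rw [GG, SimpleGraph.fromRel_adj]
  rintro ⟨-, h | h⟩ <;> simp_all [GRel, uu, vv, av, bv, cv]

lemma G_not_uc (i : Fin r) : ¬ (GG r s m).Adj (uu r s m) (cv r s m i) := by
  rw [GG, SimpleGraph.fromRel_adj]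
  rintro ⟨-, h | h⟩ <;> simp_all [GRel, uu, vv, av, bv, cv]

lemma G_not_va (j : Fin m) : ¬ (GG r s m).Adj (vv r s m) (av r s m j) := by
  rw [GG, SimpleGraph.fromRel_adj]
  rintro ⟨-, h | h⟩ <;> simp_all [GRel, uu, vv, av, bv, cv]

lemma G_not_vb (i : Fin s) : ¬ (GG r s m).Adj (vv r s m) (bv r s m i) := by
  rw [GG, SimpleGraph.fromRel_adj]
  rintro ⟨-, h | h⟩ <;> simp_all [GRel, uu, vv, av, bv, cv]

lemma G_not_aa (j j' : Fin m) : ¬ (GG r s m).Adj (av r s m j) (av r s m j') := by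
  rw [GG, SimpleGraph.fromRel_adj]
  rintro ⟨-, h | h⟩ <;> simp_all [GRel, uu, vv, av, bv, cv]

lemma G_not_ab (j : Fin m) (i : Fin s) (h : (j : ℕ) ≠ (i : ℕ)) :
    ¬ (GG r s m).Adj (av r s m j) (bv r s m i) := by
  rw [GG, SimpleGraph.fromRel_adj]
  rintro ⟨-, h' | h'⟩ <;> simp_all [GRel, uu, vv, av, bv, cv]

lemma G_not_ac (j : Fin m) (i : Fin r) (h : (j : ℕ) ≠ (i : ℕ)) :
    ¬ (GG r s m).Adj (av r s m j) (cv r s m i) := by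
  rw [GG, SimpleGraph.fromRel_adj]
  rintro ⟨-, h' | h'⟩ <;> simp_all [GRel, uu, vv, av, bv, cv]

def AA (r s m : ℕ) : Finset (W' r s m) := Finset.univ.image (av r s m)

lemma av_inj : Function.Injective (av r s m) := by
  intro a b h
  simpa [av] using h

lemma mem_AA {z : W' r s m} : z ∈ AA r s m ↔ ∃ j, z = av r s m j := by
  simp [AA, eq_comm]

lemma AA_card : (AA r s m).card = m := by
  rw [AA, Finset.card_image_of_injective _ av_inj]
  simp

lemma uu_ne_vv : uu r s m ≠ vv r s m := by simp [uu, vv]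
lemma uu_ne_av (j : Fin m) : uu r s m ≠ av r s m j := by simp [uu, av]
lemma uu_ne_bv (i : Fin s) : uu r s m ≠ bv r s m i := by simp [uu, bv]
lemma uu_ne_cv (i : Fin r) : uu r s m ≠ cv r s m i := by simp [uu, cv]
lemma vv_ne_av (j : Fin m) : vv r s m ≠ av r s m j := by simp [vv, av]
lemma vv_ne_bv (i : Fin s) : vv r s m ≠ bv r s m i := by simp [vv, bv]
lemma vv_ne_cv (i : Fin r) : vv r s m ≠ cv r s m i := by simp [vv, cv]
lemma av_ne_bv (j : Fin m) (i : Fin s) : av r s m j ≠ bv r s m i := by simp [av, bv]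
lemma av_ne_cv (j : Fin m) (i : Fin r) : av r s m j ≠ cv r s m i := by simp [av, cv]
lemma bv_ne_cv (i : Fin s) (i' : Fin r) : bv r s m i ≠ cv r s m i' := by simp [bv, cv]
lemma uu_not_mem_AA : uu r s m ∉ AA r s m := by
  rw [mem_AA]; rintro ⟨j, h⟩; exact uu_ne_av j h
lemma vv_not_mem_AA : vv r s m ∉ AA r s m := by
  rw [mem_AA]; rintro ⟨j, h⟩; exact vv_ne_av j h
lemma bv_not_mem_AA (i : Fin s) : bv r s m i ∉ AA r s m := by
  rw [mem_AA]; rintro ⟨j, h⟩; exact av_ne_bv j i h.symm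
lemma cv_not_mem_AA (i : Fin r) : cv r s m i ∉ AA r s m := by
  rw [mem_AA]; rintro ⟨j, h⟩; exact av_ne_cv j i h.symm
lemma av_mem_AA (j : Fin m) : av r s m j ∈ AA r s m := mem_AA.mpr ⟨j, rfl⟩

variable (r s m)

def Φ (hs : s ≤ m) (hr : r ≤ s) : Fin r ⊕ Fin 2 ⊕ Fin s → Finset (W' r s m)
  | Sum.inl i => insert (uu r s m) (insert (cv r s m i)
      ((AA r s m).erase (av r s m (Fin.castLE (hr.trans hs) i))))
  | Sum.inr (Sum.inl t) =>
      if t = 0 then insert (uu r s m) (AA r s m) else insert (vv r s m) (AA r s m)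
  | Sum.inr (Sum.inr i) => insert (vv r s m) (insert (bv r s m i)
      ((AA r s m).erase (av r s m (Fin.castLE hs i))))

variable {r s m}
variable {hs : s ≤ m} {hr : r ≤ s}

lemma mem_Φ_l {i : Fin r} {z : W' r s m} :
    z ∈ Φ r s m hs hr (Sum.inl i) ↔
      z = uu r s m ∨ z = cv r s m i ∨ ∃ j, z = av r s m j ∧ (j : ℕ) ≠ (i : ℕ) := by
  show z ∈ insert _ _ ↔ _
  simp only [Finset.mem_insert, Finset.mem_erase, mem_AA]
  constructor
  · rintro (rfl | rfl | ⟨hne, j, rfl⟩)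
    · exact Or.inl rfl
    · exact Or.inr (Or.inl rfl)
    · refine Or.inr (Or.inr ⟨j, rfl, fun h => hne ?_⟩)
      congr 1
      exact Fin.ext (by simpa using h)
  · rintro (rfl | rfl | ⟨j, rfl, hj⟩)
    · exact Or.inl rfl
    · exact Or.inr (Or.inl rfl)
    · refine Or.inr (Or.inr ⟨fun h => hj ?_, j, rfl⟩)
      have := av_inj h
      simpa using congrArg (Fin.val) this
  
lemma mem_Φ_q {i : Fin s} {z : W' r s m} :
    z ∈ Φ r s m hs hr (Sum.inr (Sum.inr i)) ↔
      z = vv r s m ∨ z = bv r s m i ∨ ∃ j, z = av r s m j ∧ (j : ℕ) ≠ (i : ℕ) := by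
  show z ∈ insert _ _ ↔ _
  simp only [Finset.mem_insert, Finset.mem_erase, mem_AA]
  constructor
  · rintro (rfl | rfl | ⟨hne, j, rfl⟩)
    · exact Or.inl rfl
    · exact Or.inr (Or.inl rfl)
    · refine Or.inr (Or.inr ⟨j, rfl, fun h => hne ?_⟩)
      congr 1
      exact Fin.ext (by simpa using h)
  · rintro (rfl | rfl | ⟨j, rfl, hj⟩)
    · exact Or.inl rfl
    · exact Or.inr (Or.inl rfl)
    · refine Or.inr (Or.inr ⟨fun h => hj ?_, j, rfl⟩)
      have := av_inj h
      simpa using congrArg (Fin.val) this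

lemma mem_Φ_p1 {z : W' r s m} :
    z ∈ Φ r s m hs hr (Sum.inr (Sum.inl 0)) ↔ z = uu r s m ∨ ∃ j, z = av r s m j := by
  simp only [Φ, if_true, eq_self_iff_true]
  simp only [Finset.mem_insert, mem_AA]

lemma mem_Φ_p2 {z : W' r s m} :
    z ∈ Φ r s m hs hr (Sum.inr (Sum.inl 1)) ↔ z = vv r s m ∨ ∃ j, z = av r s m j := by
  simp only [Φ, show ((1 : Fin 2) = 0) = False by simp, if_false]
  simp only [Finset.mem_insert, mem_AA]

lemma Φ_card (hm : 1 ≤ m) (z : Fin r ⊕ Fin 2 ⊕ Fin s) : (Φ r s m hs hr z).card = m + 1 := by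
  rcases z with i | t | i
  · simp only [Φ]
    rw [Finset.card_insert_of_notMem, Finset.card_insert_of_notMem,
      Finset.card_erase_of_mem (av_mem_AA _), AA_card]
    · omega
    · intro h
      exact cv_not_mem_AA i (Finset.mem_of_mem_erase h)
    · intro h
      rcases Finset.mem_insert.mp h with h | h
      · exact uu_ne_cv i h
      · exact uu_not_mem_AA (Finset.mem_of_mem_erase h)
  · have h01 : t = 0 ∨ t = 1 := by
      rcases t with ⟨tv, htv⟩
      interval_cases tv
      exacts [Or.inl rfl, Or.inr rfl]
    rcases h01 with rfl | rfl
    · simp only [Φ, if_true, eq_self_iff_true]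
      rw [Finset.card_insert_of_notMem uu_not_mem_AA, AA_card]
    · simp only [Φ, show ((1 : Fin 2) = 0) = False by simp, if_false]
      rw [Finset.card_insert_of_notMem vv_not_mem_AA, AA_card]
  · simp only [Φ]
    rw [Finset.card_insert_of_notMem, Finset.card_insert_of_notMem,
      Finset.card_erase_of_mem (av_mem_AA _), AA_card]
    · omega
    · intro h
      exact bv_not_mem_AA i (Finset.mem_of_mem_erase h)
    · intro h
      rcases Finset.mem_insert.mp h with h | h
      · exact vv_ne_bv i h
      · exact vv_not_mem_AA (Finset.mem_of_mem_erase h)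

lemma Φ_indep (z : Fin r ⊕ Fin 2 ⊕ Fin s) :
    ∀ a ∈ Φ r s m hs hr z, ∀ b ∈ Φ r s m hs hr z, ¬ (GG r s m).Adj a b := by
  rcases z with i | t | i
  · intro a ha b hb
    rcases (mem_Φ_l (hs := hs) (hr := hr)).mp ha with rfl | rfl | ⟨j, rfl, hj⟩ <;>
      rcases (mem_Φ_l (hs := hs) (hr := hr)).mp hb with rfl | rfl | ⟨j', rfl, hj'⟩
    · exact (GG r s m).loopless.irrefl _
    · exact G_not_uc i
    · exact G_not_ua j'
    · exact fun h => G_not_uc i h.symm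
    · exact (GG r s m).loopless.irrefl _
    · exact fun h => G_not_ac j' i (fun h' => hj' h') h.symm
    · exact fun h => G_not_ua j h.symm
    · exact G_not_ac j i hj
    · exact G_not_aa j j'
  · have h01 : t = 0 ∨ t = 1 := by
      rcases t with ⟨tv, htv⟩
      interval_cases tv
      exacts [Or.inl rfl, Or.inr rfl]
    rcases h01 with rfl | rfl
    · intro a ha b hb
      rcases (mem_Φ_p1 (hs := hs) (hr := hr)).mp ha with rfl | ⟨j, rfl⟩ <;> rcases (mem_Φ_p1 (hs := hs) (hr := hr)).mp hb with rfl | ⟨j', rfl⟩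
      · exact (GG r s m).loopless.irrefl _
      · exact G_not_ua j'
      · exact fun h => G_not_ua j h.symm
      · exact G_not_aa j j'
    · intro a ha b hb
      rcases (mem_Φ_p2 (hs := hs) (hr := hr)).mp ha with rfl | ⟨j, rfl⟩ <;> rcases (mem_Φ_p2 (hs := hs) (hr := hr)).mp hb with rfl | ⟨j', rfl⟩
      · exact (GG r s m).loopless.irrefl _
      · exact G_not_va j'
      · exact fun h => G_not_va j h.symm
      · exact G_not_aa j j'
  · intro a ha b hb
    rcases (mem_Φ_q (hs := hs) (hr := hr)).mp ha with rfl | rfl | ⟨j, rfl, hj⟩ <;>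
      rcases (mem_Φ_q (hs := hs) (hr := hr)).mp hb with rfl | rfl | ⟨j', rfl, hj'⟩
    · exact (GG r s m).loopless.irrefl _
    · exact G_not_vb i
    · exact G_not_va j'
    · exact fun h => G_not_vb i h.symm
    · exact (GG r s m).loopless.irrefl _
    · exact fun h => G_not_ab j' i (fun h' => hj' h') h.symm
    · exact fun h => G_not_va j h.symm
    · exact G_not_ab j i hj
    · exact G_not_aa j j'

lemma Φ_vert (hm : 1 ≤ m) (z : Fin r ⊕ Fin 2 ⊕ Fin s) :
    TSVert (GG r s m) (m + 1) (Φ r s m hs hr z) :=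
  ⟨(Φ_card (hs := hs) (hr := hr)) hm z, (Φ_indep (hs := hs) (hr := hr)) z⟩

lemma fin2_cases (t : Fin 2) : t = 0 ∨ t = 1 := by
  rcases t with ⟨tv, htv⟩
  interval_cases tv
  exacts [Or.inl rfl, Or.inr rfl]

lemma Φ_inj : Function.Injective (Φ r s m hs hr) := by
  intro z z' h
  rcases z with i | t | i <;> rcases z' with i' | t' | i'
  · -- l l
    have hm := (mem_Φ_l (hs := hs) (hr := hr)).mp (h ▸ (mem_Φ_l (hs := hs) (hr := hr)).mpr (Or.inr (Or.inl rfl)))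
    rcases hm with h1 | h1 | ⟨j, h1, -⟩
    · exact absurd h1.symm (uu_ne_cv i)
    · have : i = i' := by simpa [cv] using h1
      exact congrArg Sum.inl this
    · exact absurd h1.symm (av_ne_cv j i)
  · -- l p
    exfalso
    rcases fin2_cases t' with rfl | rfl
    · rcases (mem_Φ_p1 (hs := hs) (hr := hr)).mp (h ▸ (mem_Φ_l (hs := hs) (hr := hr)).mpr (Or.inr (Or.inl rfl))) with h1 | ⟨j, h1⟩
      · exact uu_ne_cv i h1.symm
      · exact av_ne_cv j i h1.symm
    · rcases (mem_Φ_p2 (hs := hs) (hr := hr)).mp (h ▸ (mem_Φ_l (hs := hs) (hr := hr)).mpr (Or.inr (Or.inl rfl))) with h1 | ⟨j, h1⟩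
      · exact vv_ne_cv i h1.symm
      · exact av_ne_cv j i h1.symm
  · -- l q
    exfalso
    rcases (mem_Φ_l (hs := hs) (hr := hr)).mp (h.symm ▸ (mem_Φ_q (hs := hs) (hr := hr)).mpr (Or.inl rfl)) with h1 | h1 | ⟨j, h1, -⟩
    · exact uu_ne_vv h1.symm
    · exact vv_ne_cv i h1
    · exact vv_ne_av j h1
  · -- p l
    exfalso
    rcases fin2_cases t with rfl | rfl
    · rcases (mem_Φ_p1 (hs := hs) (hr := hr)).mp (h.symm ▸ (mem_Φ_l (hs := hs) (hr := hr)).mpr (Or.inr (Or.inl rfl))) with h1 | ⟨j, h1⟩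
      · exact uu_ne_cv i' h1.symm
      · exact av_ne_cv j i' h1.symm
    · rcases (mem_Φ_p2 (hs := hs) (hr := hr)).mp (h.symm ▸ (mem_Φ_l (hs := hs) (hr := hr)).mpr (Or.inr (Or.inl rfl))) with h1 | ⟨j, h1⟩
      · exact vv_ne_cv i' h1.symm
      · exact av_ne_cv j i' h1.symm
  · -- p p
    rcases fin2_cases t with rfl | rfl <;> rcases fin2_cases t' with rfl | rfl
    · rfl
    · exfalso
      rcases (mem_Φ_p2 (hs := hs) (hr := hr)).mp (h ▸ (mem_Φ_p1 (hs := hs) (hr := hr)).mpr (Or.inl rfl)) with h1 | ⟨j, h1⟩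
      · exact uu_ne_vv h1
      · exact uu_ne_av j h1
    · exfalso
      rcases (mem_Φ_p1 (hs := hs) (hr := hr)).mp (h ▸ (mem_Φ_p2 (hs := hs) (hr := hr)).mpr (Or.inl rfl)) with h1 | ⟨j, h1⟩
      · exact uu_ne_vv h1.symm
      · exact vv_ne_av j h1
    · rfl
  · -- p q
    exfalso
    rcases fin2_cases t with rfl | rfl
    · rcases (mem_Φ_p1 (hs := hs) (hr := hr)).mp (h.symm ▸ (mem_Φ_q (hs := hs) (hr := hr)).mpr (Or.inr (Or.inl rfl))) with h1 | ⟨j, h1⟩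
      · exact uu_ne_bv i' h1.symm
      · exact av_ne_bv j i' h1.symm
    · rcases (mem_Φ_p2 (hs := hs) (hr := hr)).mp (h.symm ▸ (mem_Φ_q (hs := hs) (hr := hr)).mpr (Or.inr (Or.inl rfl))) with h1 | ⟨j, h1⟩
      · exact vv_ne_bv i' h1.symm
      · exact av_ne_bv j i' h1.symm
  · -- q l
    exfalso
    rcases (mem_Φ_l (hs := hs) (hr := hr)).mp (h ▸ (mem_Φ_q (hs := hs) (hr := hr)).mpr (Or.inl rfl)) with h1 | h1 | ⟨j, h1, -⟩
    · exact uu_ne_vv h1.symm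
    · exact vv_ne_cv i' h1
    · exact vv_ne_av j h1
  · -- q p
    exfalso
    rcases fin2_cases t' with rfl | rfl
    · rcases (mem_Φ_p1 (hs := hs) (hr := hr)).mp (h ▸ (mem_Φ_q (hs := hs) (hr := hr)).mpr (Or.inr (Or.inl rfl))) with h1 | ⟨j, h1⟩
      · exact uu_ne_bv i h1.symm
      · exact av_ne_bv j i h1.symm
    · rcases (mem_Φ_p2 (hs := hs) (hr := hr)).mp (h ▸ (mem_Φ_q (hs := hs) (hr := hr)).mpr (Or.inr (Or.inl rfl))) with h1 | ⟨j, h1⟩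
      · exact vv_ne_bv i h1.symm
      · exact av_ne_bv j i h1.symm
  · -- q q
    have hm := (mem_Φ_q (hs := hs) (hr := hr)).mp (h ▸ (mem_Φ_q (hs := hs) (hr := hr)).mpr (Or.inr (Or.inl rfl)))
    rcases hm with h1 | h1 | ⟨j, h1, -⟩
    · exact absurd h1.symm (vv_ne_bv i)
    · have : i = i' := by simpa [bv] using h1
      exact congrArg (fun x => Sum.inr (Sum.inr x)) this
    · exact absurd h1.symm (av_ne_bv j i)

lemma Φ_surj (hm : 1 ≤ m) (I : Finset (W' r s m)) (hcard : I.card = m + 1)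
    (hind : ∀ a ∈ I, ∀ b ∈ I, ¬ (GG r s m).Adj a b) :
    ∃ z, I = Φ r s m hs hr z := by
  by_cases hu : uu r s m ∈ I
  · have hv : vv r s m ∉ I := fun hv => hind _ hu _ hv G_adj_uv
    have hb : ∀ i, bv r s m i ∉ I := fun i hbi => hind _ hu _ hbi (G_adj_ub i)
    by_cases hc : ∃ i, cv r s m i ∈ I
    · obtain ⟨i, hci⟩ := hc
      have hai : av r s m (Fin.castLE (hr.trans hs) i) ∉ I :=
        fun ha => hind _ ha _ hci (G_adj_ac _ i (by simp))
      have hcc : ∀ i', i' ≠ i → cv r s m i' ∉ I :=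
        fun i' hne hci' => hind _ hci' _ hci (G_adj_cc i' i hne)
      refine ⟨Sum.inl i, Finset.eq_of_subset_of_card_le ?_ (by rw [(Φ_card (hs := hs) (hr := hr)) hm, hcard])⟩
      intro z hz
      rcases z with t | j | i' | i'
      · rcases fin2_cases t with rfl | rfl
        · exact (mem_Φ_l (hs := hs) (hr := hr)).mpr (Or.inl rfl)
        · exact absurd hz hv
      · refine (mem_Φ_l (hs := hs) (hr := hr)).mpr (Or.inr (Or.inr ⟨j, rfl, fun hj => ?_⟩))
        have : j = Fin.castLE (hr.trans hs) i := Fin.ext (by simpa using hj)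
        exact hai (this ▸ hz)
      · exact absurd hz (hb i')
      · by_cases hii : i' = i
        · exact (mem_Φ_l (hs := hs) (hr := hr)).mpr (Or.inr (Or.inl (by rw [hii]; rfl)))
        · exact absurd hz (hcc i' hii)
    · push_neg at hc
      refine ⟨Sum.inr (Sum.inl 0), Finset.eq_of_subset_of_card_le ?_ (by rw [(Φ_card (hs := hs) (hr := hr)) hm, hcard])⟩
      intro z hz
      rcases z with t | j | i' | i'
      · rcases fin2_cases t with rfl | rfl
        · exact (mem_Φ_p1 (hs := hs) (hr := hr)).mpr (Or.inl rfl)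
        · exact absurd hz hv
      · exact (mem_Φ_p1 (hs := hs) (hr := hr)).mpr (Or.inr ⟨j, rfl⟩)
      · exact absurd hz (hb i')
      · exact absurd hz (hc i')
  · by_cases hv : vv r s m ∈ I
    · have hc : ∀ i, cv r s m i ∉ I := fun i hci => hind _ hv _ hci (G_adj_vc i)
      by_cases hbe : ∃ i, bv r s m i ∈ I
      · obtain ⟨i, hbi⟩ := hbe
        have hai : av r s m (Fin.castLE hs i) ∉ I :=
          fun ha => hind _ ha _ hbi (G_adj_ab _ i (by simp))
        have hbb : ∀ i', i' ≠ i → bv r s m i' ∉ I :=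
          fun i' hne hbi' => hind _ hbi' _ hbi (G_adj_bb i' i hne)
        refine ⟨Sum.inr (Sum.inr i), Finset.eq_of_subset_of_card_le ?_ (by rw [(Φ_card (hs := hs) (hr := hr)) hm, hcard])⟩
        intro z hz
        rcases z with t | j | i' | i'
        · rcases fin2_cases t with rfl | rfl
          · exact absurd hz hu
          · exact (mem_Φ_q (hs := hs) (hr := hr)).mpr (Or.inl rfl)
        · refine (mem_Φ_q (hs := hs) (hr := hr)).mpr (Or.inr (Or.inr ⟨j, rfl, fun hj => ?_⟩))
          have : j = Fin.castLE hs i := Fin.ext (by simpa using hj)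
          exact hai (this ▸ hz)
        · by_cases hii : i' = i
          · exact (mem_Φ_q (hs := hs) (hr := hr)).mpr (Or.inr (Or.inl (by rw [hii]; rfl)))
          · exact absurd hz (hbb i' hii)
        · exact absurd hz (hc i')
      · push_neg at hbe
        refine ⟨Sum.inr (Sum.inl 1), Finset.eq_of_subset_of_card_le ?_ (by rw [(Φ_card (hs := hs) (hr := hr)) hm, hcard])⟩
        intro z hz
        rcases z with t | j | i' | i'
        · rcases fin2_cases t with rfl | rfl
          · exact absurd hz hu
          · exact (mem_Φ_p2 (hs := hs) (hr := hr)).mpr (Or.inl rfl)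
        · exact (mem_Φ_p2 (hs := hs) (hr := hr)).mpr (Or.inr ⟨j, rfl⟩)
        · exact absurd hz (hbe i')
        · exact absurd hz (hc i')
    · -- neither endpoint: impossible
      exfalso
      by_cases hbe : ∃ i, bv r s m i ∈ I
      · obtain ⟨i, hbi⟩ := hbe
        have hcn : ∀ i', cv r s m i' ∉ I := fun i' hci => hind _ hbi _ hci (G_adj_bc i i')
        have hbb : ∀ i', i' ≠ i → bv r s m i' ∉ I :=
          fun i' hne hbi' => hind _ hbi' _ hbi (G_adj_bb i' i hne)
        have hai : av r s m (Fin.castLE hs i) ∉ I :=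
          fun ha => hind _ ha _ hbi (G_adj_ab _ i (by simp))
        have hsub : I ⊆ insert (bv r s m i) ((AA r s m).erase (av r s m (Fin.castLE hs i))) := by
          intro z hz
          rcases z with t | j | i' | i'
          · rcases fin2_cases t with rfl | rfl
            · exact absurd hz hu
            · exact absurd hz hv
          · refine Finset.mem_insert.mpr (Or.inr (Finset.mem_erase.mpr ⟨fun hj => ?_, av_mem_AA j⟩))
            exact hai (hj ▸ hz)
          · by_cases hii : i' = i
            · exact Finset.mem_insert.mpr (Or.inl (by rw [hii]; rfl))
            · exact absurd hz (hbb i' hii)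
          · exact absurd hz (hcn i')
        have hle := Finset.card_le_card hsub
        have h1 : ((AA r s m).erase (av r s m (Fin.castLE hs i))).card = m - 1 := by
          rw [Finset.card_erase_of_mem (av_mem_AA _), AA_card]
        have h2 := Finset.card_insert_le (bv r s m i)
          ((AA r s m).erase (av r s m (Fin.castLE hs i)))
        omega
      · push_neg at hbe
        by_cases hce : ∃ i, cv r s m i ∈ I
        · obtain ⟨i, hci⟩ := hce
          have hcc : ∀ i', i' ≠ i → cv r s m i' ∉ I :=
            fun i' hne hci' => hind _ hci' _ hci (G_adj_cc i' i hne)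
          have hai : av r s m (Fin.castLE (hr.trans hs) i) ∉ I :=
            fun ha => hind _ ha _ hci (G_adj_ac _ i (by simp))
          have hsub : I ⊆ insert (cv r s m i)
              ((AA r s m).erase (av r s m (Fin.castLE (hr.trans hs) i))) := by
            intro z hz
            rcases z with t | j | i' | i'
            · rcases fin2_cases t with rfl | rfl
              · exact absurd hz hu
              · exact absurd hz hv
            · refine Finset.mem_insert.mpr (Or.inr (Finset.mem_erase.mpr ⟨fun hj => ?_, av_mem_AA j⟩))
              exact hai (hj ▸ hz)
            · exact absurd hz (hbe i')
            · by_cases hii : i' = i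
              · exact Finset.mem_insert.mpr (Or.inl (by rw [hii]; rfl))
              · exact absurd hz (hcc i' hii)
          have hle := Finset.card_le_card hsub
          have h1 : ((AA r s m).erase (av r s m (Fin.castLE (hr.trans hs) i))).card = m - 1 := by
            rw [Finset.card_erase_of_mem (av_mem_AA _), AA_card]
          have h2 := Finset.card_insert_le (cv r s m i)
            ((AA r s m).erase (av r s m (Fin.castLE (hr.trans hs) i)))
          omega
        · push_neg at hce
          have hsub : I ⊆ AA r s m := by
            intro z hz
            rcases z with t | j | i' | i'
            · rcases fin2_cases t with rfl | rfl
              · exact absurd hz hu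
              · exact absurd hz hv
            · exact av_mem_AA j
            · exact absurd hz (hbe i')
            · exact absurd hz (hce i')
          have hle := Finset.card_le_card hsub
          rw [AA_card, hcard] at hle
          omega

lemma TS_adj_of {W : Type*} {G : SimpleGraph W} {k : ℕ} {I J : {I : Finset W // TSVert G k I}}
    {x y : W} (hd1 : ((I : Finset W) : Set W) \ ((J : Finset W) : Set W) = {x})
    (hd2 : ((J : Finset W) : Set W) \ ((I : Finset W) : Set W) = {y})
    (hadj : G.Adj x y) : (TS G k).Adj I J := by
  refine (TS_adj_iff G k I J).mpr ⟨?_, x, y, hd1, hd2, hadj⟩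
  intro h
  rw [h] at hd1
  have hx : x ∈ ((J : Finset W) : Set W) \ ((J : Finset W) : Set W) := hd1 ▸ Set.mem_singleton x
  exact hx.2 hx.1

lemma not_TS_adj_of_two {W : Type*} {G : SimpleGraph W} {k : ℕ}
    {I J : {I : Finset W // TSVert G k I}} {x1 x2 : W}
    (h1 : x1 ∈ (I : Finset W)) (h1' : x1 ∉ (J : Finset W))
    (h2 : x2 ∈ (I : Finset W)) (h2' : x2 ∉ (J : Finset W)) (h12 : x1 ≠ x2) :
    ¬ (TS G k).Adj I J := by
  intro h
  obtain ⟨-, a, b, ha, -, -⟩ := (TS_adj_iff G k I J).mp h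
  have e1 : x1 = a := by
    have hx : x1 ∈ ((I : Finset W) : Set W) \ ((J : Finset W) : Set W) :=
      ⟨Finset.mem_coe.mpr h1, fun hc => h1' (Finset.mem_coe.mp hc)⟩
    rwa [ha] at hx
  have e2 : x2 = a := by
    have hx : x2 ∈ ((I : Finset W) : Set W) \ ((J : Finset W) : Set W) :=
      ⟨Finset.mem_coe.mpr h2, fun hc => h2' (Finset.mem_coe.mp hc)⟩
    rwa [ha] at hx
  exact h12 (e1.trans e2.symm)

-- membership facts
lemma uu_mem_Φp1 : uu r s m ∈ Φ r s m hs hr (Sum.inr (Sum.inl 0)) := mem_Φ_p1.mpr (Or.inl rfl)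
lemma vv_mem_Φp2 : vv r s m ∈ Φ r s m hs hr (Sum.inr (Sum.inl 1)) := mem_Φ_p2.mpr (Or.inl rfl)
lemma uu_mem_Φl (i : Fin r) : uu r s m ∈ Φ r s m hs hr (Sum.inl i) := mem_Φ_l.mpr (Or.inl rfl)
lemma vv_mem_Φq (i : Fin s) : vv r s m ∈ Φ r s m hs hr (Sum.inr (Sum.inr i)) :=
  (mem_Φ_q (hs := hs) (hr := hr)).mpr (Or.inl rfl)
lemma cv_mem_Φl (i : Fin r) : cv r s m i ∈ Φ r s m hs hr (Sum.inl i) :=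
  (mem_Φ_l (hs := hs) (hr := hr)).mpr (Or.inr (Or.inl rfl))
lemma bv_mem_Φq (i : Fin s) : bv r s m i ∈ Φ r s m hs hr (Sum.inr (Sum.inr i)) :=
  (mem_Φ_q (hs := hs) (hr := hr)).mpr (Or.inr (Or.inl rfl))

lemma uu_not_mem_Φp2 : uu r s m ∉ Φ r s m hs hr (Sum.inr (Sum.inl 1)) := by
  intro h
  rcases (mem_Φ_p2 (hs := hs) (hr := hr)).mp h with h1 | ⟨j, h1⟩
  · exact uu_ne_vv h1
  · exact uu_ne_av j h1

lemma uu_not_mem_Φq (i : Fin s) : uu r s m ∉ Φ r s m hs hr (Sum.inr (Sum.inr i)) := by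
  intro h
  rcases (mem_Φ_q (hs := hs) (hr := hr)).mp h with h1 | h1 | ⟨j, h1, -⟩
  · exact uu_ne_vv h1
  · exact uu_ne_bv i h1
  · exact uu_ne_av j h1

lemma vv_not_mem_Φp1 : vv r s m ∉ Φ r s m hs hr (Sum.inr (Sum.inl 0)) := by
  intro h
  rcases (mem_Φ_p1 (hs := hs) (hr := hr)).mp h with h1 | ⟨j, h1⟩
  · exact uu_ne_vv h1.symm
  · exact vv_ne_av j h1

lemma cv_not_mem_Φp1 (i : Fin r) : cv r s m i ∉ Φ r s m hs hr (Sum.inr (Sum.inl 0)) := by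
  intro h
  rcases (mem_Φ_p1 (hs := hs) (hr := hr)).mp h with h1 | ⟨j, h1⟩
  · exact uu_ne_cv i h1.symm
  · exact av_ne_cv j i h1.symm

lemma cv_not_mem_Φp2 (i : Fin r) : cv r s m i ∉ Φ r s m hs hr (Sum.inr (Sum.inl 1)) := by
  intro h
  rcases (mem_Φ_p2 (hs := hs) (hr := hr)).mp h with h1 | ⟨j, h1⟩
  · exact vv_ne_cv i h1.symm
  · exact av_ne_cv j i h1.symm

lemma cv_not_mem_Φq (i : Fin r) (i' : Fin s) :
    cv r s m i ∉ Φ r s m hs hr (Sum.inr (Sum.inr i')) := by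
  intro h
  rcases (mem_Φ_q (hs := hs) (hr := hr)).mp h with h1 | h1 | ⟨j, h1, -⟩
  · exact vv_ne_cv i h1.symm
  · exact bv_ne_cv i' i h1.symm
  · exact av_ne_cv j i h1.symm

lemma cv_not_mem_Φl (i i' : Fin r) (h : i ≠ i') : cv r s m i ∉ Φ r s m hs hr (Sum.inl i') := by
  intro hmem
  rcases (mem_Φ_l (hs := hs) (hr := hr)).mp hmem with h1 | h1 | ⟨j, h1, -⟩
  · exact uu_ne_cv i h1.symm
  · exact h (by simpa [cv] using h1)
  · exact av_ne_cv j i h1.symm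

lemma bv_not_mem_Φp1 (i : Fin s) : bv r s m i ∉ Φ r s m hs hr (Sum.inr (Sum.inl 0)) := by
  intro h
  rcases (mem_Φ_p1 (hs := hs) (hr := hr)).mp h with h1 | ⟨j, h1⟩
  · exact uu_ne_bv i h1.symm
  · exact av_ne_bv j i h1.symm

lemma bv_not_mem_Φq (i i' : Fin s) (h : i ≠ i') :
    bv r s m i ∉ Φ r s m hs hr (Sum.inr (Sum.inr i')) := by
  intro hmem
  rcases (mem_Φ_q (hs := hs) (hr := hr)).mp hmem with h1 | h1 | ⟨j, h1, -⟩
  · exact vv_ne_bv i h1.symm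
  · exact h (by simpa [bv] using h1)
  · exact av_ne_bv j i h1.symm

lemma av_mem_Φl (j : Fin m) (i : Fin r) (h : (j : ℕ) ≠ (i : ℕ)) :
    av r s m j ∈ Φ r s m hs hr (Sum.inl i) := (mem_Φ_l (hs := hs) (hr := hr)).mpr (Or.inr (Or.inr ⟨j, rfl, h⟩))

lemma av_mem_Φq (j : Fin m) (i : Fin s) (h : (j : ℕ) ≠ (i : ℕ)) :
    av r s m j ∈ Φ r s m hs hr (Sum.inr (Sum.inr i)) := (mem_Φ_q (hs := hs) (hr := hr)).mpr (Or.inr (Or.inr ⟨j, rfl, h⟩))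

lemma av_not_mem_Φl (i : Fin r) :
    av r s m (Fin.castLE (hr.trans hs) i) ∉ Φ r s m hs hr (Sum.inl i) := by
  intro hmem
  rcases (mem_Φ_l (hs := hs) (hr := hr)).mp hmem with h1 | h1 | ⟨j, h1, hj⟩
  · exact uu_ne_av _ h1.symm
  · exact av_ne_cv _ i h1
  · exact hj (by rw [← av_inj h1]; simp)

lemma av_not_mem_Φq (i : Fin s) :
    av r s m (Fin.castLE hs i) ∉ Φ r s m hs hr (Sum.inr (Sum.inr i)) := by
  intro hmem
  rcases (mem_Φ_q (hs := hs) (hr := hr)).mp hmem with h1 | h1 | ⟨j, h1, hj⟩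
  · exact vv_ne_av _ h1.symm
  · exact av_ne_bv _ i h1
  · exact hj (by rw [← av_inj h1]; simp)

lemma diff_eq_singleton_of {W : Type*} {X Y : Finset W} {p : W} (h1 : p ∈ X) (h2 : p ∉ Y)
    (h3 : ∀ z ∈ X, z ≠ p → z ∈ Y) : (↑X : Set W) \ ↑Y = {p} := by
  ext z
  constructor
  · rintro ⟨hzX, hzY⟩
    by_contra hne
    exact hzY (Finset.mem_coe.mpr (h3 z (Finset.mem_coe.mp hzX) hne))
  · intro hz
    rw [Set.mem_singleton_iff] at hz
    subst hz
    exact ⟨Finset.mem_coe.mpr h1, fun hc => h2 (Finset.mem_coe.mp hc)⟩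

lemma diff_p1_p2 : ((Φ r s m hs hr (Sum.inr (Sum.inl 0)) : Finset (W' r s m)) : Set (W' r s m)) \
    (Φ r s m hs hr (Sum.inr (Sum.inl 1)) : Set (W' r s m)) = {uu r s m} := by
  refine diff_eq_singleton_of (uu_mem_Φp1 (hs := hs) (hr := hr)) (uu_not_mem_Φp2 (hs := hs) (hr := hr)) ?_
  intro z hz hne
  rcases (mem_Φ_p1 (hs := hs) (hr := hr)).mp hz with rfl | ⟨j, rfl⟩
  · exact absurd rfl hne
  · exact (mem_Φ_p2 (hs := hs) (hr := hr)).mpr (Or.inr ⟨j, rfl⟩)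

lemma diff_p2_p1 : ((Φ r s m hs hr (Sum.inr (Sum.inl 1)) : Finset (W' r s m)) : Set (W' r s m)) \
    (Φ r s m hs hr (Sum.inr (Sum.inl 0)) : Set (W' r s m)) = {vv r s m} := by
  refine diff_eq_singleton_of (vv_mem_Φp2 (hs := hs) (hr := hr)) (vv_not_mem_Φp1 (hs := hs) (hr := hr)) ?_
  intro z hz hne
  rcases (mem_Φ_p2 (hs := hs) (hr := hr)).mp hz with rfl | ⟨j, rfl⟩
  · exact absurd rfl hne
  · exact (mem_Φ_p1 (hs := hs) (hr := hr)).mpr (Or.inr ⟨j, rfl⟩)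

lemma diff_p1_l (i : Fin r) :
    ((Φ r s m hs hr (Sum.inr (Sum.inl 0)) : Finset (W' r s m)) : Set (W' r s m)) \
    (Φ r s m hs hr (Sum.inl i) : Set (W' r s m)) = {av r s m (Fin.castLE (hr.trans hs) i)} := by
  refine diff_eq_singleton_of ((mem_Φ_p1 (hs := hs) (hr := hr)).mpr (Or.inr ⟨_, rfl⟩)) ((av_not_mem_Φl (hs := hs) (hr := hr)) i) ?_
  intro z hz hne
  rcases (mem_Φ_p1 (hs := hs) (hr := hr)).mp hz with rfl | ⟨j, rfl⟩
  · exact (uu_mem_Φl (hs := hs) (hr := hr)) i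
  · refine (av_mem_Φl (hs := hs) (hr := hr)) j i fun hj => hne ?_
    congr 1
    exact Fin.ext (by simpa using hj)

lemma diff_l_p1 (i : Fin r) :
    ((Φ r s m hs hr (Sum.inl i) : Finset (W' r s m)) : Set (W' r s m)) \
    (Φ r s m hs hr (Sum.inr (Sum.inl 0)) : Set (W' r s m)) = {cv r s m i} := by
  refine diff_eq_singleton_of ((cv_mem_Φl (hs := hs) (hr := hr)) i) ((cv_not_mem_Φp1 (hs := hs) (hr := hr)) i) ?_
  intro z hz hne
  rcases (mem_Φ_l (hs := hs) (hr := hr)).mp hz with rfl | rfl | ⟨j, rfl, -⟩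
  · exact (uu_mem_Φp1 (hs := hs) (hr := hr))
  · exact absurd rfl hne
  · exact (mem_Φ_p1 (hs := hs) (hr := hr)).mpr (Or.inr ⟨j, rfl⟩)

lemma diff_p2_q (i : Fin s) :
    ((Φ r s m hs hr (Sum.inr (Sum.inl 1)) : Finset (W' r s m)) : Set (W' r s m)) \
    (Φ r s m hs hr (Sum.inr (Sum.inr i)) : Set (W' r s m)) = {av r s m (Fin.castLE hs i)} := by
  refine diff_eq_singleton_of ((mem_Φ_p2 (hs := hs) (hr := hr)).mpr (Or.inr ⟨_, rfl⟩)) ((av_not_mem_Φq (hs := hs) (hr := hr)) i) ?_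
  intro z hz hne
  rcases (mem_Φ_p2 (hs := hs) (hr := hr)).mp hz with rfl | ⟨j, rfl⟩
  · exact (vv_mem_Φq (hs := hs) (hr := hr)) i
  · refine (av_mem_Φq (hs := hs) (hr := hr)) j i fun hj => hne ?_
    congr 1
    exact Fin.ext (by simpa using hj)

lemma diff_q_p2 (i : Fin s) :
    ((Φ r s m hs hr (Sum.inr (Sum.inr i)) : Finset (W' r s m)) : Set (W' r s m)) \
    (Φ r s m hs hr (Sum.inr (Sum.inl 1)) : Set (W' r s m)) = {bv r s m i} := by
  refine diff_eq_singleton_of ((bv_mem_Φq (hs := hs) (hr := hr)) i) ?_ ?_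
  · intro h
    rcases (mem_Φ_p2 (hs := hs) (hr := hr)).mp h with h1 | ⟨j, h1⟩
    · exact vv_ne_bv i h1.symm
    · exact av_ne_bv j i h1.symm
  · intro z hz hne
    rcases (mem_Φ_q (hs := hs) (hr := hr)).mp hz with rfl | rfl | ⟨j, rfl, -⟩
    · exact (vv_mem_Φp2 (hs := hs) (hr := hr))
    · exact absurd rfl hne
    · exact (mem_Φ_p2 (hs := hs) (hr := hr)).mpr (Or.inr ⟨j, rfl⟩)

variable (r s m)

def ΦS (hs : s ≤ m) (hr : r ≤ s) (hm : 1 ≤ m) (z : Fin r ⊕ Fin 2 ⊕ Fin s) :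
    {I : Finset (W' r s m) // TSVert (GG r s m) (m + 1) I} :=
  ⟨Φ r s m hs hr z, (Φ_vert (hs := hs) (hr := hr)) hm z⟩

variable {r s m}

lemma TS_iff (hm : 1 ≤ m) (z z' : Fin r ⊕ Fin 2 ⊕ Fin s) :
    (TS (GG r s m) (m + 1)).Adj (ΦS r s m hs hr hm z) (ΦS r s m hs hr hm z') ↔
      (D r 2 s).Adj z z' := by
  have TS_p1_p2 : (TS (GG r s m) (m + 1)).Adj (ΦS r s m hs hr hm (Sum.inr (Sum.inl 0)))
      (ΦS r s m hs hr hm (Sum.inr (Sum.inl 1))) :=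
    TS_adj_of ((diff_p1_p2 (hs := hs) (hr := hr))) ((diff_p2_p1 (hs := hs) (hr := hr))) G_adj_uv
  have TS_p1_l : ∀ i : Fin r, (TS (GG r s m) (m + 1)).Adj (ΦS r s m hs hr hm (Sum.inr (Sum.inl 0)))
      (ΦS r s m hs hr hm (Sum.inl i)) :=
    fun i => TS_adj_of ((diff_p1_l (hs := hs) (hr := hr)) i) ((diff_l_p1 (hs := hs) (hr := hr)) i) (G_adj_ac _ i (by simp))
  have TS_p2_q : ∀ i : Fin s, (TS (GG r s m) (m + 1)).Adj (ΦS r s m hs hr hm (Sum.inr (Sum.inl 1)))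
      (ΦS r s m hs hr hm (Sum.inr (Sum.inr i))) :=
    fun i => TS_adj_of ((diff_p2_q (hs := hs) (hr := hr)) i) ((diff_q_p2 (hs := hs) (hr := hr)) i) (G_adj_ab _ i (by simp))
  have neg_l_p2 : ∀ i : Fin r, ¬ (TS (GG r s m) (m + 1)).Adj (ΦS r s m hs hr hm (Sum.inl i))
      (ΦS r s m hs hr hm (Sum.inr (Sum.inl 1))) :=
    fun i => not_TS_adj_of_two ((uu_mem_Φl (hs := hs) (hr := hr)) i) (uu_not_mem_Φp2 (hs := hs) (hr := hr)) ((cv_mem_Φl (hs := hs) (hr := hr)) i) ((cv_not_mem_Φp2 (hs := hs) (hr := hr)) i)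
      (uu_ne_cv i)
  have neg_l_q : ∀ (i : Fin r) (i' : Fin s),
      ¬ (TS (GG r s m) (m + 1)).Adj (ΦS r s m hs hr hm (Sum.inl i))
        (ΦS r s m hs hr hm (Sum.inr (Sum.inr i'))) :=
    fun i i' => not_TS_adj_of_two ((uu_mem_Φl (hs := hs) (hr := hr)) i) ((uu_not_mem_Φq (hs := hs) (hr := hr)) i') ((cv_mem_Φl (hs := hs) (hr := hr)) i)
      ((cv_not_mem_Φq (hs := hs) (hr := hr)) i i') (uu_ne_cv i)
  have neg_q_p1 : ∀ i : Fin s, ¬ (TS (GG r s m) (m + 1)).Adj (ΦS r s m hs hr hm (Sum.inr (Sum.inr i)))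
      (ΦS r s m hs hr hm (Sum.inr (Sum.inl 0))) :=
    fun i => not_TS_adj_of_two ((vv_mem_Φq (hs := hs) (hr := hr)) i) (vv_not_mem_Φp1 (hs := hs) (hr := hr)) ((bv_mem_Φq (hs := hs) (hr := hr)) i) ((bv_not_mem_Φp1 (hs := hs) (hr := hr)) i)
      (vv_ne_bv i)
  have neg_l_l : ∀ i i' : Fin r, i ≠ i' →
      ¬ (TS (GG r s m) (m + 1)).Adj (ΦS r s m hs hr hm (Sum.inl i))
        (ΦS r s m hs hr hm (Sum.inl i')) := by
    intro i i' hne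
    refine not_TS_adj_of_two ((cv_mem_Φl (hs := hs) (hr := hr)) i) ((cv_not_mem_Φl (hs := hs) (hr := hr)) i i' hne)
      ((av_mem_Φl (hs := hs) (hr := hr)) (Fin.castLE (hr.trans hs) i') i ?_) ((av_not_mem_Φl (hs := hs) (hr := hr)) i') (av_ne_cv _ i).symm
    simpa using fun h => hne (Fin.ext h).symm
  have neg_q_q : ∀ i i' : Fin s, i ≠ i' →
      ¬ (TS (GG r s m) (m + 1)).Adj (ΦS r s m hs hr hm (Sum.inr (Sum.inr i)))
        (ΦS r s m hs hr hm (Sum.inr (Sum.inr i'))) := by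
    intro i i' hne
    refine not_TS_adj_of_two ((bv_mem_Φq (hs := hs) (hr := hr)) i) ((bv_not_mem_Φq (hs := hs) (hr := hr)) i i' hne)
      ((av_mem_Φq (hs := hs) (hr := hr)) (Fin.castLE hs i') i ?_) ((av_not_mem_Φq (hs := hs) (hr := hr)) i') (av_ne_bv _ i).symm
    simpa using fun h => hne (Fin.ext h).symm
  rcases z with i | t | i <;> rcases z' with i' | t' | i'
  · by_cases hii : i = i'
    · subst hii
      exact iff_of_false ((TS (GG r s m) (m + 1)).irrefl) ((D r 2 s).irrefl)
    · exact iff_of_false (neg_l_l i i' hii) (D_not_ll i i')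
  · rcases fin2_cases t' with rfl | rfl
    · exact iff_of_true (TS_p1_l i).symm (D_p1l i).symm
    · exact iff_of_false (neg_l_p2 i) (D_not_lp2 i)
  · exact iff_of_false (neg_l_q i i') (D_not_lq i i')
  · rcases fin2_cases t with rfl | rfl
    · exact iff_of_true (TS_p1_l i') (D_p1l i')
    · exact iff_of_false (fun h => neg_l_p2 i' h.symm) (fun h => D_not_lp2 i' h.symm)
  · rcases fin2_cases t with rfl | rfl <;> rcases fin2_cases t' with rfl | rfl
    · exact iff_of_false ((TS (GG r s m) (m + 1)).irrefl) ((D r 2 s).irrefl)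
    · exact iff_of_true TS_p1_p2 D_p1p2
    · exact iff_of_true TS_p1_p2.symm D_p1p2.symm
    · exact iff_of_false ((TS (GG r s m) (m + 1)).irrefl) ((D r 2 s).irrefl)
  · rcases fin2_cases t with rfl | rfl
    · exact iff_of_false (fun h => neg_q_p1 i' h.symm) (fun h => D_not_qp1 i' h.symm)
    · exact iff_of_true (TS_p2_q i') (D_p2q i')
  · exact iff_of_false (fun h => neg_l_q i' i h.symm) (fun h => D_not_lq i' i h.symm)
  · rcases fin2_cases t' with rfl | rfl
    · exact iff_of_false (neg_q_p1 i) (D_not_qp1 i)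
    · exact iff_of_true (TS_p2_q i).symm (D_p2q i).symm
  · by_cases hii : i = i'
    · subst hii
      exact iff_of_false ((TS (GG r s m) (m + 1)).irrefl) ((D r 2 s).irrefl)
    · exact iff_of_false (neg_q_q i i' hii) (D_not_qq i i')

lemma backward (r s k : ℕ) (hr1 : 1 ≤ r) (hrs : r ≤ s) (hk : 2 ≤ k) (hsk : s ≤ k - 1) :
    ∃ (Wt : Type) (G : SimpleGraph Wt), Nonempty (TS G k ≃g D r 2 s) := by
  obtain ⟨m, rfl⟩ : ∃ m, k = m + 1 := ⟨k - 1, by omega⟩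
  have hs : s ≤ m := by omega
  have hm : 1 ≤ m := by omega
  refine ⟨W' r s m, GG r s m, ⟨?_⟩⟩
  have hbij : Function.Bijective (ΦS r s m hs hrs hm) := by
    constructor
    · intro z z' h
      exact (Φ_inj (hs := hs) (hr := hrs)) (congrArg Subtype.val h)
    · rintro ⟨I, hI⟩
      obtain ⟨z, hz⟩ := (Φ_surj (hs := hs) (hr := hrs)) hm I hI.1 hI.2
      exact ⟨z, Subtype.ext hz.symm⟩
  let e := Equiv.ofBijective _ hbij
  have hiff' : ∀ z z', (TS (GG r s m) (m + 1)).Adj (e z) (e z') ↔ (D r 2 s).Adj z z' :=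
    fun z z' => (TS_iff (hs := hs) (hr := hrs)) hm z z'
  exact { toEquiv := e.symm,
          map_rel_iff' := by
            intro a b
            have := hiff' (e.symm a) (e.symm b)
            rw [e.apply_symm_apply, e.apply_symm_apply] at this
            exact this.symm }

end Back

theorem stmt18 (r s k : ℕ) (hr : 1 ≤ r) (hrs : r ≤ s) (hk : 2 ≤ k) :
    (∃ (W : Type) (G : SimpleGraph W), Nonempty (TS G k ≃g D r 2 s)) ↔ s ≤ k - 1 := by
  constructor
  · rintro ⟨W, G, ⟨f⟩⟩
    have := forward G k hk f
    omega
  · intro hsk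
    exact backward r s k hr hrs hk hsk
end
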